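/- arXiv:1508.03912 — 5 statements merged into one kernel-verified Lean document; each statement's English description precedes it below -/
import Mathlib

section
/- Let (W,S) be a Coxeter system, I,J ⊆ S, and let w be the minimal length representative of the double coset W_I w W_J. Then the stabiliser in W_I of the coset wW_J (under left multiplication), namely W_I ∩ wW_Jw⁻¹, equals the standard parabolic subgroup W_{I ∩ wJw⁻¹}, where I ∩ wJw⁻¹ is viewed as the set {s ∈ I : s = w t w⁻¹ for some t ∈ J}. -/
open CoxeterSystem List

open scoped Classical

namespace CoxProof

variable {B W : Type*} [Group W] {M : CoxeterMatrix B} (cs : CoxeterSystem M W)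

local prefix:100 "σ" => cs.simple
local prefix:100 "π" => cs.wordProd
local prefix:100 "ℓ" => cs.length

/-- The sign-flipping action of a generator on `W × ZMod 2`. -/
noncomputable def fE (i : B) : Function.End (W × ZMod 2) :=
  fun p => (σ i * p.1 * σ i, p.2 + if p.1 = σ i then 1 else 0)

private lemma conj_iff (a b y : W) (x : W) : (a * x * b = y) ↔ (x = a⁻¹ * y * b⁻¹) := by
  constructor
  · intro h; rw [← h]; group
  · intro h; rw [h]; group

lemma fE_pow (i j : B) (k : ℕ) (p : W × ZMod 2) :
    ((fE cs i * fE cs j) ^ k) p =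
      ((σ i * σ j) ^ k * p.1 * ((σ i * σ j) ^ k)⁻¹,
        p.2 + ∑ d ∈ Finset.range (2 * k), if p.1 = (σ j * σ i) ^ d * σ j then 1 else 0) := by
  induction k generalizing p with
  | zero => show p = _; simp
  | succ k ih =>
    have hmul : ∀ (g h : Function.End (W × ZMod 2)) (q : W × ZMod 2), (g * h) q = g (h q) :=
      fun _ _ _ => rfl
    rw [pow_succ, hmul, hmul]
    have h1 : fE cs j p = (σ j * p.1 * σ j, p.2 + if p.1 = σ j then 1 else 0) := rfl
    rw [h1]
    have h2 : fE cs i (σ j * p.1 * σ j, p.2 + if p.1 = σ j then 1 else 0) =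
        ((σ i * σ j) * p.1 * (σ i * σ j)⁻¹,
          p.2 + (if p.1 = σ j then 1 else 0) + if p.1 = (σ j * σ i) ^ 1 * σ j then 1 else 0) := by
      show (_, _) = (_, _)
      have hfst : σ i * (σ j * p.1 * σ j) * σ i = (σ i * σ j) * p.1 * (σ i * σ j)⁻¹ := by
        rw [mul_inv_rev, cs.inv_simple, cs.inv_simple]; group
      have hcond : (σ j * p.1 * σ j = σ i) ↔ (p.1 = (σ j * σ i) ^ 1 * σ j) := by
        rw [conj_iff, cs.inv_simple, pow_one]
      rw [Prod.mk.injEq]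
      exact ⟨hfst, by rw [if_congr hcond rfl rfl]⟩
    rw [h2, ih]
    rw [Prod.mk.injEq]
    constructor
    · simp only [pow_succ, mul_inv_rev, cs.inv_simple]
      simp [mul_assoc]
    · have hshift : ∀ d : ℕ, ((σ i * σ j) * p.1 * (σ i * σ j)⁻¹ = (σ j * σ i) ^ d * σ j)
          ↔ (p.1 = (σ j * σ i) ^ (d + 2) * σ j) := by
        intro d
        rw [conj_iff, inv_inv]
        have : (σ i * σ j)⁻¹ * ((σ j * σ i) ^ d * σ j) * (σ i * σ j)
            = (σ j * σ i) ^ (d + 2) * σ j := by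
          rw [mul_inv_rev, cs.inv_simple, cs.inv_simple]
          have : (σ j * σ i) ^ (d + 2) = (σ j * σ i) * (σ j * σ i) ^ d * (σ j * σ i) := by
            rw [show d + 2 = (d + 1) + 1 from rfl, pow_succ, pow_succ']
          rw [this]
          simp [mul_assoc]
        rw [this]
      have hsumshift : (∑ d ∈ Finset.range (2 * k),
            if (σ i * σ j) * p.1 * (σ i * σ j)⁻¹ = (σ j * σ i) ^ d * σ j then (1 : ZMod 2) else 0)
          = ∑ d ∈ Finset.range (2 * k), if p.1 = (σ j * σ i) ^ (d + 2) * σ j then 1 else 0 := by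
        refine Finset.sum_congr rfl fun d _ => ?_
        rw [if_congr (hshift d) rfl rfl]
      rw [hsumshift]
      have h2k : 2 * (k + 1) = (2 * k + 1) + 1 := by ring
      rw [h2k, Finset.sum_range_succ', Finset.sum_range_succ']
      simp only [pow_zero, one_mul, zero_add,
        show ∀ d : ℕ, d + 1 + 1 = d + 2 from fun _ => rfl]
      abel
lemma fE_liftable : M.IsLiftable (fE cs) := by
  intro i i'
  funext p
  rw [fE_pow]
  have h1 : (σ i * σ i') ^ M i i' = 1 := cs.simple_mul_simple_pow i i'
  have h2 : (σ i' * σ i) ^ M i i' = 1 := cs.simple_mul_simple_pow' i i'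
  rw [h1]
  have hsum : (∑ d ∈ Finset.range (2 * M i i'),
      if p.1 = (σ i' * σ i) ^ d * σ i' then (1 : ZMod 2) else 0) = 0 := by
    rw [two_mul, Finset.sum_range_add]
    have : ∀ d : ℕ, (σ i' * σ i) ^ (M i i' + d) = (σ i' * σ i) ^ d := by
      intro d; rw [pow_add, h2, one_mul]
    simp only [this]
    have h0 : ∀ x : ZMod 2, x + x = 0 := by decide
    rw [← Finset.sum_add_distrib]
    exact Finset.sum_eq_zero fun d _ => h0 _
  rw [hsum]
  show _ = p
  simp

/-- The representation of `W` on `W × ZMod 2` recording reflection signs. -/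
noncomputable def mu : W →* Function.End (W × ZMod 2) :=
  cs.lift ⟨fE cs, fE_liftable cs⟩

lemma mu_simple (i : B) : mu cs (σ i) = fE cs i :=
  cs.lift_apply_simple (fE_liftable cs) i

lemma mu_mul_apply (u v : W) (p : W × ZMod 2) : mu cs (u * v) p = mu cs u (mu cs v p) := by
  rw [map_mul]; rfl

lemma one_apply (p : W × ZMod 2) : (1 : Function.End (W × ZMod 2)) p = p := rfl

lemma mu_one_apply (p : W × ZMod 2) : mu cs 1 p = p := by rw [map_one]; rfl

lemma mu_fst (w : W) : ∀ p : W × ZMod 2, (mu cs w p).1 = w * p.1 * w⁻¹ := by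
  induction w using cs.simple_induction_left with
  | one => intro p; rw [mu_one_apply]; simp
  | mul_simple_left w i ih =>
    intro p
    rw [mu_mul_apply, mu_simple]
    show σ i * (mu cs w p).1 * σ i = _
    rw [ih p, mul_inv_rev, cs.inv_simple]
    group

lemma mu_snd (w : W) : ∀ p : W × ZMod 2, (mu cs w p).2 = p.2 + (mu cs w (p.1, 0)).2 := by
  induction w using cs.simple_induction_left with
  | one => intro p; rw [mu_one_apply, mu_one_apply]; simp
  | mul_simple_left w i ih =>
    intro p
    rw [mu_mul_apply, mu_simple, mu_mul_apply, mu_simple]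
    show (mu cs w p).2 + (if (mu cs w p).1 = σ i then (1:ZMod 2) else 0)
      = p.2 + ((mu cs w (p.1, 0)).2 + if (mu cs w (p.1, 0)).1 = σ i then 1 else 0)
    rw [ih p, mu_fst, mu_fst]
    ring

/-- the sign of the reflection `t` in `w`. -/
noncomputable def nn (w t : W) : ZMod 2 := (mu cs w (t, 0)).2

lemma nn_mul (u v t : W) : nn cs (u * v) t = nn cs v t + nn cs u (v * t * v⁻¹) := by
  unfold nn
  rw [mu_mul_apply, mu_snd cs u, mu_fst]

lemma nn_simple (i : B) (t : W) : nn cs (σ i) t = if t = σ i then 1 else 0 := by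
  unfold nn; rw [mu_simple]
  show (0 : ZMod 2) + _ = _
  rw [zero_add]

lemma nn_inv_conj (u t : W) : nn cs u⁻¹ (u * t * u⁻¹) = nn cs u t := by
  have h := nn_mul cs u⁻¹ u t
  rw [inv_mul_cancel] at h
  have h1 : nn cs (1 : W) t = 0 := by unfold nn; rw [mu_one_apply]
  rw [h1] at h
  have hz : ∀ x y : ZMod 2, 0 = x + y → y = x := by decide
  exact hz _ _ h

lemma nn_refl_self {t : W} (ht : cs.IsReflection t) : nn cs t t = 1 := by
  obtain ⟨u, i, rfl⟩ := ht
  have e1 : u * σ i * u⁻¹ = u * (σ i * u⁻¹) := by group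
  rw [e1, nn_mul cs u (σ i * u⁻¹)]
  have e2 : (σ i * u⁻¹) * (u * (σ i * u⁻¹)) * (σ i * u⁻¹)⁻¹ = σ i := by
    rw [mul_inv_rev, cs.inv_simple, inv_inv]; group
    simp [cs.simple_mul_simple_cancel_right, cs.simple_mul_simple_cancel_left]
  rw [e2, nn_mul cs (σ i) u⁻¹]
  rw [← e1, nn_inv_conj, nn_simple]
  have hcond : u⁻¹ * (u * σ i * u⁻¹) * u⁻¹⁻¹ = σ i := by group
  rw [if_pos hcond]
  have hz : ∀ x : ZMod 2, (x + 1) + x = 1 := by decide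
  exact hz _
lemma nn_eq_zero_of_not_mem (ω : List B) (t : W) (h : t ∉ cs.rightInvSeq ω) :
    nn cs (π ω) t = 0 := by
  induction ω with
  | nil => rw [cs.wordProd_nil]; unfold nn; rw [mu_one_apply]
  | cons i ω ih =>
    have hris : cs.rightInvSeq (i :: ω) = ((π ω)⁻¹ * σ i * π ω) :: cs.rightInvSeq ω := rfl
    rw [hris, List.mem_cons, not_or] at h
    rw [cs.wordProd_cons, nn_mul, nn_simple, ih h.2]
    have : ¬ (π ω * t * (π ω)⁻¹ = σ i) := by
      intro he
      exact h.1 (by rw [← he]; group)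
    rw [if_neg this, zero_add]

lemma mem_rightInvSeq_of_lt {t : W} (ht : cs.IsReflection t) (ω : List B)
    (hlt : ℓ (π ω * t) < ℓ (π ω)) : t ∈ cs.rightInvSeq ω := by
  by_contra hmem
  set w := π ω with hw
  have h0 : nn cs w t = 0 := nn_eq_zero_of_not_mem cs ω t hmem
  have h1 : nn cs (w * t) t = 1 := by
    rw [nn_mul]
    have e : t * t * t⁻¹ = t := by rw [ht.mul_self, one_mul, ht.inv]
    rw [e, nn_refl_self cs ht, h0, add_zero]
  obtain ⟨τ, hτred, hτ⟩ := cs.exists_reduced_word' (w * t)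
  have hmem' : t ∈ cs.rightInvSeq τ := by
    by_contra h'
    have h2 := nn_eq_zero_of_not_mem cs τ t
    rw [← hτ] at h2
    rw [h2 h'] at h1
    exact absurd h1 (by decide)
  have hinv := cs.isRightInversion_of_mem_rightInvSeq hτred hmem'
  have h3 : ℓ (π τ * t) < ℓ (π τ) := hinv.2
  rw [← hτ] at h3
  have e2 : w * t * t = w := by rw [mul_assoc, ht.mul_self, mul_one]
  rw [e2] at h3
  omega

lemma exchange_right {t : W} (ht : cs.IsReflection t) (ω : List B)
    (hlt : ℓ (π ω * t) < ℓ (π ω)) : ∃ j, j < ω.length ∧ π ω * t = π (ω.eraseIdx j) := by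
  have hmem := mem_rightInvSeq_of_lt cs ht ω hlt
  obtain ⟨j, hj, hget⟩ := List.mem_iff_getElem.mp hmem
  have hj' : j < ω.length := by simpa using hj
  refine ⟨j, hj', ?_⟩
  rw [← cs.wordProd_mul_getD_rightInvSeq ω j]
  congr 1
  rw [← hget]
  exact (List.getD_eq_getElem _ 1 hj).symm

lemma exchange_left {t : W} (ht : cs.IsReflection t) (ω : List B)
    (hlt : ℓ (t * π ω) < ℓ (π ω)) : ∃ j, j < ω.length ∧ t * π ω = π (ω.eraseIdx j) := by
  have h1 : ℓ (π ω.reverse * t) < ℓ (π ω.reverse) := by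
    rw [cs.wordProd_reverse]
    have e : (π ω)⁻¹ * t = (t⁻¹ * π ω)⁻¹ := by group
    rw [e, cs.length_inv, ht.inv, cs.length_inv]
    exact hlt
  have hmem := mem_rightInvSeq_of_lt cs ht ω.reverse h1
  rw [cs.rightInvSeq_reverse, List.mem_reverse] at hmem
  obtain ⟨j, hj, hget⟩ := List.mem_iff_getElem.mp hmem
  have hj' : j < ω.length := by simpa using hj
  refine ⟨j, hj', ?_⟩
  rw [← cs.getD_leftInvSeq_mul_wordProd ω j]
  congr 1
  rw [← hget]
  exact (List.getD_eq_getElem _ 1 hj).symm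
lemma wordProd_mem_closure (X : Set B) (ω : List B) (h : ∀ b ∈ ω, b ∈ X) :
    π ω ∈ Subgroup.closure (cs.simple '' X) := by
  induction ω with
  | nil => rw [cs.wordProd_nil]; exact one_mem _
  | cons i ω ih =>
    rw [cs.wordProd_cons]
    exact mul_mem (Subgroup.subset_closure ⟨i, h i (List.mem_cons_self), rfl⟩)
      (ih fun b hb => h b (List.mem_cons_of_mem _ hb))

lemma exists_word_subset (X : Set B) (x : W) (hx : x ∈ Subgroup.closure (cs.simple '' X)) :
    ∃ ω : List B, (∀ b ∈ ω, b ∈ X) ∧ x = π ω := by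
  induction hx using Subgroup.closure_induction with
  | mem g hg =>
    obtain ⟨i, hi, rfl⟩ := hg
    exact ⟨[i], by simpa using hi, (cs.wordProd_singleton i).symm⟩
  | one => exact ⟨[], by simp, (cs.wordProd_nil).symm⟩
  | mul a b _ _ iha ihb =>
    obtain ⟨ω₁, h1, rfl⟩ := iha
    obtain ⟨ω₂, h2, rfl⟩ := ihb
    exact ⟨ω₁ ++ ω₂, fun b hb => (List.mem_append.mp hb).elim (h1 b) (h2 b),
      (cs.wordProd_append ω₁ ω₂).symm⟩
  | inv a _ iha =>
    obtain ⟨ω₁, h1, rfl⟩ := iha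
    exact ⟨ω₁.reverse, fun b hb => h1 b (List.mem_reverse.mp hb), (cs.wordProd_reverse ω₁).symm⟩

lemma exists_reduced_word_subset_aux (X : Set B) :
    ∀ n (ω : List B), ω.length ≤ n → (∀ b ∈ ω, b ∈ X) →
    ∃ ω' : List B, cs.IsReduced ω' ∧ (∀ b ∈ ω', b ∈ X) ∧ π ω' = π ω := by
  intro n
  induction n with
  | zero =>
    intro ω hlen _
    have : ω = [] := List.eq_nil_of_length_eq_zero (Nat.le_zero.mp hlen)
    subst this
    exact ⟨[], by simp [CoxeterSystem.IsReduced], by simp, rfl⟩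
  | succ n ih =>
    intro ω hlen hX
    by_cases hred : cs.IsReduced ω
    · exact ⟨ω, hred, hX, rfl⟩
    have hω1 : ω ≠ [] := by rintro rfl; exact hred (by simp [CoxeterSystem.IsReduced])
    have hlen1 : 1 ≤ ω.length := List.length_pos_iff.mpr hω1
    have hP : ∃ k, ¬ cs.IsReduced (ω.take (k + 1)) :=
      ⟨ω.length - 1, by rw [show ω.length - 1 + 1 = ω.length by omega, List.take_length]; exact hred⟩
    set k := Nat.find hP with hk
    have hPk : ¬ cs.IsReduced (ω.take (k + 1)) := Nat.find_spec hP
    have hkle : k ≤ ω.length - 1 := Nat.find_min' hP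
      (by rw [show ω.length - 1 + 1 = ω.length by omega, List.take_length]; exact hred)
    have hklt : k < ω.length := by omega
    have hkred : cs.IsReduced (ω.take k) := by
      rcases k with _ | m
      · simp [CoxeterSystem.IsReduced]
      · exact not_not.mp (Nat.find_min hP (by omega))
    have hulen : ℓ (π (ω.take k)) = k := by
      have := hkred
      unfold CoxeterSystem.IsReduced at this
      rwa [List.length_take, min_eq_left hklt.le] at this
    have htake : ω.take (k + 1) = ω.take k ++ [ω[k]] := by
      rw [List.take_succ]; simp [List.getElem?_eq_getElem hklt]
    have hprod : π (ω.take (k + 1)) = π (ω.take k) * σ ω[k] := by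
      rw [htake, cs.wordProd_append, cs.wordProd_singleton]
    have hne : ℓ (π (ω.take k) * σ ω[k]) ≠ k + 1 := by
      intro he
      apply hPk
      unfold CoxeterSystem.IsReduced
      rw [hprod, he, List.length_take, min_eq_left (by omega)]
    have hcases := cs.length_mul_simple (π (ω.take k)) ω[k]
    have hlt : ℓ (π (ω.take k) * σ ω[k]) < ℓ (π (ω.take k)) := by omega
    obtain ⟨j, hj, hdel⟩ := exchange_right cs (cs.isReflection_simple ω[k]) (ω.take k) hlt
    have hjlen : j < k := by rwa [List.length_take, min_eq_left hklt.le] at hj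
    set ω' := (ω.take k).eraseIdx j ++ ω.drop (k + 1) with hω'
    have hprod' : π ω' = π ω := by
      rw [hω', cs.wordProd_append, ← hdel, ← hprod, ← cs.wordProd_append, List.take_append_drop]
    have hlen' : ω'.length ≤ n := by
      rw [hω', List.length_append]
      have e1 : ((ω.take k).eraseIdx j).length + 1 = (ω.take k).length :=
        List.length_eraseIdx_add_one hj
      have e2 : (ω.take k).length = k := by rw [List.length_take]; omega
      have e3 : (ω.drop (k + 1)).length = ω.length - (k + 1) := List.length_drop
      omega
    have hX' : ∀ b ∈ ω', b ∈ X := by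
      intro b hb
      rcases List.mem_append.mp hb with h' | h'
      · exact hX b (List.mem_of_mem_take (List.mem_of_mem_eraseIdx h'))
      · exact hX b (List.mem_of_mem_drop h')
    obtain ⟨ω'', h1, h2, h3⟩ := ih ω' hlen' hX'
    exact ⟨ω'', h1, h2, by rw [h3, hprod']⟩

lemma exists_reduced_word_subset (X : Set B) (x : W)
    (hx : x ∈ Subgroup.closure (cs.simple '' X)) :
    ∃ ω : List B, cs.IsReduced ω ∧ (∀ b ∈ ω, b ∈ X) ∧ x = π ω := by
  obtain ⟨ω, hX, rfl⟩ := exists_word_subset cs X x hx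
  obtain ⟨ω', h1, h2, h3⟩ := exists_reduced_word_subset_aux cs X ω.length ω le_rfl hX
  exact ⟨ω', h1, h2, h3.symm⟩
lemma length_mul_of_min (X : Set B) (w : W)
    (hmin : ∀ z ∈ Subgroup.closure (cs.simple '' X), ℓ w ≤ ℓ (z * w)) :
    ∀ x ∈ Subgroup.closure (cs.simple '' X), ℓ (x * w) = ℓ x + ℓ w := by
  suffices h : ∀ n x, x ∈ Subgroup.closure (cs.simple '' X) → ℓ x ≤ n →
      ℓ (x * w) = ℓ x + ℓ w by
    intro x hx; exact h (ℓ x) x hx le_rfl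
  intro n
  induction n with
  | zero =>
    intro x hx hlen
    have : x = 1 := cs.length_eq_zero_iff.mp (Nat.le_zero.mp hlen)
    subst this; simp
  | succ n ih =>
    intro x hx hlen
    by_cases h0 : ℓ x = 0
    · have : x = 1 := cs.length_eq_zero_iff.mp h0
      subst this; simp
    obtain ⟨ω, hωred, hωX, rfl⟩ := exists_reduced_word_subset cs X x hx
    cases ω with
    | nil => exact absurd (by simp) h0
    | cons i ω' =>
      have hi : i ∈ X := hωX i (List.mem_cons_self)
      have hω'X : ∀ b ∈ ω', b ∈ X := fun b hb => hωX b (List.mem_cons_of_mem _ hb)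
      have hω'red : cs.IsReduced ω' := by
        have := hωred.drop 1
        simpa using this
      have hxx' : π (i :: ω') = σ i * π ω' := cs.wordProd_cons i ω'
      have hlx : ℓ (π (i :: ω')) = ω'.length + 1 := by
        have := hωred; unfold CoxeterSystem.IsReduced at this; simpa using this
      have hlx' : ℓ (π ω') = ω'.length := hω'red
      have hx'mem : π ω' ∈ Subgroup.closure (cs.simple '' X) :=
        wordProd_mem_closure cs X ω' hω'X
      have ihx' : ℓ (π ω' * w) = ℓ (π ω') + ℓ w := ih (π ω') hx'mem (by omega)
      rcases cs.length_simple_mul (π ω' * w) i with hup | hdown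
      · have e : ℓ (π (i :: ω') * w) = ℓ (π ω' * w) + 1 := by rw [hxx', mul_assoc, hup]
        omega
      · exfalso
        obtain ⟨τ, hτred, hτ⟩ := cs.exists_reduced_word' w
        have hτlen : τ.length = ℓ w := by
          have := hτred; unfold CoxeterSystem.IsReduced at this; rw [hτ, this]
        have hcat : π (ω' ++ τ) = π ω' * w := by rw [cs.wordProd_append, ← hτ]
        have hlt : ℓ (σ i * π (ω' ++ τ)) < ℓ (π (ω' ++ τ)) := by rw [hcat]; omega
        obtain ⟨j, hj, hdel⟩ := exchange_left cs (cs.isReflection_simple i) (ω' ++ τ) hlt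
        rw [hcat] at hdel
        rw [List.length_append] at hj
        by_cases hjcase : j < ω'.length
        · rw [List.eraseIdx_append_of_lt_length hjcase, cs.wordProd_append] at hdel
          have hxw : π (i :: ω') * w = π (ω'.eraseIdx j) * π τ := by
            rw [hxx', mul_assoc, hdel]
          rw [← hτ] at hxw
          have heq : π (i :: ω') = π (ω'.eraseIdx j) := mul_right_cancel hxw
          have hle : ℓ (π (i :: ω')) ≤ (ω'.eraseIdx j).length :=
            heq ▸ cs.length_wordProd_le _
          have := List.length_eraseIdx_add_one hjcase
          omega
        · push_neg at hjcase
          rw [List.eraseIdx_append_of_length_le hjcase, cs.wordProd_append] at hdel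
          have hz : (π ω')⁻¹ * σ i * π ω' * w = π (τ.eraseIdx (j - ω'.length)) := by
            rw [show (π ω')⁻¹ * σ i * π ω' * w = (π ω')⁻¹ * (σ i * (π ω' * w)) by group,
              hdel]
            group
          have hzmem : (π ω')⁻¹ * σ i * π ω' ∈ Subgroup.closure (cs.simple '' X) :=
            mul_mem (mul_mem (inv_mem hx'mem) (Subgroup.subset_closure ⟨i, hi, rfl⟩)) hx'mem
          have hge := hmin _ hzmem
          rw [hz] at hge
          have hle2 : ℓ (π (τ.eraseIdx (j - ω'.length))) ≤ (τ.eraseIdx (j - ω'.length)).length :=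
            cs.length_wordProd_le _
          have hlen3 : (τ.eraseIdx (j - ω'.length)).length + 1 = τ.length :=
            List.length_eraseIdx_add_one (by omega)
          omega
end CoxProof

/-- equation (2) of the paper. Let `(W,S)` be a Coxeter system, `I, J ⊆ S`,
and let `w` be the minimal length representative of `W_I w W_J`. Then the stabiliser in `W_I`
of the coset `w W_J`, namely `W_I ∩ w W_J w⁻¹`, equals the standard parabolic subgroup
`W_{I ∩ w J w⁻¹}`, where `I ∩ w J w⁻¹ = {s ∈ I : s = w t w⁻¹ for some t ∈ J}`. -/
theorem statement1 {B W : Type*} [Group W] {M : CoxeterMatrix B} (cs : CoxeterSystem M W)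
    (I J : Set B) (w : W)
    (WI WJ : Subgroup W)
    (hWI : WI = Subgroup.closure (cs.simple '' I))
    (hWJ : WJ = Subgroup.closure (cs.simple '' J))
    -- `w` is the minimal length ((I,J)-reduced) representative of `W_I w W_J`
    (hw : ∀ x ∈ WI, ∀ y ∈ WJ, cs.length w ≤ cs.length (x * w * y)) :
    (WI : Set W) ∩ {x : W | w⁻¹ * x * w ∈ WJ} =
      (Subgroup.closure {s | s ∈ cs.simple '' I ∧ ∃ t ∈ cs.simple '' J, s = w * t * w⁻¹} :
        Set W) := by
  subst hWI hWJ
  set K : Set W := {s | s ∈ cs.simple '' I ∧ ∃ t ∈ cs.simple '' J, s = w * t * w⁻¹} with hK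
  have hminL : ∀ z ∈ Subgroup.closure (cs.simple '' I), cs.length w ≤ cs.length (z * w) := by
    intro z hz
    have := hw z hz 1 (one_mem _)
    simpa using this
  have hminR' : ∀ z ∈ Subgroup.closure (cs.simple '' J), cs.length w⁻¹ ≤ cs.length (z * w⁻¹) := by
    intro z hz
    have h1 := hw 1 (one_mem _) z⁻¹ (inv_mem hz)
    rw [one_mul] at h1
    have e1 : cs.length (z * w⁻¹) = cs.length (w * z⁻¹) := by
      rw [show z * w⁻¹ = (w * z⁻¹)⁻¹ by group, cs.length_inv]
    rw [cs.length_inv, e1]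
    exact h1
  have hB1 := CoxProof.length_mul_of_min cs I w hminL
  have hB1' := CoxProof.length_mul_of_min cs J w⁻¹ hminR'
  have hB2 : ∀ y ∈ Subgroup.closure (cs.simple '' J),
      cs.length (w * y) = cs.length w + cs.length y := by
    intro y hy
    have h := hB1' y⁻¹ (inv_mem hy)
    have e1 : cs.length (y⁻¹ * w⁻¹) = cs.length (w * y) := by
      rw [show y⁻¹ * w⁻¹ = (w * y)⁻¹ by group, cs.length_inv]
    rw [e1, cs.length_inv, cs.length_inv] at h
    omega
  have main : ∀ n x, x ∈ Subgroup.closure (cs.simple '' I) →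
      w⁻¹ * x * w ∈ Subgroup.closure (cs.simple '' J) → cs.length x ≤ n →
      x ∈ Subgroup.closure K := by
    intro n
    induction n with
    | zero =>
      intro x hx _ hlen
      have : x = 1 := cs.length_eq_zero_iff.mp (Nat.le_zero.mp hlen)
      subst this; exact one_mem _
    | succ n ih =>
      intro x hxI hyJ hlen
      by_cases h0 : cs.length x = 0
      · have : x = 1 := cs.length_eq_zero_iff.mp h0
        subst this; exact one_mem _
      obtain ⟨ω, hωred, hωI, rfl⟩ := CoxProof.exists_reduced_word_subset cs I x hxI
      cases ω with
      | nil => exact absurd (by simp) h0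
      | cons i ω' =>
        have hi : i ∈ I := hωI i (List.mem_cons_self)
        have hω'I : ∀ b ∈ ω', b ∈ I := fun b hb => hωI b (List.mem_cons_of_mem _ hb)
        have hω'red : cs.IsReduced ω' := by
          have := hωred.drop 1
          simpa using this
        have hxx' : cs.wordProd (i :: ω') = cs.simple i * cs.wordProd ω' := cs.wordProd_cons i ω'
        have hlx : cs.length (cs.wordProd (i :: ω')) = ω'.length + 1 := by
          have := hωred; unfold CoxeterSystem.IsReduced at this; simpa using this
        have hlx' : cs.length (cs.wordProd ω') = ω'.length := hω'red
        have hx'mem : cs.wordProd ω' ∈ Subgroup.closure (cs.simple '' I) :=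
          CoxProof.wordProd_mem_closure cs I ω' hω'I
        set y := w⁻¹ * cs.wordProd (i :: ω') * w with hy
        have hymem : y ∈ Subgroup.closure (cs.simple '' J) := hyJ
        have hxw : cs.wordProd (i :: ω') * w = w * y := by rw [hy]; group
        obtain ⟨σw, hσred, hσw⟩ := cs.exists_reduced_word' w
        obtain ⟨ωy, hyred, hyJ', hyeq⟩ := CoxProof.exists_reduced_word_subset cs J y hymem
        have hσlen : σw.length = cs.length w := by
          have := hσred; unfold CoxeterSystem.IsReduced at this; rw [hσw, this]
        have hcat : cs.wordProd (σw ++ ωy) = w * y := by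
          rw [cs.wordProd_append, ← hσw, ← hyeq]
        have hlt : cs.length (cs.simple i * cs.wordProd (σw ++ ωy)) <
            cs.length (cs.wordProd (σw ++ ωy)) := by
          rw [hcat, ← hxw]
          have e : cs.simple i * (cs.wordProd (i :: ω') * w) = cs.wordProd ω' * w := by
            rw [hxx']
            rw [← mul_assoc, ← mul_assoc, cs.simple_mul_simple_self, one_mul]
          rw [e, hB1 _ hx'mem, hB1 _ hxI]
          omega
        obtain ⟨j, hj, hdel⟩ := CoxProof.exchange_left cs (cs.isReflection_simple i) _ hlt
        rw [hcat] at hdel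
        rw [List.length_append] at hj
        by_cases hjc : j < σw.length
        · exfalso
          rw [List.eraseIdx_append_of_lt_length hjc, cs.wordProd_append] at hdel
          rw [← hyeq, ← mul_assoc] at hdel
          have heq : cs.simple i * w = cs.wordProd (σw.eraseIdx j) := mul_right_cancel hdel
          have hle : cs.length (cs.simple i * w) ≤ (σw.eraseIdx j).length :=
            heq ▸ cs.length_wordProd_le _
          have hminsi := hminL (cs.simple i) (Subgroup.subset_closure ⟨i, hi, rfl⟩)
          have := List.length_eraseIdx_add_one hjc
          omega
        · push_neg at hjc
          rw [List.eraseIdx_append_of_length_le hjc, cs.wordProd_append, ← hσw] at hdel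
          set t := w⁻¹ * cs.simple i * w with ht
          have htw : w * t = cs.simple i * w := by rw [ht]; group
          have htmem : t ∈ Subgroup.closure (cs.simple '' J) := by
            have e : t = cs.wordProd (ωy.eraseIdx (j - σw.length)) * y⁻¹ := by
              have e2 : w⁻¹ * (cs.simple i * (w * y)) * y⁻¹ = t := by rw [ht]; group
              rw [← e2, hdel]; group
            rw [e]
            exact mul_mem
              (CoxProof.wordProd_mem_closure cs J _
                (fun b hb => hyJ' b (List.mem_of_mem_eraseIdx hb)))
              (inv_mem hymem)
          have h1 : cs.length w ≤ cs.length (cs.simple i * w) :=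
            hminL (cs.simple i) (Subgroup.subset_closure ⟨i, hi, rfl⟩)
          have h2 : cs.length (cs.simple i * w) = cs.length w + 1 := by
            have := cs.length_simple_mul w i
            omega
          have h3 : cs.length (w * t) = cs.length w + cs.length t := hB2 t htmem
          have h4 : cs.length t = 1 := by
            rw [htw, h2] at h3
            omega
          obtain ⟨ωt, htred, htJ, hteq⟩ := CoxProof.exists_reduced_word_subset cs J t htmem
          have hωtlen : ωt.length = 1 := by
            have := htred; unfold CoxeterSystem.IsReduced at this
            rw [← this, ← hteq, h4]
          obtain ⟨j0, hj0⟩ : ∃ j0, ωt = [j0] := List.length_eq_one_iff.mp hωtlen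
          have hj0J : j0 ∈ J := htJ j0 (by simp [hj0])
          have htsimple : t = cs.simple j0 := by rw [hteq, hj0, cs.wordProd_singleton]
          have hsiK : cs.simple i ∈ K :=
            ⟨⟨i, hi, rfl⟩, cs.simple j0, ⟨j0, hj0J, rfl⟩, by rw [← htsimple, ht]; group⟩
          have hx'J : w⁻¹ * cs.wordProd ω' * w ∈ Subgroup.closure (cs.simple '' J) := by
            have e : w⁻¹ * cs.wordProd ω' * w = t * y := by
              have c : cs.simple i * cs.wordProd (i :: ω') = cs.wordProd ω' := by
                rw [hxx', ← mul_assoc, cs.simple_mul_simple_self, one_mul]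
              rw [ht, hy, show (w⁻¹ * cs.simple i * w) * (w⁻¹ * cs.wordProd (i :: ω') * w)
                  = w⁻¹ * (cs.simple i * cs.wordProd (i :: ω')) * w by group, c]
            rw [e]
            exact mul_mem htmem hymem
          have hx'K := ih (cs.wordProd ω') hx'mem hx'J (by omega)
          rw [hxx']
          exact mul_mem (Subgroup.subset_closure hsiK) hx'K
  ext x
  simp only [Set.mem_inter_iff, SetLike.mem_coe, Set.mem_setOf_eq]
  constructor
  · rintro ⟨hxI, hxJ⟩
    exact main (cs.length x) x hxI hxJ le_rfl
  · intro hx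
    have claim : ∀ z ∈ Subgroup.closure K,
        z ∈ Subgroup.closure (cs.simple '' I) ∧
          w⁻¹ * z * w ∈ Subgroup.closure (cs.simple '' J) := by
      intro z hz
      induction hz using Subgroup.closure_induction with
      | mem g hg =>
        obtain ⟨hgI, t, htJ, rfl⟩ := hg
        refine ⟨Subgroup.subset_closure hgI, ?_⟩
        have e : w⁻¹ * (w * t * w⁻¹) * w = t := by group
        rw [e]
        exact Subgroup.subset_closure htJ
      | one =>
        refine ⟨one_mem _, ?_⟩
        rw [mul_one, inv_mul_cancel]
        exact one_mem _
      | mul a b _ _ iha ihb =>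
        refine ⟨mul_mem iha.1 ihb.1, ?_⟩
        have e : w⁻¹ * (a * b) * w = (w⁻¹ * a * w) * (w⁻¹ * b * w) := by group
        rw [e]
        exact mul_mem iha.2 ihb.2
      | inv a _ iha =>
        refine ⟨inv_mem iha.1, ?_⟩
        have e : w⁻¹ * a⁻¹ * w = (w⁻¹ * a * w)⁻¹ := by group
        rw [e]
        exact inv_mem iha.2
    exact claim x hx
end

section
/- Let (W,S) be a Coxeter system with a weight function q_s > 0 constant on odd-dihedral-connected generators, and let I, J ⊆ S with W_I and W_J finite. If w is the minimal length representative of W_I w W_J, then Σ_{z ∈ W_I w W_J} q_z = N(I) · q_w · N(J) / N(J ∩ w⁻¹Iw), where N(K) = Σ_{v ∈ W_K} q_v and q_v is the product of q_s over a reduced expression of v, and J ∩ w⁻¹Iw = {t ∈ J : w t w⁻¹ ∈ I}. -/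
open CoxeterSystem

section Statement5AuxScope

open CoxeterSystem List

variable {B W : Type*} [Group W] [DecidableEq W] {M : CoxeterMatrix B} (cs : CoxeterSystem M W)

local prefix:100 "s" => cs.simple
local prefix:100 "π" => cs.wordProd
local prefix:100 "ℓ" => cs.length
local prefix:100 "ris" => cs.rightInvSeq
local prefix:100 "lis" => cs.leftInvSeq

namespace Statement5Aux

/-- The permutation representation on `W × ZMod 2` used to prove the exchange property. -/
def fperm (i : B) : Function.End (W × ZMod 2) :=
  fun p => (s i * p.1 * s i, p.2 + if p.1 = s i then 1 else 0)

lemma prod_map_fperm (ω : List B) (p : W × ZMod 2) :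
    ((ω.map (fperm cs)).prod : Function.End (W × ZMod 2)) p =
      (π ω * p.1 * (π ω)⁻¹, p.2 + ((ris ω).count p.1 : ZMod 2)) := by
  induction ω with
  | nil =>
      show (1 : Function.End (W × ZMod 2)) p = _
      simp [Function.End]
      rfl
  | cons i ω ih =>
      have : ((List.map (fperm cs) (i :: ω)).prod : Function.End (W × ZMod 2)) p
          = fperm cs i (((ω.map (fperm cs)).prod : Function.End (W × ZMod 2)) p) := by
        simp [List.map_cons, List.prod_cons]
        rfl
      rw [this, ih]
      unfold fperm
      simp only [rightInvSeq, List.count_cons, wordProd_cons]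
      ext
      · simp [mul_assoc, mul_inv_rev]
      · simp only []
        by_cases h : p.1 = (π ω)⁻¹ * s i * π ω
        · have h2 : π ω * p.1 * (π ω)⁻¹ = s i := by rw [h]; group
          simp [h, h2, beq_iff_eq]
          rw [if_pos (by group)]
          ring
        · have h2 : ¬ (π ω * p.1 * (π ω)⁻¹ = s i) := by
            intro hc; apply h; rw [← hc]; group
          simp [h, h2, beq_iff_eq, fun x => (eq_comm : ((π ω)⁻¹ * s i * π ω = p.1) ↔ _)]
          intro hc; exact absurd hc.symm h


lemma flip_pow (i j : B) (a : ℕ) :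
    s j * (s i * s j) ^ a = (s j * s i) ^ a * s j := by
  induction a with
  | zero => simp
  | succ a ih =>
      rw [pow_succ, ← mul_assoc, ih, pow_succ]
      group

lemma ris_alternatingWord (i j : B) (n : ℕ) :
    ris (alternatingWord i j n)
      = (List.range n).map (fun k => (s j * s i) ^ (n - 1 - k) * s j) := by
  induction n with
  | zero => simp [alternatingWord]
  | succ n ih =>
      rw [alternatingWord_succ' i j n]
      show CoxeterSystem.rightInvSeq cs (_ :: _) = _
      rw [List.range_succ_eq_map]
      unfold rightInvSeq
      rw [List.map_cons, List.map_map]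
      congr 1
      · -- head computation
        rcases Nat.even_or_odd n with he | ho
        · rw [if_pos he, cs.prod_alternatingWord_eq_mul_pow, if_pos he, one_mul]
          obtain ⟨a, rfl⟩ := he
          have ha2 : (a + a) / 2 = a := by omega
          rw [ha2, (by omega : a + a + 1 - 1 - 0 = a + a)]
          have hinv : ((s i * s j) ^ a)⁻¹ = (s j * s i) ^ a := by
            rw [← inv_pow, mul_inv_rev, cs.inv_simple, cs.inv_simple]
          rw [hinv, mul_assoc, flip_pow cs i j a, ← mul_assoc, ← pow_add]
        · rw [if_neg (Nat.not_even_iff_odd.mpr ho), cs.prod_alternatingWord_eq_mul_pow,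
            if_neg (Nat.not_even_iff_odd.mpr ho)]
          obtain ⟨a, rfl⟩ := ho
          have ha2 : (2 * a + 1) / 2 = a := by omega
          rw [ha2, (by omega : 2 * a + 1 + 1 - 1 - 0 = 2 * a + 1)]
          have hp : (s j * (s i * s j) ^ a)⁻¹ = (s j * s i) ^ a * s j := by
            rw [mul_inv_rev, ← inv_pow, mul_inv_rev, cs.inv_simple, cs.inv_simple]
          rw [hp]
          calc (s j * s i) ^ a * s j * s i * (s j * (s i * s j) ^ a)
              = (s j * s i) ^ a * (s j * s i) * (s j * (s i * s j) ^ a) := by group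
            _ = (s j * s i) ^ a * (s j * s i) * ((s j * s i) ^ a * s j) := by
                  rw [flip_pow cs i j a]
            _ = (s j * s i) ^ (2 * a + 1) * s j := by
                  rw [(by ring : 2 * a + 1 = a + 1 + a), pow_add, pow_add, pow_one]
                  group
      · -- tail
        rw [ih]
        apply List.map_congr_left
        intro k hk
        simp only [Function.comp_apply]
        congr 2
        omega

lemma ris_alternatingWord_double (i j : B) :
    ∃ χ : List W, ris (alternatingWord i j (2 * M i j)) = χ ++ χ := by
  refine ⟨(List.range (M i j)).map (fun k => (s j * s i) ^ (M i j - 1 - k) * s j), ?_⟩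
  rw [ris_alternatingWord cs i j]
  rw [two_mul, List.range_add, List.map_append]
  congr 1
  · apply List.map_congr_left
    intro k hk
    rw [List.mem_range] at hk
    have : M i j + M i j - 1 - k = M i j + (M i j - 1 - k) := by omega
    rw [this, pow_add, cs.simple_mul_simple_pow' i j, one_mul]
  · rw [List.map_map]
    apply List.map_congr_left
    intro k hk
    rw [List.mem_range] at hk
    simp only [Function.comp_apply]
    congr 2
    omega

lemma fperm_pow_eq (i j : B) (m : ℕ) :
    (fperm cs i * fperm cs j) ^ m = ((alternatingWord i j (2 * m)).map (fperm cs)).prod := by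
  induction m with
  | zero => simp [alternatingWord]
  | succ m ih =>
      have h2 : 2 * (m + 1) = (2 * m + 1) + 1 := by ring
      rw [h2, alternatingWord_succ' i j, alternatingWord_succ' i j]
      rw [if_neg (by simp [Nat.even_add_one, parity_simps]),
        if_pos (even_two_mul m)]
      rw [List.map_cons, List.map_cons, List.prod_cons, List.prod_cons, ← ih]
      rw [pow_succ']
      rw [mul_assoc]

lemma liftable : M.IsLiftable (fperm cs) := by
  intro i j
  funext p
  rw [fperm_pow_eq cs i j]
  rw [prod_map_fperm]
  obtain ⟨χ, hχ⟩ := ris_alternatingWord_double cs i j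
  have hπ : π (alternatingWord i j (2 * M i j)) = 1 := by
    rw [cs.prod_alternatingWord_eq_mul_pow, if_pos (even_two_mul _),
      (by omega : 2 * M i j / 2 = M i j), cs.simple_mul_simple_pow, one_mul]
  rw [hπ, hχ, List.count_append]
  show _ = p
  have hc : ((List.count p.1 χ + List.count p.1 χ : ℕ) : ZMod 2) = 0 := by
    push_cast
    rw [← two_mul, (by rfl : (2 : ZMod 2) = 0), zero_mul]
  ext
  · simp
  · show p.2 + _ = p.2
    rw [hc, add_zero]


noncomputable def fhom : W →* Function.End (W × ZMod 2) :=
  cs.lift ⟨fperm cs, liftable cs⟩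

lemma fhom_simple (i : B) : fhom cs (s i) = fperm cs i :=
  cs.lift_apply_simple (liftable cs) i

lemma fhom_wordProd (ω : List B) : fhom cs (π ω) = (ω.map (fperm cs)).prod := by
  unfold CoxeterSystem.wordProd
  rw [map_list_prod, List.map_map]
  congr 1
  apply List.map_congr_left
  intro b _
  exact fhom_simple cs b

lemma simple_mem_rightInvSeq_of_descent {ω : List B} (hω : cs.IsReduced ω) {j : B}
    (h : ℓ (π ω * s j) < ℓ (π ω)) : s j ∈ ris ω := by
  by_contra hmem
  obtain ⟨ω', hred', heq'⟩ := cs.exists_reduced_word' (π ω * s j)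
  have e2 : π ω = π ω' * s j := by
    rw [← heq', mul_assoc, cs.simple_mul_simple_self, mul_one]
  have efp : fperm cs j ((s j, 0) : W × ZMod 2) = (s j, 1) := by
    unfold fperm
    rw [if_pos rfl, cs.simple_mul_simple_self, one_mul, zero_add]
  have e3 : fhom cs (π ω) ((s j, 0) : W × ZMod 2) = fhom cs (π ω') (s j, 1) := by
    rw [e2, map_mul]
    show fhom cs (π ω') (fhom cs (s j) (s j, 0)) = _
    rw [fhom_simple, efp]
  rw [fhom_wordProd, fhom_wordProd] at e3
  rw [prod_map_fperm, prod_map_fperm] at e3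
  have key : ((ris ω).count (s j) : ZMod 2) = 1 + ((ris ω').count (s j) : ZMod 2) := by
    have := congrArg Prod.snd e3
    simpa [add_comm] using this
  rw [List.count_eq_zero_of_not_mem hmem] at key
  have hmem' : s j ∈ ris ω' := by
    by_contra hmem'
    rw [List.count_eq_zero_of_not_mem hmem'] at key
    simp at key
  obtain ⟨idx, hidx, hget⟩ := List.mem_iff_getElem.mp hmem'
  have hidx' : (idx : ℕ) < ω'.length := by simpa using hidx
  have hgetD : (ris ω').getD idx 1 = s j := by
    rw [List.getD_eq_getElem _ _ hidx, hget]
  have herase : π ω = π (ω'.eraseIdx idx) := by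
    rw [← cs.wordProd_mul_getD_rightInvSeq ω' idx, hgetD, ← heq', mul_assoc,
      cs.simple_mul_simple_self, mul_one]
  have hlen : ℓ (π ω) ≤ (ω'.eraseIdx idx).length := herase ▸ cs.length_wordProd_le _
  rw [List.length_eraseIdx_of_lt hidx'] at hlen
  have h1 : ω'.length = ℓ (π ω * s j) := by rw [heq']; exact hred'.symm
  omega

lemma right_exchange {ω : List B} (hω : cs.IsReduced ω) {j : B}
    (h : ℓ (π ω * s j) < ℓ (π ω)) :
    ∃ k, k < ω.length ∧ π ω * s j = π (ω.eraseIdx k) := by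
  have hmem := simple_mem_rightInvSeq_of_descent cs hω h
  obtain ⟨idx, hidx, hget⟩ := List.mem_iff_getElem.mp hmem
  have hidx' : (idx : ℕ) < ω.length := by simpa using hidx
  refine ⟨idx, hidx', ?_⟩
  have hgetD : (ris ω).getD idx 1 = s j := by
    rw [List.getD_eq_getElem _ _ hidx, hget]
  rw [← hgetD]
  exact (cs.wordProd_mul_getD_rightInvSeq ω idx)

lemma left_exchange {ω : List B} (hω : cs.IsReduced ω) {i : B}
    (h : ℓ (s i * π ω) < ℓ (π ω)) :
    ∃ k, k < ω.length ∧ s i * π ω = π (ω.eraseIdx k) := by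
  have hrev : cs.IsReduced ω.reverse := (cs.isReduced_reverse_iff ω).mpr hω
  have hlen : ℓ (π ω.reverse * s i) < ℓ (π ω.reverse) := by
    rw [cs.wordProd_reverse, cs.length_inv]
    have : (π ω)⁻¹ * s i = (s i * π ω)⁻¹ := by
      rw [mul_inv_rev, cs.inv_simple]
    rw [this, cs.length_inv]
    exact h
  have hmem := simple_mem_rightInvSeq_of_descent cs hrev hlen
  rw [cs.rightInvSeq_reverse] at hmem
  have hmem' : s i ∈ lis ω := List.mem_reverse.mp hmem
  obtain ⟨idx, hidx, hget⟩ := List.mem_iff_getElem.mp hmem'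
  have hidx' : (idx : ℕ) < ω.length := by simpa using hidx
  refine ⟨idx, hidx', ?_⟩
  have hgetD : (lis ω).getD idx 1 = s i := by
    rw [List.getD_eq_getElem _ _ hidx, hget]
  rw [← hgetD]
  exact (cs.getD_leftInvSeq_mul_wordProd ω idx)


lemma wordProd_mem_closure {A : Set B} {ω : List B} (hA : ∀ b ∈ ω, b ∈ A) :
    π ω ∈ Subgroup.closure (cs.simple '' A) := by
  induction ω with
  | nil => exact (Subgroup.closure _).one_mem
  | cons b t ih =>
      rw [cs.wordProd_cons]
      exact mul_mem (Subgroup.subset_closure ⟨b, hA b (by simp), rfl⟩)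
        (ih fun c hc => hA c (by simp [hc]))

lemma exists_word_subset (A : Set B) (u : W)
    (hu : u ∈ Subgroup.closure (cs.simple '' A)) :
    ∃ ω : List B, (∀ b ∈ ω, b ∈ A) ∧ u = π ω := by
  induction hu using Subgroup.closure_induction with
  | mem x hx =>
      obtain ⟨b, hb, rfl⟩ := hx
      exact ⟨[b], by simpa using hb, (cs.wordProd_singleton b).symm⟩
  | one => exact ⟨[], by simp, by simp⟩
  | mul x y hx hy ihx ihy =>
      obtain ⟨ω₁, h1, rfl⟩ := ihx
      obtain ⟨ω₂, h2, rfl⟩ := ihy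
      exact ⟨ω₁ ++ ω₂, by
        intro b hb
        rcases List.mem_append.mp hb with h | h
        exacts [h1 b h, h2 b h], (cs.wordProd_append ω₁ ω₂).symm⟩
  | inv x hx ihx =>
      obtain ⟨ω, h1, rfl⟩ := ihx
      exact ⟨ω.reverse, fun b hb => h1 b (List.mem_reverse.mp hb),
        (cs.wordProd_reverse ω).symm⟩

lemma reduce_word : ∀ n : ℕ, ∀ ω : List B, ω.length ≤ n →
    ∃ ω' : List B, cs.IsReduced ω' ∧ (∀ b ∈ ω', b ∈ ω) ∧ π ω' = π ω := by
  intro n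
  induction n with
  | zero =>
      intro ω hω
      rw [Nat.le_zero, List.length_eq_zero_iff] at hω
      exact ⟨ω, by simp [hω, CoxeterSystem.IsReduced], by simp, rfl⟩
  | succ n ih =>
      intro ω hω
      by_cases hred : cs.IsReduced ω
      · exact ⟨ω, hred, by simp, rfl⟩
      rcases List.eq_nil_or_concat ω with rfl | ⟨ω₀, c, rfl⟩
      · exact absurd (by simp [CoxeterSystem.IsReduced]) hred
      have hlen₀ : ω₀.length ≤ n := by
        have := hω; rw [List.length_concat] at this; omega
      by_cases hred₀ : cs.IsReduced ω₀
      · -- ω₀ reduced, ω = ω₀.concat c not reduced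
        have hlt : ℓ (π ω₀ * s c) < ℓ (π ω₀) := by
          rcases cs.length_mul_simple (π ω₀) c with h | h
          · exfalso
            apply hred
            show ℓ (π (ω₀.concat c)) = (ω₀.concat c).length
            rw [cs.wordProd_concat, h, hred₀, List.length_concat]
          · have hne := cs.length_mul_simple_ne (π ω₀) c
            omega
        obtain ⟨k, hk, hek⟩ := right_exchange cs hred₀ hlt
        have hπ : π (ω₀.eraseIdx k) = π (ω₀.concat c) := by
          rw [cs.wordProd_concat, ← hek]
        obtain ⟨ω', h1, h2, h3⟩ := ih (ω₀.eraseIdx k)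
          (by rw [List.length_eraseIdx_of_lt hk]; omega)
        exact ⟨ω', h1, fun b hb => by
          have := List.mem_of_mem_eraseIdx (h2 b hb)
          simp [List.concat_eq_append]
          tauto, by rw [h3, hπ]⟩
      · obtain ⟨ω₀', h1, h2, h3⟩ := ih ω₀ hlen₀
        have hshort : ω₀'.length < ω₀.length := by
          have h4 : ℓ (π ω₀) < ω₀.length :=
            lt_of_le_of_ne (cs.length_wordProd_le ω₀) hred₀
          rw [← h3] at h4
          rw [h1] at h4
          exact h4
        obtain ⟨ω'', g1, g2, g3⟩ := ih (ω₀'.concat c) (by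
          rw [List.length_concat]
          have := hω; rw [List.length_concat] at this; omega)
        refine ⟨ω'', g1, fun b hb => ?_, ?_⟩
        · have := g2 b hb
          simp [List.concat_eq_append] at this ⊢
          rcases this with h | h
          · exact Or.inl (h2 b h)
          · exact Or.inr h
        · rw [g3, cs.wordProd_concat, cs.wordProd_concat, h3]

lemma exists_reduced_word_subset (A : Set B) (u : W)
    (hu : u ∈ Subgroup.closure (cs.simple '' A)) :
    ∃ ω : List B, cs.IsReduced ω ∧ (∀ b ∈ ω, b ∈ A) ∧ u = π ω := by
  obtain ⟨ω, hsub, rfl⟩ := exists_word_subset cs A u hu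
  obtain ⟨ω', h1, h2, h3⟩ := reduce_word cs ω.length ω le_rfl
  exact ⟨ω', h1, fun b hb => hsub b (h2 b hb), h3.symm⟩

lemma descent_left (A : Set B) (u : W)
    (hu : u ∈ Subgroup.closure (cs.simple '' A)) (hne : u ≠ 1) :
    ∃ b ∈ A, ∃ u' ∈ Subgroup.closure (cs.simple '' A),
      u = s b * u' ∧ ℓ u = ℓ u' + 1 := by
  obtain ⟨ω, h1, h2, rfl⟩ := exists_reduced_word_subset cs A u hu
  cases ω with
  | nil => exact absurd (by simp) hne
  | cons b t =>
      refine ⟨b, h2 b (by simp), π t,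
        wordProd_mem_closure cs (fun c hc => h2 c (by simp [hc])), cs.wordProd_cons b t, ?_⟩
      have e1 : ℓ (π (b :: t)) = t.length + 1 := by rw [h1]; simp
      have e2 : ℓ (π t) ≤ t.length := cs.length_wordProd_le t
      have e3 : ℓ (π (b :: t)) ≤ 1 + ℓ (π t) := by
        rw [cs.wordProd_cons]
        calc ℓ (s b * π t) ≤ ℓ (s b) + ℓ (π t) := cs.length_mul_le _ _
          _ = 1 + ℓ (π t) := by rw [cs.length_simple]
      omega

lemma descent_right (A : Set B) (u : W)
    (hu : u ∈ Subgroup.closure (cs.simple '' A)) (hne : u ≠ 1) :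
    ∃ b ∈ A, ∃ u' ∈ Subgroup.closure (cs.simple '' A),
      u = u' * s b ∧ ℓ u = ℓ u' + 1 := by
  obtain ⟨ω, h1, h2, rfl⟩ := exists_reduced_word_subset cs A u hu
  rcases List.eq_nil_or_concat ω with rfl | ⟨ω₀, c, rfl⟩
  · exact absurd (by simp) hne
  refine ⟨c, h2 c (by simp [List.concat_eq_append]), π ω₀,
    wordProd_mem_closure cs (fun b hb => h2 b (by simp [List.concat_eq_append, hb])),
    cs.wordProd_concat c ω₀, ?_⟩
  have e1 : ℓ (π (ω₀.concat c)) = ω₀.length + 1 := by rw [h1]; simp [List.length_concat]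
  have e2 : ℓ (π ω₀) ≤ ω₀.length := cs.length_wordProd_le ω₀
  have e3 : ℓ (π (ω₀.concat c)) ≤ ℓ (π ω₀) + 1 := by
    rw [cs.wordProd_concat]
    calc ℓ (π ω₀ * s c) ≤ ℓ (π ω₀) + ℓ (s c) := cs.length_mul_le _ _
      _ = ℓ (π ω₀) + 1 := by rw [cs.length_simple]
  omega


/-- If `v` has minimal length in `(closure (s '' A)) * v`, then lengths add. -/
lemma length_add_of_min (A : Set B) (v : W)
    (hmin : ∀ x ∈ Subgroup.closure (cs.simple '' A), ℓ v ≤ ℓ (x * v)) :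
    ∀ x ∈ Subgroup.closure (cs.simple '' A), ℓ (x * v) = ℓ x + ℓ v := by
  suffices H : ∀ n : ℕ, ∀ x ∈ Subgroup.closure (cs.simple '' A), ℓ x ≤ n →
      ℓ (x * v) = ℓ x + ℓ v by
    intro x hx; exact H (ℓ x) x hx le_rfl
  intro n
  induction n with
  | zero =>
      intro x _ hl
      have : x = 1 := cs.length_eq_zero_iff.mp (Nat.le_zero.mp hl)
      subst this; simp
  | succ n ih =>
      intro x hx hl
      by_cases hone : x = 1
      · subst hone; simp
      obtain ⟨b, hb, x', hx', rfl, hlx⟩ := descent_left cs A x hx hone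
      have ihx' : ℓ (x' * v) = ℓ x' + ℓ v := ih x' hx' (by omega)
      rcases cs.length_simple_mul (x' * v) b with h | h
      · rw [mul_assoc, h, ihx', hlx]; omega
      · exfalso
        have hlt : ℓ (s b * (x' * v)) < ℓ (x' * v) := by
          have hne := cs.length_simple_mul_ne (x' * v) b
          omega
        obtain ⟨α, hα1, hα2, hα3⟩ := exists_reduced_word_subset cs A x' hx'
        obtain ⟨β, hβ1, hβ2⟩ := cs.exists_reduced_word' v
        have hαl : α.length = ℓ x' := by rw [← hα1, ← hα3]
        have hβl : β.length = ℓ v := by rw [← hβ1, ← hβ2]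
        have hπ : π (α ++ β) = x' * v := by rw [cs.wordProd_append, ← hα3, ← hβ2]
        have hred : cs.IsReduced (α ++ β) := by
          show ℓ (π (α ++ β)) = _
          rw [hπ, List.length_append, ihx', hαl, hβl]
        obtain ⟨k, hk, hek⟩ := left_exchange cs hred (by rw [hπ]; exact hlt)
        rw [List.length_append] at hk
        rw [hπ] at hek
        by_cases hkα : k < α.length
        · rw [List.eraseIdx_append_of_lt_length hkα] at hek
          have h5 : s b * x' = π (α.eraseIdx k) := by
            have h6 : s b * (x' * v) = π (α.eraseIdx k) * v := by
              rw [hek, cs.wordProd_append, ← hβ2]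
            rw [← mul_assoc] at h6
            exact mul_right_cancel h6
          have hle : ℓ (s b * x') ≤ (α.eraseIdx k).length := by
            rw [h5]; exact cs.length_wordProd_le _
          rw [List.length_eraseIdx_of_lt hkα] at hle
          have h7 : ℓ (s b * x') = ℓ x' + 1 := hlx
          omega
        · push_neg at hkα
          rw [List.eraseIdx_append_of_length_le hkα] at hek
          have h5 : (x'⁻¹ * s b * x') * v = π (β.eraseIdx (k - α.length)) := by
            have h6 : s b * (x' * v) = x' * π (β.eraseIdx (k - α.length)) := by
              rw [hek, cs.wordProd_append, ← hα3]
            have h7 : π (β.eraseIdx (k - α.length)) = x'⁻¹ * (s b * (x' * v)) := by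
              rw [h6]; group
            rw [h7]; group
          have hle : ℓ ((x'⁻¹ * s b * x') * v) ≤ (β.eraseIdx (k - α.length)).length := by
            rw [h5]; exact cs.length_wordProd_le _
          rw [List.length_eraseIdx_of_lt (by omega)] at hle
          have hmem : x'⁻¹ * s b * x' ∈ Subgroup.closure (cs.simple '' A) :=
            mul_mem (mul_mem (inv_mem hx') (Subgroup.subset_closure ⟨b, hb, rfl⟩)) hx'
          have := hmin _ hmem
          omega

/-- If `v` has minimal length in `v * (closure (s '' A))`, then lengths add. -/
lemma length_add_of_min_right (A : Set B) (v : W)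
    (hmin : ∀ y ∈ Subgroup.closure (cs.simple '' A), ℓ v ≤ ℓ (v * y)) :
    ∀ y ∈ Subgroup.closure (cs.simple '' A), ℓ (v * y) = ℓ v + ℓ y := by
  suffices H : ∀ n : ℕ, ∀ y ∈ Subgroup.closure (cs.simple '' A), ℓ y ≤ n →
      ℓ (v * y) = ℓ v + ℓ y by
    intro y hy; exact H (ℓ y) y hy le_rfl
  intro n
  induction n with
  | zero =>
      intro y _ hl
      have : y = 1 := cs.length_eq_zero_iff.mp (Nat.le_zero.mp hl)
      subst this; simp
  | succ n ih =>
      intro y hy hl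
      by_cases hone : y = 1
      · subst hone; simp
      obtain ⟨b, hb, y', hy', rfl, hly⟩ := descent_right cs A y hy hone
      have ihy' : ℓ (v * y') = ℓ v + ℓ y' := ih y' hy' (by omega)
      rcases cs.length_mul_simple (v * y') b with h | h
      · rw [← mul_assoc, h, ihy', hly]; omega
      · exfalso
        have hlt : ℓ ((v * y') * s b) < ℓ (v * y') := by
          have hne := cs.length_mul_simple_ne (v * y') b
          omega
        obtain ⟨β, hβ1, hβ2⟩ := cs.exists_reduced_word' v
        obtain ⟨γ, hγ1, hγ2, hγ3⟩ := exists_reduced_word_subset cs A y' hy'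
        have hβl : β.length = ℓ v := by rw [← hβ1, ← hβ2]
        have hγl : γ.length = ℓ y' := by rw [← hγ1, ← hγ3]
        have hπ : π (β ++ γ) = v * y' := by rw [cs.wordProd_append, ← hβ2, ← hγ3]
        have hred : cs.IsReduced (β ++ γ) := by
          show ℓ (π (β ++ γ)) = _
          rw [hπ, List.length_append, ihy', hβl, hγl]
        obtain ⟨k, hk, hek⟩ := right_exchange cs hred (by rw [hπ]; exact hlt)
        rw [List.length_append] at hk
        rw [hπ] at hek
        by_cases hkβ : k < β.length
        · rw [List.eraseIdx_append_of_lt_length hkβ] at hek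
          have h5 : (v * (y' * s b * y'⁻¹)) = π (β.eraseIdx k) := by
            have h6 : (v * y') * s b = π (β.eraseIdx k) * y' := by
              rw [hek, cs.wordProd_append, ← hγ3]
            have h7 : π (β.eraseIdx k) = ((v * y') * s b) * y'⁻¹ := by
              rw [h6]; group
            rw [h7]; group
          have hle : ℓ (v * (y' * s b * y'⁻¹)) ≤ (β.eraseIdx k).length := by
            rw [h5]; exact cs.length_wordProd_le _
          rw [List.length_eraseIdx_of_lt hkβ] at hle
          have hmem : y' * s b * y'⁻¹ ∈ Subgroup.closure (cs.simple '' A) :=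
            mul_mem (mul_mem hy' (Subgroup.subset_closure ⟨b, hb, rfl⟩)) (inv_mem hy')
          have := hmin _ hmem
          omega
        · push_neg at hkβ
          rw [List.eraseIdx_append_of_length_le hkβ] at hek
          have h5 : y' * s b = π (γ.eraseIdx (k - β.length)) := by
            have h6 : (v * y') * s b = v * π (γ.eraseIdx (k - β.length)) := by
              rw [hek, cs.wordProd_append, ← hβ2]
            have h7 : π (γ.eraseIdx (k - β.length)) = v⁻¹ * ((v * y') * s b) := by
              rw [h6]; group
            rw [h7]; group
          have hle : ℓ (y' * s b) ≤ (γ.eraseIdx (k - β.length)).length := by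
            rw [h5]; exact cs.length_wordProd_le _
          rw [List.length_eraseIdx_of_lt (by omega)] at hle
          have h7 : ℓ (y' * s b) = ℓ y' + 1 := hly
          omega


lemma kilmoyer (I J : Set B) (w : W)
    (hw : ∀ x ∈ Subgroup.closure (cs.simple '' I), ∀ y ∈ Subgroup.closure (cs.simple '' J),
      ℓ w ≤ ℓ (x * w * y)) :
    ∀ u ∈ Subgroup.closure (cs.simple '' J),
      w * u * w⁻¹ ∈ Subgroup.closure (cs.simple '' I) →
      u ∈ Subgroup.closure {t : W | t ∈ cs.simple '' J ∧ w * t * w⁻¹ ∈ cs.simple '' I} := by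
  have hminL : ∀ x ∈ Subgroup.closure (cs.simple '' I), ℓ w ≤ ℓ (x * w) := by
    intro x hx
    simpa using hw x hx 1 (one_mem _)
  have hminR : ∀ y ∈ Subgroup.closure (cs.simple '' J), ℓ w ≤ ℓ (w * y) := by
    intro y hy
    simpa using hw 1 (one_mem _) y hy
  have hA := length_add_of_min cs I w hminL
  have hB := length_add_of_min_right cs J w hminR
  suffices H : ∀ n : ℕ, ∀ u ∈ Subgroup.closure (cs.simple '' J), ℓ u ≤ n →
      w * u * w⁻¹ ∈ Subgroup.closure (cs.simple '' I) →
      u ∈ Subgroup.closure {t : W | t ∈ cs.simple '' J ∧ w * t * w⁻¹ ∈ cs.simple '' I} by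
    intro u hu hv; exact H (ℓ u) u hu le_rfl hv
  intro n
  induction n with
  | zero =>
      intro u _ hl _
      have : u = 1 := cs.length_eq_zero_iff.mp (Nat.le_zero.mp hl)
      subst this; exact one_mem _
  | succ n ih =>
      intro u hu hl hv
      by_cases hone : u = 1
      · subst hone; exact one_mem _
      have hune : ℓ u ≠ 0 := fun h => hone (cs.length_eq_zero_iff.mp h)
      have hvw : (w * u * w⁻¹) * w = w * u := by group
      have hlv : ℓ (w * u * w⁻¹) = ℓ u := by
        have h1 : ℓ ((w * u * w⁻¹) * w) = ℓ (w * u * w⁻¹) + ℓ w := hA _ hv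
        have h2 : ℓ (w * u) = ℓ w + ℓ u := hB u hu
        rw [hvw, h2] at h1; omega
      have hvne : w * u * w⁻¹ ≠ 1 := by
        intro h
        rw [h, cs.length_one] at hlv
        exact hune hlv.symm
      obtain ⟨i, hi, v', hv', hveq, hlv'⟩ := descent_left cs I (w * u * w⁻¹) hv hvne
      obtain ⟨β, hβ1, hβ2⟩ := cs.exists_reduced_word' w
      obtain ⟨γ, hγ1, hγ2, hγ3⟩ := exists_reduced_word_subset cs J u hu
      have hβl : β.length = ℓ w := by rw [← hβ1, ← hβ2]
      have hγl : γ.length = ℓ u := by rw [← hγ1, ← hγ3]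
      have hπ : π (β ++ γ) = w * u := by rw [cs.wordProd_append, ← hβ2, ← hγ3]
      have hred : cs.IsReduced (β ++ γ) := by
        show ℓ (π (β ++ γ)) = _
        rw [hπ, List.length_append, hB u hu, hβl, hγl]
      have hsimem : s i ∈ Subgroup.closure (cs.simple '' I) :=
        Subgroup.subset_closure ⟨i, hi, rfl⟩
      have hlt : ℓ (s i * (w * u)) < ℓ (w * u) := by
        have e1 : s i * (w * u) = v' * w := by
          rw [← hvw, hveq, mul_assoc (cs.simple i) v' w]
          exact cs.simple_mul_simple_cancel_left i
        rw [e1, hA v' hv', hB u hu]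
        omega
      obtain ⟨k, hk, hek⟩ := left_exchange cs hred (by rw [hπ]; exact hlt)
      rw [List.length_append] at hk
      rw [hπ] at hek
      by_cases hkβ : k < β.length
      · exfalso
        rw [List.eraseIdx_append_of_lt_length hkβ] at hek
        have h5 : s i * w = π (β.eraseIdx k) := by
          have h6 : s i * (w * u) = π (β.eraseIdx k) * u := by
            rw [hek, cs.wordProd_append, ← hγ3]
          have h7 : (s i * w) * u = π (β.eraseIdx k) * u := by rw [← h6]; group
          exact mul_right_cancel h7
        have hle : ℓ (s i * w) ≤ (β.eraseIdx k).length := by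
          rw [h5]; exact cs.length_wordProd_le _
        rw [List.length_eraseIdx_of_lt hkβ] at hle
        have := hminL (s i) hsimem
        omega
      · push_neg at hkβ
        rw [List.eraseIdx_append_of_length_le hkβ] at hek
        set m := k - β.length with hm
        have hmδ : m < γ.length := by omega
        have hu'' : π (γ.eraseIdx m) ∈ Subgroup.closure (cs.simple '' J) :=
          wordProd_mem_closure cs (fun b hb => hγ2 b (List.mem_of_mem_eraseIdx hb))
        have h7 : w * π (γ.eraseIdx m) = s i * (w * u) := by
          rw [hek, cs.wordProd_append, ← hβ2]
        have hlen'' : ℓ (π (γ.eraseIdx m)) ≤ γ.length - 1 := by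
          have := cs.length_wordProd_le (γ.eraseIdx m)
          rw [List.length_eraseIdx_of_lt hmδ] at this
          exact this
        set k₀ := π (γ.eraseIdx m) * u⁻¹ with hk₀
        have hk₀J : k₀ ∈ Subgroup.closure (cs.simple '' J) := mul_mem hu'' (inv_mem hu)
        have hwk₀ : w * k₀ * w⁻¹ = s i := by
          rw [hk₀]
          have : w * (π (γ.eraseIdx m) * u⁻¹) * w⁻¹ = (w * π (γ.eraseIdx m)) * (u⁻¹ * w⁻¹) := by
            group
          rw [this, h7]; group
        have hlk₀ : ℓ k₀ = 1 := by
          have e8 : w * k₀ = s i * w := by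
            have : w * k₀ = (w * k₀ * w⁻¹) * w := by group
            rw [this, hwk₀]
          have e9 : ℓ (w * k₀) = ℓ w + ℓ k₀ := hB k₀ hk₀J
          have e10 : ℓ (s i * w) = 1 + ℓ w := by
            rw [hA (s i) hsimem, cs.length_simple]
          rw [e8, e10] at e9
          omega
        have hk₀ne : k₀ ≠ 1 := by
          intro h; rw [h, cs.length_one] at hlk₀; omega
        obtain ⟨ω, hω1, hω2, hω3⟩ := exists_reduced_word_subset cs J k₀ hk₀J
        have hωl : ω.length = 1 := by
          rw [← hω1, ← hω3, hlk₀]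
        obtain ⟨c, rfl⟩ := List.length_eq_one_iff.mp hωl
        have hk₀img : k₀ ∈ cs.simple '' J :=
          ⟨c, hω2 c (by simp), by rw [hω3]; simp⟩
        have hk₀K : k₀ ∈ Subgroup.closure
            {t : W | t ∈ cs.simple '' J ∧ w * t * w⁻¹ ∈ cs.simple '' I} :=
          Subgroup.subset_closure ⟨hk₀img, by rw [hwk₀]; exact ⟨i, hi, rfl⟩⟩
        have hu''v : w * π (γ.eraseIdx m) * w⁻¹ = v' := by
          have e11 : w * π (γ.eraseIdx m) * w⁻¹ = s i * (w * u * w⁻¹) := by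
            calc w * π (γ.eraseIdx m) * w⁻¹ = (w * π (γ.eraseIdx m)) * w⁻¹ := rfl
              _ = (s i * (w * u)) * w⁻¹ := by rw [h7]
              _ = s i * (w * u * w⁻¹) := by group
          rw [e11, hveq, ← mul_assoc, cs.simple_mul_simple_self, one_mul]
        have ihapp : π (γ.eraseIdx m) ∈ Subgroup.closure
            {t : W | t ∈ cs.simple '' J ∧ w * t * w⁻¹ ∈ cs.simple '' I} := by
          apply ih _ hu'' _ (by rw [hu''v]; exact hv')
          omega
        have hu_eq : u = k₀⁻¹ * π (γ.eraseIdx m) := by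
          rw [hk₀]; group
        rw [hu_eq]
        exact mul_mem (inv_mem hk₀K) ihapp


lemma length_xwd (I J : Set B) (w : W)
    (hw : ∀ x ∈ Subgroup.closure (cs.simple '' I), ∀ y ∈ Subgroup.closure (cs.simple '' J),
      ℓ w ≤ ℓ (x * w * y))
    (d : W) (hdJ : d ∈ Subgroup.closure (cs.simple '' J))
    (hdadd : ∀ k ∈ Subgroup.closure
        {t : W | t ∈ cs.simple '' J ∧ w * t * w⁻¹ ∈ cs.simple '' I},
      ℓ (k * d) = ℓ k + ℓ d) :
    ∀ x ∈ Subgroup.closure (cs.simple '' I), ℓ (x * w * d) = ℓ x + ℓ w + ℓ d := by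
  have hminL : ∀ x ∈ Subgroup.closure (cs.simple '' I), ℓ w ≤ ℓ (x * w) := by
    intro x hx; simpa using hw x hx 1 (one_mem _)
  have hminR : ∀ y ∈ Subgroup.closure (cs.simple '' J), ℓ w ≤ ℓ (w * y) := by
    intro y hy; simpa using hw 1 (one_mem _) y hy
  have hA := length_add_of_min cs I w hminL
  have hB := length_add_of_min_right cs J w hminR
  suffices H : ∀ n : ℕ, ∀ x ∈ Subgroup.closure (cs.simple '' I), ℓ x ≤ n →
      ℓ (x * w * d) = ℓ x + ℓ w + ℓ d by
    intro x hx; exact H (ℓ x) x hx le_rfl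
  intro n
  induction n with
  | zero =>
      intro x _ hl
      have : x = 1 := cs.length_eq_zero_iff.mp (Nat.le_zero.mp hl)
      subst this
      rw [one_mul, cs.length_one, hB d hdJ, zero_add]
  | succ n ih =>
      intro x hx hl
      by_cases hone : x = 1
      · subst hone
        rw [one_mul, cs.length_one, hB d hdJ, zero_add]
      obtain ⟨i, hi, x', hx', rfl, hlx⟩ := descent_left cs I x hx hone
      have hsimem : s i ∈ Subgroup.closure (cs.simple '' I) :=
        Subgroup.subset_closure ⟨i, hi, rfl⟩
      have ihx' : ℓ (x' * w * d) = ℓ x' + ℓ w + ℓ d := ih x' hx' (by omega)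
      have hassoc : s i * x' * w * d = s i * (x' * w * d) := by group
      rcases cs.length_simple_mul (x' * w * d) i with h | h
      · rw [hassoc, h, ihx', hlx]; omega
      · exfalso
        have hlt : ℓ (s i * (x' * w * d)) < ℓ (x' * w * d) := by
          have hne := cs.length_simple_mul_ne (x' * w * d) i
          omega
        obtain ⟨α, hα1, hα2, hα3⟩ := exists_reduced_word_subset cs I x' hx'
        obtain ⟨β, hβ1, hβ2⟩ := cs.exists_reduced_word' w
        obtain ⟨δ, hδ1, hδ2, hδ3⟩ := exists_reduced_word_subset cs J d hdJ
        have hαl : α.length = ℓ x' := by rw [← hα1, ← hα3]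
        have hβl : β.length = ℓ w := by rw [← hβ1, ← hβ2]
        have hδl : δ.length = ℓ d := by rw [← hδ1, ← hδ3]
        have hπ : π (α ++ β ++ δ) = x' * w * d := by
          rw [cs.wordProd_append, cs.wordProd_append, ← hα3, ← hβ2, ← hδ3]
        have hred : cs.IsReduced (α ++ β ++ δ) := by
          show ℓ (π (α ++ β ++ δ)) = _
          rw [hπ, List.length_append, List.length_append, ihx', hαl, hβl, hδl]
        obtain ⟨k, hk, hek⟩ := left_exchange cs hred (by rw [hπ]; exact hlt)
        rw [List.length_append, List.length_append] at hk
        rw [hπ] at hek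
        by_cases hkα : k < α.length
        · rw [List.eraseIdx_append_of_lt_length (by rw [List.length_append]; omega),
            List.eraseIdx_append_of_lt_length hkα] at hek
          have h5 : s i * x' = π (α.eraseIdx k) := by
            have h6 : s i * (x' * w * d) = π (α.eraseIdx k) * w * d := by
              rw [hek, cs.wordProd_append, cs.wordProd_append, ← hβ2, ← hδ3]
            have h7 : (s i * x') * w * d = π (α.eraseIdx k) * w * d := by
              rw [← h6]; group
            exact mul_right_cancel (mul_right_cancel h7)
          have hle : ℓ (s i * x') ≤ (α.eraseIdx k).length := by
            rw [h5]; exact cs.length_wordProd_le _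
          rw [List.length_eraseIdx_of_lt hkα] at hle
          have h7 : ℓ (s i * x') = ℓ x' + 1 := hlx
          omega
        · push_neg at hkα
          by_cases hkβ : k < α.length + β.length
          · rw [List.eraseIdx_append_of_lt_length (by rw [List.length_append]; omega),
              List.eraseIdx_append_of_length_le hkα] at hek
            have h5 : (x'⁻¹ * s i * x') * w = π (β.eraseIdx (k - α.length)) := by
              have h6 : s i * (x' * w * d) = x' * π (β.eraseIdx (k - α.length)) * d := by
                rw [hek, cs.wordProd_append, cs.wordProd_append, ← hα3, ← hδ3]
              have h7 : π (β.eraseIdx (k - α.length)) =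
                  x'⁻¹ * (s i * (x' * w * d)) * d⁻¹ := by
                rw [h6]; group
              rw [h7]; group
            have hle : ℓ ((x'⁻¹ * s i * x') * w) ≤ (β.eraseIdx (k - α.length)).length := by
              rw [h5]; exact cs.length_wordProd_le _
            rw [List.length_eraseIdx_of_lt (by omega)] at hle
            have hmem : x'⁻¹ * s i * x' ∈ Subgroup.closure (cs.simple '' I) :=
              mul_mem (mul_mem (inv_mem hx') hsimem) hx'
            have := hminL _ hmem
            omega
          · push_neg at hkβ
            rw [List.eraseIdx_append_of_length_le (by rw [List.length_append]; omega)] at hek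
            set m := k - (α ++ β).length with hm
            rw [List.length_append] at hm
            have hmδ : m < δ.length := by omega
            have hd''J : π (δ.eraseIdx m) ∈ Subgroup.closure (cs.simple '' J) :=
              wordProd_mem_closure cs (fun b hb => hδ2 b (List.mem_of_mem_eraseIdx hb))
            have h6 : s i * (x' * w * d) = x' * w * π (δ.eraseIdx m) := by
              rw [hek, cs.wordProd_append, cs.wordProd_append, ← hα3, ← hβ2]
            have hlen'' : ℓ (π (δ.eraseIdx m)) ≤ δ.length - 1 := by
              have := cs.length_wordProd_le (δ.eraseIdx m)
              rw [List.length_eraseIdx_of_lt hmδ] at this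
              exact this
            set g := π (δ.eraseIdx m) * d⁻¹ with hg
            have hgJ : g ∈ Subgroup.closure (cs.simple '' J) :=
              mul_mem hd''J (inv_mem hdJ)
            have hgconj : w * g * w⁻¹ = x'⁻¹ * s i * x' := by
              have h7 : π (δ.eraseIdx m) = (x' * w)⁻¹ * (s i * (x' * w * d)) := by
                rw [h6]; group
              rw [hg, h7]; group
            have hgI : w * g * w⁻¹ ∈ Subgroup.closure (cs.simple '' I) := by
              rw [hgconj]
              exact mul_mem (mul_mem (inv_mem hx') hsimem) hx'
            have hgK := kilmoyer cs I J w hw g hgJ hgI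
            have h8 : ℓ (g * d) = ℓ g + ℓ d := hdadd g hgK
            have h9 : g * d = π (δ.eraseIdx m) := by rw [hg]; group
            rw [h9] at h8
            omega

end Statement5Aux

end Statement5AuxScope

open Statement5Aux in
/-- Theorem 2.1 of the paper, Coxeter-combinatorial form. Let `(W,S)` be a
Coxeter system with a positive weight function `q_s` constant on generators joined by odd
bonds (so that `q_w`, the product of the `q_s` over a reduced expression of `w`, is well
defined), and let `I, J ⊆ S` with `W_I, W_J` finite. If `w` is the minimal length
representative of `W_I w W_J` then
`Σ_{z ∈ W_I w W_J} q_z = N(I) · q_w · N(J) / N(J ∩ w⁻¹ I w)`,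
where `N(K) = Σ_{v ∈ W_K} q_v` and `J ∩ w⁻¹Iw = {t ∈ J : w t w⁻¹ ∈ I}`. -/
theorem statement5 {B W : Type*} [Group W] {M : CoxeterMatrix B} (cs : CoxeterSystem M W)
    (q : B → ℝ) (hqpos : ∀ i, 0 < q i)
    (hqodd : ∀ i j : B, Odd (M i j) → q i = q j)
    -- `Q` is the multiplicative extension of `q` along reduced words
    (Q : W → ℝ) (hQ : ∀ ω : List B, cs.IsReduced ω → Q (cs.wordProd ω) = (ω.map q).prod)
    (I J : Set B) (w : W)
    (WI WJ WK : Subgroup W)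
    (hWI : WI = Subgroup.closure (cs.simple '' I))
    (hWJ : WJ = Subgroup.closure (cs.simple '' J))
    -- `WK` is the standard parabolic on `J ∩ w⁻¹ I w`
    (hWK : WK = Subgroup.closure
      {t | t ∈ cs.simple '' J ∧ w * t * w⁻¹ ∈ cs.simple '' I})
    -- `I` and `J` are spherical
    (hIfin : (WI : Set W).Finite) (hJfin : (WJ : Set W).Finite)
    -- `w` is the minimal length representative of `W_I w W_J`
    (hw : ∀ x ∈ WI, ∀ y ∈ WJ, cs.length w ≤ cs.length (x * w * y))
    (N : Set W → ℝ) (hN : ∀ K : Set W, N K = ∑ᶠ v ∈ K, Q v) :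
    (∑ᶠ z ∈ {z : W | ∃ x ∈ WI, ∃ y ∈ WJ, z = x * w * y}, Q z) =
      N (WI : Set W) * Q w * N (WJ : Set W) / N (WK : Set W) := by
  classical
  subst hWI hWJ hWK
  set WI := Subgroup.closure (cs.simple '' I) with hWI
  set WJ := Subgroup.closure (cs.simple '' J) with hWJ
  set WK := Subgroup.closure
    {t : W | t ∈ cs.simple '' J ∧ w * t * w⁻¹ ∈ cs.simple '' I} with hWK
  -- basic facts about Q
  have Qpos : ∀ v : W, 0 < Q v := by
    intro v
    obtain ⟨ω, h1, h2⟩ := cs.exists_reduced_word' v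
    rw [h2, hQ ω h1]
    apply List.prod_pos
    intro x hx
    obtain ⟨b, _, rfl⟩ := List.mem_map.mp hx
    exact hqpos b
  have Qmul : ∀ u v : W, cs.length (u * v) = cs.length u + cs.length v →
      Q (u * v) = Q u * Q v := by
    intro u v hlen
    obtain ⟨ωu, hu1, hu2⟩ := cs.exists_reduced_word' u
    obtain ⟨ωv, hv1, hv2⟩ := cs.exists_reduced_word' v
    have hπ : cs.wordProd (ωu ++ ωv) = u * v := by
      rw [cs.wordProd_append, ← hu2, ← hv2]
    have hred : cs.IsReduced (ωu ++ ωv) := by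
      show cs.length (cs.wordProd (ωu ++ ωv)) = _
      rw [hπ, hlen, List.length_append, ← hu1, ← hv1, hu2, hv2]
    have h1 := hQ (ωu ++ ωv) hred
    rw [hπ] at h1
    rw [h1, List.map_append, List.prod_append, ← hQ ωu hu1, ← hQ ωv hv1, hu2, hv2]
  -- subgroup inclusions
  have hKsubJ : WK ≤ WJ := by
    rw [hWK]
    apply (Subgroup.closure_le _).mpr
    intro t ht
    exact Subgroup.subset_closure ht.1
  -- the index set of `WK` as a subset of `B`
  have hset : cs.simple '' {b : B | cs.simple b ∈ cs.simple '' J ∧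
      w * cs.simple b * w⁻¹ ∈ cs.simple '' I}
      = {t : W | t ∈ cs.simple '' J ∧ w * t * w⁻¹ ∈ cs.simple '' I} := by
    ext t
    constructor
    · rintro ⟨b, ⟨hb1, hb2⟩, rfl⟩
      exact ⟨hb1, hb2⟩
    · rintro ⟨ht1, ht2⟩
      obtain ⟨c, hc, hct⟩ := ht1
      refine ⟨c, ⟨⟨c, hc, rfl⟩, ?_⟩, hct⟩
      rw [hct]
      exact ht2
  -- the set of distinguished coset representatives
  set D : Set W := {dd : W | dd ∈ WJ ∧
    ∀ k ∈ WK, cs.length (k * dd) = cs.length k + cs.length dd} with hD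
  -- decomposition of WJ
  have hdecomp : ∀ y ∈ WJ, ∃ k ∈ WK, ∃ dd ∈ D, y = k * dd := by
    intro y hy
    set S : Set W := {z : W | ∃ k ∈ WK, z = k * y} with hS
    have hySmem : y ∈ S := ⟨1, one_mem _, (one_mul y).symm⟩
    have hTne : (cs.length '' S).Nonempty := ⟨cs.length y, Set.mem_image_of_mem _ hySmem⟩
    obtain ⟨dd, hddS, hddlen⟩ := Nat.sInf_mem hTne
    obtain ⟨k₁, hk₁, hddeq⟩ := hddS
    have hmin : ∀ z ∈ S, cs.length dd ≤ cs.length z := by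
      intro z hz
      rw [hddlen]
      exact Nat.sInf_le (Set.mem_image_of_mem _ hz)
    have hadd : ∀ k ∈ WK, cs.length (k * dd) = cs.length k + cs.length dd := by
      have := length_add_of_min cs {b : B | cs.simple b ∈ cs.simple '' J ∧
        w * cs.simple b * w⁻¹ ∈ cs.simple '' I} dd ?_
      · intro k hk
        apply this
        rw [hset]
        exact hk
      · intro k hk
        rw [hset] at hk
        apply hmin
        exact ⟨k * k₁, mul_mem hk hk₁, by rw [hddeq]; group⟩
    have hddJ : dd ∈ WJ := by
      rw [hddeq]
      exact mul_mem (hKsubJ hk₁) hy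
    exact ⟨k₁⁻¹, inv_mem hk₁, dd, ⟨hddJ, hadd⟩, by rw [hddeq]; group⟩
  -- uniqueness of the decomposition
  have huniq : ∀ k ∈ WK, ∀ dd ∈ D, ∀ k' ∈ WK, ∀ dd' ∈ D,
      k * dd = k' * dd' → k = k' ∧ dd = dd' := by
    intro k hk dd hdd k' hk' dd' hdd' heq
    have hg : dd' = (k'⁻¹ * k) * dd := by
      rw [show k'⁻¹ * k * dd = k'⁻¹ * (k * dd) by group, heq]; group
    have hgK : k'⁻¹ * k ∈ WK := mul_mem (inv_mem hk') hk
    have l1 : cs.length dd' = cs.length (k'⁻¹ * k) + cs.length dd := by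
      rw [hg]; exact hdd.2 _ hgK
    have hg' : dd = (k'⁻¹ * k)⁻¹ * dd' := by rw [hg]; group
    have l2 : cs.length dd = cs.length (k'⁻¹ * k)⁻¹ + cs.length dd' := by
      rw [hg']
      exact hdd'.2 _ (inv_mem hgK)
    have hgone : k'⁻¹ * k = 1 := by
      apply cs.length_eq_zero_iff.mp
      omega
    constructor
    · exact (inv_mul_eq_one.mp hgone).symm
    · rw [hg, hgone, one_mul]
  -- conjugation of WK into WI
  have hconjWK : ∀ k ∈ WK, w * k * w⁻¹ ∈ WI := by
    intro k hk
    rw [hWK] at hk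
    induction hk using Subgroup.closure_induction with
    | mem t ht => exact Subgroup.subset_closure ht.2
    | one => simpa using one_mem WI
    | mul a b _ _ iha ihb =>
        have : w * (a * b) * w⁻¹ = (w * a * w⁻¹) * (w * b * w⁻¹) := by group
        rw [this]
        exact mul_mem iha ihb
    | inv a _ iha =>
        have : w * a⁻¹ * w⁻¹ = (w * a * w⁻¹)⁻¹ := by group
        rw [this]
        exact inv_mem iha
  have hKilm := kilmoyer cs I J w hw
  have hminL : ∀ x ∈ WI, cs.length w ≤ cs.length (x * w) := by
    intro x hx; simpa using hw x hx 1 (one_mem _)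
  have hAdd := length_add_of_min cs I w hminL
  have hE : ∀ dd ∈ D, ∀ x ∈ WI, cs.length (x * w * dd)
      = cs.length x + cs.length w + cs.length dd := by
    intro dd hdd
    exact length_xwd cs I J w hw dd hdd.1 hdd.2
  -- injectivity of (x, d) ↦ x * w * d
  have hCuniq : ∀ x ∈ WI, ∀ dd ∈ D, ∀ x' ∈ WI, ∀ dd' ∈ D,
      x * w * dd = x' * w * dd' → x = x' ∧ dd = dd' := by
    intro x hx dd hdd x' hx' dd' hdd' heq
    set g := dd' * dd⁻¹ with hgdef
    have hgJ : g ∈ WJ := mul_mem hdd'.1 (inv_mem hdd.1)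
    have hgconj : w * g * w⁻¹ = x'⁻¹ * x := by
      have h1 : x' * w * dd' = x * w * dd := heq.symm
      have h2 : w * dd' = x'⁻¹ * (x * w * dd) := by rw [← h1]; group
      rw [hgdef]
      calc w * (dd' * dd⁻¹) * w⁻¹ = (w * dd') * (dd⁻¹ * w⁻¹) := by group
        _ = (x'⁻¹ * (x * w * dd)) * (dd⁻¹ * w⁻¹) := by rw [h2]
        _ = x'⁻¹ * x := by group
    have hgI : w * g * w⁻¹ ∈ WI := by
      rw [hgconj]; exact mul_mem (inv_mem hx') hx
    have hgK : g ∈ WK := hKilm g hgJ hgI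
    have hg : dd' = g * dd := by rw [hgdef]; group
    have l1 : cs.length dd' = cs.length g + cs.length dd := by
      rw [hg]; exact hdd.2 _ hgK
    have hg' : dd = g⁻¹ * dd' := by rw [hgdef]; group
    have l2 : cs.length dd = cs.length g⁻¹ + cs.length dd' := by
      rw [hg']; exact hdd'.2 _ (inv_mem hgK)
    have hgone : g = 1 := by
      apply cs.length_eq_zero_iff.mp
      omega
    have hddeq : dd = dd' := by rw [hg, hgone, one_mul]
    refine ⟨?_, hddeq⟩
    subst hddeq
    exact mul_right_cancel (mul_right_cancel heq)
  -- surjectivity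
  have hCsurj : ∀ z ∈ {z : W | ∃ x ∈ WI, ∃ y ∈ WJ, z = x * w * y},
      ∃ x ∈ WI, ∃ dd ∈ D, z = x * w * dd := by
    rintro z ⟨x, hx, y, hy, rfl⟩
    obtain ⟨k, hk, dd, hdd, rfl⟩ := hdecomp y hy
    refine ⟨x * (w * k * w⁻¹), mul_mem hx (hconjWK k hk), dd, hdd, by group⟩
  -- finiteness
  have hKfin : (WK : Set W).Finite := hJfin.subset (fun z hz => hKsubJ hz)
  have hDfin : D.Finite := hJfin.subset (fun z hz => hz.1)
  have hCfin : {z : W | ∃ x ∈ WI, ∃ y ∈ WJ, z = x * w * y}.Finite := by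
    have : {z : W | ∃ x ∈ WI, ∃ y ∈ WJ, z = x * w * y}
        = Set.image2 (fun x y => x * w * y) (WI : Set W) (WJ : Set W) := by
      ext z
      simp only [Set.mem_image2, Set.mem_setOf_eq, SetLike.mem_coe]
      constructor
      · rintro ⟨x, hx, y, hy, rfl⟩; exact ⟨x, hx, y, hy, rfl⟩
      · rintro ⟨x, hx, y, hy, rfl⟩; exact ⟨x, hx, y, hy, rfl⟩
    rw [this]
    exact hIfin.image2 _ hJfin
  -- convert finsums to finset sums
  rw [hN, hN, hN]
  rw [← hCfin.coe_toFinset, finsum_mem_coe_finset,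
    ← hIfin.coe_toFinset, finsum_mem_coe_finset,
    ← hJfin.coe_toFinset, finsum_mem_coe_finset,
    ← hKfin.coe_toFinset, finsum_mem_coe_finset]
  set FI := hIfin.toFinset
  set FJ := hJfin.toFinset
  set FK := hKfin.toFinset
  set FD := hDfin.toFinset
  set FC := hCfin.toFinset
  -- sum over the double coset
  have key1 : ∑ p ∈ FI ×ˢ FD, Q (p.1 * w * p.2) = ∑ z ∈ FC, Q z := by
    apply Finset.sum_bij (fun p _ => p.1 * w * p.2)
    · intro p hp
      rw [Finset.mem_product] at hp
      have hp1 : p.1 ∈ (WI : Set W) := by simpa [FI] using hp.1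
      have hp2 : p.2 ∈ D := by simpa [FD] using hp.2
      simp only [FC, Set.Finite.mem_toFinset]
      exact ⟨p.1, hp1, p.2, hp2.1, rfl⟩
    · intro p₁ hp₁ p₂ hp₂ hpe
      rw [Finset.mem_product] at hp₁ hp₂
      have h1 : p₁.1 ∈ (WI : Set W) := by simpa [FI] using hp₁.1
      have h2 : p₁.2 ∈ D := by simpa [FD] using hp₁.2
      have h3 : p₂.1 ∈ (WI : Set W) := by simpa [FI] using hp₂.1
      have h4 : p₂.2 ∈ D := by simpa [FD] using hp₂.2
      obtain ⟨e1, e2⟩ := hCuniq p₁.1 h1 p₁.2 h2 p₂.1 h3 p₂.2 h4 hpe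
      exact Prod.ext e1 e2
    · intro z hz
      rw [Set.Finite.mem_toFinset] at hz
      obtain ⟨x, hx, dd, hdd, rfl⟩ := hCsurj z hz
      refine ⟨(x, dd), ?_, rfl⟩
      rw [Finset.mem_product]
      exact ⟨by simpa [FI] using hx, by simpa [FD] using hdd⟩
    · intro p hp
      rfl
  have key2 : ∑ p ∈ FI ×ˢ FD, Q (p.1 * w * p.2)
      = (∑ x ∈ FI, Q x) * Q w * (∑ dd ∈ FD, Q dd) := by
    have hterm : ∀ p ∈ FI ×ˢ FD, Q (p.1 * w * p.2) = Q p.1 * Q w * Q p.2 := by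
      intro p hp
      rw [Finset.mem_product] at hp
      have hp1 : p.1 ∈ (WI : Set W) := by simpa [FI] using hp.1
      have hp2 : p.2 ∈ D := by simpa [FD] using hp.2
      have hxw : cs.length (p.1 * w) = cs.length p.1 + cs.length w := hAdd p.1 hp1
      have htot := hE p.2 hp2 p.1 hp1
      have h1 : Q (p.1 * w * p.2) = Q (p.1 * w) * Q p.2 := by
        apply Qmul
        rw [htot, hxw]
      have h2 : Q (p.1 * w) = Q p.1 * Q w := Qmul _ _ hxw
      rw [h1, h2]
    rw [Finset.sum_congr rfl hterm, Finset.sum_product]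
    simp only [← Finset.mul_sum]
    rw [← Finset.sum_mul, ← Finset.sum_mul]
  -- sum over WJ
  have key3' : ∑ p ∈ FK ×ˢ FD, Q p.1 * Q p.2 = ∑ y ∈ FJ, Q y := by
    apply Finset.sum_bij (fun (p : W × W) (_ : p ∈ FK ×ˢ FD) => p.1 * p.2)
    · intro p hp
      rw [Finset.mem_product] at hp
      have hp1 : p.1 ∈ (WK : Set W) := by simpa [FK] using hp.1
      have hp2 : p.2 ∈ D := by simpa [FD] using hp.2
      simp only [FJ, Set.Finite.mem_toFinset]
      exact mul_mem (hKsubJ hp1) hp2.1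
    · intro p₁ hp₁ p₂ hp₂ hpe
      rw [Finset.mem_product] at hp₁ hp₂
      have h1 : p₁.1 ∈ (WK : Set W) := by simpa [FK] using hp₁.1
      have h2 : p₁.2 ∈ D := by simpa [FD] using hp₁.2
      have h3 : p₂.1 ∈ (WK : Set W) := by simpa [FK] using hp₂.1
      have h4 : p₂.2 ∈ D := by simpa [FD] using hp₂.2
      obtain ⟨e1, e2⟩ := huniq p₁.1 h1 p₁.2 h2 p₂.1 h3 p₂.2 h4 hpe
      exact Prod.ext e1 e2
    · intro y hy
      rw [Set.Finite.mem_toFinset] at hy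
      obtain ⟨k, hk, dd, hdd, rfl⟩ := hdecomp y hy
      refine ⟨(k, dd), ?_, rfl⟩
      rw [Finset.mem_product]
      exact ⟨by simpa [FK] using hk, by simpa [FD] using hdd⟩
    · intro p hp
      rw [Finset.mem_product] at hp
      have hp1 : p.1 ∈ (WK : Set W) := by simpa [FK] using hp.1
      have hp2 : p.2 ∈ D := by simpa [FD] using hp.2
      exact (Qmul p.1 p.2 (hp2.2 p.1 hp1)).symm
  have key3 : ∑ y ∈ FJ, Q y = (∑ k ∈ FK, Q k) * (∑ dd ∈ FD, Q dd) := by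
    rw [Finset.sum_mul_sum, ← Finset.sum_product']
    exact key3'.symm
  -- positivity of the WK sum
  have hKpos : 0 < ∑ k ∈ FK, Q k := by
    apply Finset.sum_pos (fun k _ => Qpos k)
    exact ⟨1, by simpa [FK] using one_mem WK⟩
  rw [← key1, key2, key3]
  field_simp
end

section
/- Let X be a regular locally finite building of type (W,S), I spherical, J ⊆ S, A a simplex of cotype I, and w an (I,J)-reduced element. Then the number of cotype-J simplices B with δ(A,B) = w is N(I)·q_w / N(I ∩ wJw⁻¹), where N(K) = Σ_{v∈W_K} q_v. -/
namespace St13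
open CoxeterSystem List

variable {B W : Type*} [Group W] {M : CoxeterMatrix B} (cs : CoxeterSystem M W)

noncomputable local instance : DecidableEq W := Classical.decEq W

local prefix:100 "s" => cs.simple
local prefix:100 "π" => cs.wordProd
local prefix:100 "ℓ" => cs.length
local prefix:100 "ris" => cs.rightInvSeq
local prefix:100 "lis" => cs.leftInvSeq

/-- The sign-flipping map used for the exchange property. -/
noncomputable def myF (i : B) : (W × ℤˣ) → (W × ℤˣ) :=
  fun p => (s i * p.1 * s i, if p.1 = s i then -p.2 else p.2)

theorem myF_involutive (i : B) : Function.Involutive (myF cs i) := by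
  intro ⟨t, ε⟩
  simp only [myF]
  have h1 : s i * (s i * t * s i) * s i = t := by
    simp [← mul_assoc]
  have h2 : (s i * t * s i = s i) ↔ (t = s i) := by
    constructor
    · intro h
      have := congrArg (fun x => s i * x * s i) h
      simpa [← mul_assoc] using this
    · rintro rfl; simp
  rcases em (t = s i) with h | h
  · simp [h, h2, h1]
  · simp [h, h2, h1]

/-- The permutation. -/
noncomputable def myP (i : B) : Equiv.Perm (W × ℤˣ) := (myF_involutive cs i).toPerm

theorem myP_apply (i : B) (p : W × ℤˣ) :
    myP cs i p = (s i * p.1 * s i, if p.1 = s i then -p.2 else p.2) := rfl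

/-- Evaluation of a product of the `myP` along a word. -/
theorem prod_myP_apply (ω : List B) (t : W) (ε : ℤˣ) :
    (ω.map (myP cs)).prod (t, ε)
      = (π ω * t * (π ω)⁻¹, (-1 : ℤˣ) ^ ((ris ω).count t) * ε) := by
  induction ω using List.reverseRecOn generalizing t ε with
  | nil => simp
  | append_singleton ω j ih =>
    rw [← List.concat_eq_append, List.map_concat, List.prod_concat]
    have hcnt : (ris (ω.concat j)).count t
        = (ris ω).count (s j * t * s j) + (if t = s j then 1 else 0) := by
      rw [cs.rightInvSeq_concat, List.concat_eq_append, List.count_append]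
      congr 1
      · have hinj : Function.Injective (MulAut.conj (s j) : W → W) :=
          (MulAut.conj (s j)).injective
        have ht : t = (MulAut.conj (s j)) (s j * t * s j) := by
          simp [MulAut.conj_apply, ← mul_assoc]
        conv_lhs => rw [ht]
        rw [List.count_map_of_injective _ _ hinj]
      · rcases em (t = s j) with h | h <;>
          simp [List.count_singleton, h, eq_comm]
    rw [hcnt]
    simp only [Equiv.Perm.mul_apply, myP_apply]
    rw [ih]
    rw [List.concat_eq_append, cs.wordProd_append]
    have hsss : s j * s j * s j = s j := by simp
    rcases em (t = s j) with h | h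
    · subst h
      simp only [if_pos rfl, if_pos trivial, wordProd_singleton, Prod.mk.injEq, hsss]
      constructor
      · simp [mul_assoc]
      · rw [pow_succ, mul_assoc, neg_one_mul]
    · simp only [if_neg h, wordProd_singleton, Prod.mk.injEq, add_zero]
      constructor
      · simp [mul_assoc]
      · trivial


section Alt

variable (i i' : B)

theorem alt_cons (n : ℕ) :
    π (alternatingWord i i' (n+1)) = s (if Even n then i' else i) * π (alternatingWord i i' n) := by
  rw [alternatingWord_succ', wordProd_cons]

theorem alt_concat (p : ℕ) :
    π (alternatingWord i i' (p+1)) = π (alternatingWord i' i p) * s i' := by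
  rw [alternatingWord_succ, ← wordProd_concat]

theorem alt_swap (hm : M i i' ≠ 0) :
    π (alternatingWord i i' (M i i')) = π (alternatingWord i' i (M i i')) := by
  have h := cs.prod_alternatingWord_eq_prod_alternatingWord_sub i i' (M i i') (by omega)
  rwa [show M i i' * 2 - M i i' = M i i' by omega] at h

theorem alt_four (hm : M i i' ≠ 0) (n : ℕ) :
    s (if Even (n + M i i') then i' else i) * π (alternatingWord i i' (M i i'))
      * s (if Even n then i' else i) = π (alternatingWord i i' (M i i')) := by
  have hAm := alt_swap cs i i' hm
  obtain ⟨p, hmp⟩ : ∃ p, M i i' = p + 1 := ⟨M i i' - 1, by omega⟩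
  rw [hmp] at hAm ⊢
  have hcA : π (alternatingWord i i' (p+1)) * s i' = π (alternatingWord i' i p) := by
    rw [alt_concat cs i i' p]; simp
  have hcB : π (alternatingWord i i' (p+1)) * s i = π (alternatingWord i i' p) := by
    rw [hAm, alt_concat cs i' i p]; simp
  rcases Nat.even_or_odd (p+1) with hEm | hOm <;>
    rcases Nat.even_or_odd n with hEn | hOn
  · have hp : ¬ Even p := by simp only [Nat.even_iff] at hEm ⊢; omega
    rw [if_pos (hEn.add hEm), if_pos hEn, mul_assoc, hcA]
    have : s i' * π (alternatingWord i' i p) = π (alternatingWord i' i (p+1)) := by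
      rw [alt_cons cs i' i p, if_neg hp]
    rw [this]; exact hAm.symm
  · have hp : ¬ Even p := by simp only [Nat.even_iff] at hEm ⊢; omega
    rw [if_neg (by simp only [Nat.even_iff, Nat.odd_iff] at hEm hOn ⊢; omega : ¬ Even (n + (p+1))),
      if_neg (by simp only [Nat.odd_iff] at hOn; simp only [Nat.even_iff]; omega : ¬ Even n),
      mul_assoc, hcB]
    rw [alt_cons cs i i' p, if_neg hp]
  · have hp : Even p := by simp only [Nat.odd_iff] at hOm; simp only [Nat.even_iff]; omega
    rw [if_neg (by simp only [Nat.even_iff, Nat.odd_iff] at hOm hEn ⊢; omega : ¬ Even (n + (p+1))),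
      if_pos hEn, mul_assoc, hcA]
    have : s i * π (alternatingWord i' i p) = π (alternatingWord i' i (p+1)) := by
      rw [alt_cons cs i' i p, if_pos hp]
    rw [this]; exact hAm.symm
  · have hp : Even p := by simp only [Nat.odd_iff] at hOm; simp only [Nat.even_iff]; omega
    rw [if_pos (by simp only [Nat.even_iff, Nat.odd_iff] at hOm hOn ⊢; omega : Even (n + (p+1))),
      if_neg (by simp only [Nat.odd_iff] at hOn; simp only [Nat.even_iff]; omega : ¬ Even n),
      mul_assoc, hcB]
    rw [alt_cons cs i i' p, if_pos hp]

theorem alt_periodic (hm : M i i' ≠ 0) (n : ℕ) :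
    π (alternatingWord i i' (n + M i i'))
      = π (alternatingWord i i' (M i i')) * π (alternatingWord i i' n) := by
  induction n with
  | zero => simp [alternatingWord]
  | succ n ih =>
    have : n + 1 + M i i' = (n + M i i') + 1 := by omega
    rw [this, alt_cons, ih, alt_cons cs i i' n]
    have h4 := alt_four cs i i' hm n
    have : s (if Even (n + M i i') then i' else i) * π (alternatingWord i i' (M i i'))
        = π (alternatingWord i i' (M i i')) * s (if Even n then i' else i) := by
      calc s (if Even (n + M i i') then i' else i) * π (alternatingWord i i' (M i i'))
          = (s (if Even (n + M i i') then i' else i) * π (alternatingWord i i' (M i i'))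
              * s (if Even n then i' else i)) * s (if Even n then i' else i) := by
            rcases em (Even n) with h | h <;> simp [h]
        _ = _ := by rw [h4]
    rw [← mul_assoc, this, mul_assoc]

/-- The right inversion sequence of an alternating word, entry by entry. -/
theorem ris_alt (N : ℕ) :
    cs.rightInvSeq (alternatingWord i i' N)
      = ((List.range N).reverse).map
          (fun k => (π (alternatingWord i i' k))⁻¹ * π (alternatingWord i i' (k+1))) := by
  induction N with
  | zero => simp [alternatingWord]
  | succ N ih =>
    rw [alternatingWord_succ']
    show (π (alternatingWord i i' N))⁻¹ * s (if Even N then i' else i)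
        * π (alternatingWord i i' N) :: cs.rightInvSeq (alternatingWord i i' N) = _
    rw [List.range_succ, List.reverse_append, List.reverse_singleton, List.singleton_append,
      List.map_cons, ih]
    congr 1
    rw [alt_cons cs i i' N]
    group
end Alt

section Exchange

theorem count_ris_alt_even (i i' : B) (hm : M i i' ≠ 0) (t : W) :
    Even ((cs.rightInvSeq (alternatingWord i i' (2 * M i i'))).count t) := by
  have h2m : 2 * M i i' = M i i' + M i i' := by omega
  have hg : ∀ k, (fun k => (π (alternatingWord i i' k))⁻¹ * π (alternatingWord i i' (k+1)))
      (M i i' + k)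
      = (fun k => (π (alternatingWord i i' k))⁻¹ * π (alternatingWord i i' (k+1))) k := by
    intro k
    have p1 : π (alternatingWord i i' (M i i' + k))
        = π (alternatingWord i i' (M i i')) * π (alternatingWord i i' k) := by
      rw [add_comm]; exact alt_periodic cs i i' hm k
    have p2 : π (alternatingWord i i' (M i i' + k + 1))
        = π (alternatingWord i i' (M i i')) * π (alternatingWord i i' (k + 1)) := by
      rw [show M i i' + k + 1 = (k + 1) + M i i' by omega]
      exact alt_periodic cs i i' hm (k + 1)
    simp only [p1, p2, mul_inv_rev, mul_assoc, inv_mul_cancel_left]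
  rw [ris_alt, List.map_reverse, List.count_reverse, h2m, List.range_add, List.map_append,
    List.count_append, List.map_map]
  have hmapeq : List.map
      ((fun k => (π (alternatingWord i i' k))⁻¹ * π (alternatingWord i i' (k+1)))
        ∘ (fun x => M i i' + x)) (List.range (M i i'))
      = List.map (fun k => (π (alternatingWord i i' k))⁻¹ * π (alternatingWord i i' (k+1)))
        (List.range (M i i')) :=
    List.map_congr_left (fun k _ => hg k)
  rw [hmapeq]
  exact ⟨_, rfl⟩

theorem prod_myP_alt (i i' : B) (k : ℕ) :
    ((alternatingWord i i' (2 * k)).map (myP cs)).prod = (myP cs i * myP cs i') ^ k := by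
  induction k with
  | zero => simp [alternatingWord]
  | succ k ih =>
    have h1 : 2 * (k + 1) = (2 * k + 1) + 1 := by omega
    rw [h1, alternatingWord_succ', alternatingWord_succ',
      if_neg (by simp [Nat.even_iff] : ¬ Even (2 * k + 1)), if_pos (by simp [Nat.even_iff] :
        Even (2 * k)), List.map_cons, List.map_cons, List.prod_cons, List.prod_cons, ih,
      pow_succ', mul_assoc]

theorem myP_liftable : M.IsLiftable (myP cs) := by
  intro i i'
  rcases em (M i i' = 0) with h | h
  · rw [h, pow_zero]
  · refine Equiv.ext fun p => ?_
    obtain ⟨t, ε⟩ := p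
    have h1 : ((myP cs i * myP cs i') ^ M i i') (t, ε)
        = ((alternatingWord i i' (2 * M i i')).map (myP cs)).prod (t, ε) := by
      rw [prod_myP_alt]
    have hπ : π (alternatingWord i i' (2 * M i i')) = 1 := by
      rw [prod_alternatingWord_eq_mul_pow, if_pos (by simp [Nat.even_iff] : Even (2 * M i i')),
        one_mul, Nat.mul_div_cancel_left _ (by norm_num : 0 < 2), cs.simple_mul_simple_pow]
    rw [h1, prod_myP_apply, hπ, Even.neg_one_pow (count_ris_alt_even cs i i' h t)]
    simp

/-- The lifted homomorphism. -/
noncomputable def myφ : W →* Equiv.Perm (W × ℤˣ) := cs.lift ⟨myP cs, myP_liftable cs⟩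

theorem myφ_wordProd (ω : List B) : myφ cs (π ω) = (ω.map (myP cs)).prod := by
  induction ω with
  | nil => simp [myφ]
  | cons i ω ih =>
    rw [wordProd_cons, List.map_cons, List.prod_cons, map_mul, ih, myφ]
    rw [cs.lift_apply_simple]

theorem parity_invariance {ω ψ : List B} (h : π ω = π ψ) (t : W) :
    ((-1 : ℤˣ)) ^ ((cs.rightInvSeq ω).count t) = (-1 : ℤˣ) ^ ((cs.rightInvSeq ψ).count t) := by
  have e1 : (ω.map (myP cs)).prod (t, 1) = (ψ.map (myP cs)).prod (t, 1) := by
    rw [← myφ_wordProd, ← myφ_wordProd, h]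
  rw [prod_myP_apply, prod_myP_apply] at e1
  simpa using congrArg Prod.snd e1

theorem count_ris_concat_self (ψ : List B) (j : B) :
    (cs.rightInvSeq (ψ ++ [j])).count (s j) = (cs.rightInvSeq ψ).count (s j) + 1 := by
  rw [← List.concat_eq_append, rightInvSeq_concat, List.concat_eq_append, List.count_append]
  congr 1
  · have h2 : List.count ((MulAut.conj (s j)) (s j))
        (List.map (⇑(MulAut.conj (s j))) (cs.rightInvSeq ψ))
        = List.count (s j) (cs.rightInvSeq ψ) :=
      List.count_map_of_injective _ _ (MulAut.conj (s j)).injective _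
    simpa using h2
  · simp

theorem right_exchange_mem {ω : List B} {j : B} (hred : cs.IsReduced ω)
    (hlt : ℓ (π ω * s j) < ℓ (π ω)) : s j ∈ cs.rightInvSeq ω := by
  obtain ⟨ψ, hψred, hψ⟩ := cs.exists_reduced_word' (π ω * s j)
  have hprod : π (ψ ++ [j]) = π ω := by
    rw [wordProd_append, wordProd_singleton, ← hψ]; simp
  have hcnt := parity_invariance cs hprod (s j)
  rw [count_ris_concat_self] at hcnt
  by_contra hmem
  have h0 : (cs.rightInvSeq ω).count (s j) = 0 := List.count_eq_zero.mpr hmem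
  rw [h0, pow_zero] at hcnt
  have hodd : Odd ((cs.rightInvSeq ψ).count (s j)) := by
    by_contra he
    rw [Nat.not_odd_iff_even] at he
    rw [pow_succ, Even.neg_one_pow he, one_mul] at hcnt
    exact (by norm_num : ((-1 : ℤˣ)) ≠ 1) hcnt
  have hmemψ : s j ∈ cs.rightInvSeq ψ := by
    rw [← List.count_pos_iff]
    rcases hodd with ⟨c2, hc2⟩
    omega
  have := (cs.isRightInversion_of_mem_rightInvSeq hψred hmemψ).2
  rw [← hψ] at this
  simp only [mul_assoc, cs.simple_mul_simple_self, mul_one] at this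
  omega

theorem right_exchange {ω : List B} {j : B} (hred : cs.IsReduced ω)
    (hlt : ℓ (π ω * s j) < ℓ (π ω)) :
    ∃ k < ω.length, π ω * s j = π (ω.eraseIdx k) := by
  obtain ⟨k, hk, hget⟩ := List.mem_iff_getElem.mp (right_exchange_mem cs hred hlt)
  rw [cs.length_rightInvSeq] at hk
  refine ⟨k, hk, ?_⟩
  rw [← cs.wordProd_mul_getD_rightInvSeq ω k]
  congr 1
  rw [List.getD_eq_getElem _ 1 (by rw [cs.length_rightInvSeq]; exact hk)]
  exact hget.symm

theorem count_lis_cons_self (ψ : List B) (j : B) :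
    (cs.leftInvSeq (j :: ψ)).count (s j) = (cs.leftInvSeq ψ).count (s j) + 1 := by
  show (s j :: (cs.leftInvSeq ψ).map (MulAut.conj (s j))).count (s j) = _
  rw [List.count_cons_self]
  congr 1
  have h2 : List.count ((MulAut.conj (s j)) (s j))
      (List.map (⇑(MulAut.conj (s j))) (cs.leftInvSeq ψ))
      = List.count (s j) (cs.leftInvSeq ψ) :=
    List.count_map_of_injective _ _ (MulAut.conj (s j)).injective _
  simpa using h2

theorem parity_invariance_lis {ω ψ : List B} (h : π ω = π ψ) (t : W) :
    ((-1 : ℤˣ)) ^ ((cs.leftInvSeq ω).count t) = (-1 : ℤˣ) ^ ((cs.leftInvSeq ψ).count t) := by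
  have h' : π ω.reverse = π ψ.reverse := by
    rw [wordProd_reverse, wordProd_reverse, h]
  have := parity_invariance cs h' t
  rwa [cs.rightInvSeq_reverse, cs.rightInvSeq_reverse, List.count_reverse,
    List.count_reverse] at this

theorem left_exchange_mem {ω : List B} {j : B} (hred : cs.IsReduced ω)
    (hlt : ℓ (s j * π ω) < ℓ (π ω)) : s j ∈ cs.leftInvSeq ω := by
  obtain ⟨ψ, hψred, hψ⟩ := cs.exists_reduced_word' (s j * π ω)
  have hprod : π (j :: ψ) = π ω := by
    rw [wordProd_cons, ← hψ]; simp
  have hcnt := parity_invariance_lis cs hprod (s j)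
  rw [count_lis_cons_self] at hcnt
  by_contra hmem
  have h0 : (cs.leftInvSeq ω).count (s j) = 0 := List.count_eq_zero.mpr hmem
  rw [h0, pow_zero] at hcnt
  have hodd : Odd ((cs.leftInvSeq ψ).count (s j)) := by
    by_contra he
    rw [Nat.not_odd_iff_even] at he
    rw [pow_succ, Even.neg_one_pow he, one_mul] at hcnt
    exact (by norm_num : ((-1 : ℤˣ)) ≠ 1) hcnt
  have hmemψ : s j ∈ cs.leftInvSeq ψ := by
    rw [← List.count_pos_iff]
    rcases hodd with ⟨c2, hc2⟩
    omega
  have := (cs.isLeftInversion_of_mem_leftInvSeq hψred hmemψ).2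
  rw [← hψ, ← mul_assoc] at this
  simp only [cs.simple_mul_simple_self, one_mul] at this
  omega

theorem left_exchange {ω : List B} {j : B} (hred : cs.IsReduced ω)
    (hlt : ℓ (s j * π ω) < ℓ (π ω)) :
    ∃ k < ω.length, s j * π ω = π (ω.eraseIdx k) := by
  obtain ⟨k, hk, hget⟩ := List.mem_iff_getElem.mp (left_exchange_mem cs hred hlt)
  rw [cs.length_leftInvSeq] at hk
  refine ⟨k, hk, ?_⟩
  rw [← cs.getD_leftInvSeq_mul_wordProd ω k]
  congr 1
  rw [List.getD_eq_getElem _ 1 (by rw [cs.length_leftInvSeq]; exact hk)]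
  exact hget.symm

end Exchange

section Parabolic

theorem isReduced_nil : cs.IsReduced ([] : List B) := by
  simp [CoxeterSystem.IsReduced]

/-- Deletion: every word has a reduced subword with the same product. -/
theorem exists_reduced_subword (ψ : List B) :
    ∃ χ : List B, (∀ b ∈ χ, b ∈ ψ) ∧ cs.IsReduced χ ∧ π χ = π ψ := by
  have H : ∀ n (ψ : List B), ψ.length ≤ n →
      ∃ χ : List B, (∀ b ∈ χ, b ∈ ψ) ∧ cs.IsReduced χ ∧ π χ = π ψ := by
    intro n
    induction n with
    | zero =>
      intro ψ hψ
      rw [Nat.le_zero, List.length_eq_zero_iff] at hψ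
      exact ⟨ψ, fun b hb => hb, hψ ▸ isReduced_nil cs, rfl⟩
    | succ n ih =>
      intro ψ hψ
      by_cases hred : cs.IsReduced ψ
      · exact ⟨ψ, fun b hb => hb, hred, rfl⟩
      · classical
        have hψne : ψ ≠ [] := by
          rintro rfl; exact hred (isReduced_nil cs)
        have hψpos : 0 < ψ.length := List.length_pos_iff.mpr hψne
        have hex : ∃ j, ¬ cs.IsReduced (ψ.take (j+1)) := by
          refine ⟨ψ.length - 1, ?_⟩
          rw [show ψ.length - 1 + 1 = ψ.length by omega, List.take_length]
          exact hred
        set j := Nat.find hex with hjdef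
        have hfind : ¬ cs.IsReduced (ψ.take (j+1)) := Nat.find_spec hex
        have hjred : cs.IsReduced (ψ.take j) := by
          rcases Nat.eq_zero_or_pos j with h0 | h0
          · rw [h0, List.take_zero]; exact isReduced_nil cs
          · have := Nat.find_min hex (m := j - 1) (by omega)
            rw [not_not] at this
            rwa [show j - 1 + 1 = j by omega] at this
        have hjlt : j < ψ.length := by
          have h5 : ¬ cs.IsReduced (ψ.take ((ψ.length - 1) + 1)) := by
            rw [show ψ.length - 1 + 1 = ψ.length by omega, List.take_length]
            exact hred
          have := Nat.find_min' hex h5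
          omega
        have htake : ψ.take (j+1) = ψ.take j ++ [ψ[j]] := by
          rw [List.take_succ, List.getElem?_eq_getElem hjlt]
          rfl
        have hlentake : (ψ.take j).length = j := by
          rw [List.length_take]; omega
        have hlenu : ℓ (π (ψ.take j)) = j := by rw [hjred, hlentake]
        have hlt : ℓ (π (ψ.take j) * s (ψ[j])) < ℓ (π (ψ.take j)) := by
          rcases cs.length_mul_simple (π (ψ.take j)) (ψ[j]) with h | h
          · exfalso
            apply hfind
            show ℓ (π (ψ.take (j+1))) = (ψ.take (j+1)).length
            rw [htake, wordProd_append, wordProd_singleton, h, hlenu,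
              List.length_append, hlentake]
            simp
          · omega
        obtain ⟨k, hk, hkeq⟩ := right_exchange cs hjred hlt
        rw [hlentake] at hk
        set χ₀ := (ψ.take j).eraseIdx k ++ ψ.drop (j+1) with hχ₀
        have hlen₀ : χ₀.length ≤ n := by
          rw [hχ₀, List.length_append, List.length_eraseIdx_of_lt (by rwa [hlentake]),
            List.length_drop, hlentake]
          omega
        have hprod₀ : π χ₀ = π ψ := by
          rw [hχ₀, wordProd_append, ← hkeq]
          conv_rhs => rw [← List.take_append_drop (j+1) ψ]
          rw [wordProd_append, htake, wordProd_append, wordProd_singleton]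
        have hsub₀ : ∀ b ∈ χ₀, b ∈ ψ := by
          intro b hb
          rcases List.mem_append.mp hb with h | h
          · exact List.take_subset j ψ (List.eraseIdx_subset h)
          · exact List.drop_subset _ ψ h
        obtain ⟨χ, hχsub, hχred, hχprod⟩ := ih χ₀ hlen₀
        exact ⟨χ, fun b hb => hsub₀ b (hχsub b hb), hχred, by rw [hχprod, hprod₀]⟩
  exact H ψ.length ψ le_rfl

theorem exists_word_subset (X : Set B) (u : W)
    (hu : u ∈ Subgroup.closure (cs.simple '' X)) :
    ∃ ψ : List B, (∀ b ∈ ψ, b ∈ X) ∧ π ψ = u := by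
  induction hu using Subgroup.closure_induction with
  | mem x hx =>
    obtain ⟨j, hj, rfl⟩ := hx
    exact ⟨[j], by simpa using hj, by simp⟩
  | one => exact ⟨[], by simp, by simp⟩
  | mul x y _ _ ihx ihy =>
    obtain ⟨ψ₁, h1, e1⟩ := ihx
    obtain ⟨ψ₂, h2, e2⟩ := ihy
    exact ⟨ψ₁ ++ ψ₂, fun b hb => (List.mem_append.mp hb).elim (h1 b) (h2 b),
      by rw [wordProd_append, e1, e2]⟩
  | inv x _ ihx =>
    obtain ⟨ψ₁, h1, e1⟩ := ihx
    exact ⟨ψ₁.reverse, fun b hb => h1 b (List.mem_reverse.mp hb),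
      by rw [wordProd_reverse, e1]⟩

theorem exists_reduced_word_subset (X : Set B) (u : W)
    (hu : u ∈ Subgroup.closure (cs.simple '' X)) :
    ∃ ψ : List B, (∀ b ∈ ψ, b ∈ X) ∧ cs.IsReduced ψ ∧ π ψ = u := by
  obtain ⟨ψ₀, hψ₀, e₀⟩ := exists_word_subset cs X u hu
  obtain ⟨χ, hsub, hred, hprod⟩ := exists_reduced_subword cs ψ₀
  exact ⟨χ, fun b hb => hψ₀ b (hsub b hb), hred, by rw [hprod, e₀]⟩

theorem wordProd_mem_closure (X : Set B) (ψ : List B) (h : ∀ b ∈ ψ, b ∈ X) :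
    π ψ ∈ Subgroup.closure (cs.simple '' X) := by
  induction ψ with
  | nil => rw [wordProd_nil]; exact one_mem _
  | cons i ψ ih =>
    rw [wordProd_cons]
    exact mul_mem (Subgroup.subset_closure ⟨i, h i (by simp), rfl⟩)
      (ih (fun b hb => h b (by simp [hb])))

/-- Minimal coset representatives: lengths add on the right. -/
theorem length_add_right (X : Set B) (u : W)
    (hmin : ∀ y ∈ Subgroup.closure (cs.simple '' X), ℓ u ≤ ℓ (u * y)) :
    ∀ y ∈ Subgroup.closure (cs.simple '' X), ℓ (u * y) = ℓ u + ℓ y := by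
  have H : ∀ n, ∀ y ∈ Subgroup.closure (cs.simple '' X), ℓ y ≤ n →
      ℓ (u * y) = ℓ u + ℓ y := by
    intro n
    induction n with
    | zero =>
      intro y _ hy0
      have : y = 1 := cs.length_eq_zero_iff.mp (by omega)
      simp [this]
    | succ n ih =>
      intro y hy hylen
      rcases Nat.eq_zero_or_pos (ℓ y) with h0 | h0
      · have : y = 1 := cs.length_eq_zero_iff.mp h0
        simp [this]
      obtain ⟨ψ, hψX, hψred, hψprod⟩ := exists_reduced_word_subset cs X y hy
      rcases ψ.eq_nil_or_concat with rfl | ⟨χ, j, rfl⟩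
      · rw [wordProd_nil] at hψprod
        rw [← hψprod, cs.length_one] at h0
        omega
      have hχred : cs.IsReduced χ := by
        have := hψred.take χ.length
        rwa [List.concat_eq_append, List.take_left] at this
      have hχX : ∀ b ∈ χ, b ∈ X := fun b hb => hψX b (by
        rw [List.concat_eq_append]; exact List.mem_append.mpr (Or.inl hb))
      set y' := π χ with hy'
      have hy'mem : y' ∈ Subgroup.closure (cs.simple '' X) :=
        wordProd_mem_closure cs X χ hχX
      have hylen' : ℓ y = χ.length + 1 := by
        rw [← hψprod, hψred]; simp [List.concat_eq_append]
      have hy'len : ℓ y' = χ.length := hχred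
      have hyy' : y = y' * s j := by rw [← hψprod, wordProd_concat]
      have hih : ℓ (u * y') = ℓ u + ℓ y' := ih y' hy'mem (by omega)
      rcases cs.length_mul_simple (u * y') j with hgood | hbad
      · rw [hylen', hyy', ← mul_assoc, hgood, hih, hy'len]; omega
      · exfalso
        obtain ⟨ωu, hωured, hωu⟩ := cs.exists_reduced_word' u
        have hωulen : ωu.length = ℓ u := by rw [hωu]; exact hωured.symm
        have hbig : ℓ (π (ωu ++ χ)) = ℓ u + ℓ y' := by
          rw [wordProd_append, ← hωu, ← hy']; exact hih
        have hbigred : cs.IsReduced (ωu ++ χ) := by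
          show ℓ (π (ωu ++ χ)) = (ωu ++ χ).length
          rw [hbig, List.length_append]
          omega
        have hlt : ℓ (π (ωu ++ χ) * s j) < ℓ (π (ωu ++ χ)) := by
          rw [wordProd_append, ← hωu, ← hy']
          omega
        obtain ⟨k, hk, hkeq⟩ := right_exchange cs hbigred hlt
        rw [wordProd_append, ← hωu, ← hy'] at hkeq
        rcases Nat.lt_or_ge k ωu.length with hcase | hcase
        · rw [List.eraseIdx_append_of_lt_length hcase, wordProd_append] at hkeq
          have hz : u * (y' * s j * y'⁻¹) = π (ωu.eraseIdx k) := by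
            rw [← mul_assoc, ← mul_assoc, hkeq]
            simp [mul_assoc, hy']
          have hzmem : y' * s j * y'⁻¹ ∈ Subgroup.closure (cs.simple '' X) := by
            refine mul_mem (mul_mem hy'mem (Subgroup.subset_closure ?_)) (inv_mem hy'mem)
            exact ⟨j, hψX j (by rw [List.concat_eq_append]; simp), rfl⟩
          have h1 := hmin _ hzmem
          rw [hz] at h1
          have h2 : ℓ (π (ωu.eraseIdx k)) ≤ (ωu.eraseIdx k).length :=
            cs.length_wordProd_le _
          have h3 : (ωu.eraseIdx k).length + 1 = ωu.length :=
            List.length_eraseIdx_add_one hcase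
          omega
        · rw [List.eraseIdx_append_of_length_le hcase, wordProd_append, ← hωu] at hkeq
          rw [mul_assoc] at hkeq
          have hz : y' * s j = π (χ.eraseIdx (k - ωu.length)) :=
            mul_left_cancel hkeq
          have h2 : ℓ (y' * s j) ≤ (χ.eraseIdx (k - ωu.length)).length := by
            rw [hz]; exact cs.length_wordProd_le _
          have h4 : k - ωu.length < χ.length := by
            rw [List.length_append] at hk; omega
          have h5 : (χ.eraseIdx (k - ωu.length)).length + 1 = χ.length :=
            List.length_eraseIdx_add_one h4
          rw [← hyy'] at h2
          omega
  intro y hy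
  exact H (ℓ y) y hy le_rfl

/-- Lengths add on the left. -/
theorem length_add_left (X : Set B) (u : W)
    (hmin : ∀ x ∈ Subgroup.closure (cs.simple '' X), ℓ u ≤ ℓ (x * u)) :
    ∀ x ∈ Subgroup.closure (cs.simple '' X), ℓ (x * u) = ℓ x + ℓ u := by
  intro x hx
  have h1 : ∀ y ∈ Subgroup.closure (cs.simple '' X), ℓ u⁻¹ ≤ ℓ (u⁻¹ * y) := by
    intro y hy
    rw [show (u⁻¹ * y : W) = (y⁻¹ * u)⁻¹ by group, cs.length_inv, cs.length_inv]
    exact hmin y⁻¹ (inv_mem hy)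
  have h2 := length_add_right cs X u⁻¹ h1 x⁻¹ (inv_mem hx)
  rw [show (u⁻¹ * x⁻¹ : W) = (x * u)⁻¹ by group, cs.length_inv, cs.length_inv,
    cs.length_inv] at h2
  omega

end Parabolic

section Coset

theorem min_rep_unique (X : Set B) (u₁ u₂ : W)
    (hmin₁ : ∀ y ∈ Subgroup.closure (cs.simple '' X), ℓ u₁ ≤ ℓ (u₁ * y))
    (hmin₂ : ∀ y ∈ Subgroup.closure (cs.simple '' X), ℓ u₂ ≤ ℓ (u₂ * y))
    (hcoset : u₁⁻¹ * u₂ ∈ Subgroup.closure (cs.simple '' X)) : u₁ = u₂ := by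
  have h1 : ℓ (u₁ * (u₁⁻¹ * u₂)) = ℓ u₁ + ℓ (u₁⁻¹ * u₂) :=
    length_add_right cs X u₁ hmin₁ _ hcoset
  have h2 : ℓ (u₂ * (u₂⁻¹ * u₁)) = ℓ u₂ + ℓ (u₂⁻¹ * u₁) := by
    refine length_add_right cs X u₂ hmin₂ _ ?_
    have : (u₂⁻¹ * u₁ : W) = (u₁⁻¹ * u₂)⁻¹ := by group
    rw [this]; exact inv_mem hcoset
  rw [show (u₁ * (u₁⁻¹ * u₂) : W) = u₂ by group] at h1
  rw [show (u₂ * (u₂⁻¹ * u₁) : W) = u₁ by group] at h2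
  have h3 : ℓ (u₁⁻¹ * u₂) = 0 := by omega
  have h4 : u₁⁻¹ * u₂ = 1 := cs.length_eq_zero_iff.mp h3
  have := congrArg (fun z => u₁ * z) h4
  simpa [mul_assoc] using this.symm

theorem nodescent_eq_min (X : Set B) (w u : W)
    (hwmin : ∀ y ∈ Subgroup.closure (cs.simple '' X), ℓ w ≤ ℓ (w * y))
    (hund : ∀ j ∈ X, ℓ u < ℓ (u * s j))
    (hcoset : w⁻¹ * u ∈ Subgroup.closure (cs.simple '' X)) : u = w := by
  set y := w⁻¹ * u with hydef
  have huy : u = w * y := by rw [hydef]; group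
  rcases eq_or_ne y 1 with h1 | h1
  · rw [huy, h1, mul_one]
  · exfalso
    have hy0 : 0 < ℓ y := by
      rcases Nat.eq_zero_or_pos (ℓ y) with h | h
      · exact absurd (cs.length_eq_zero_iff.mp h) h1
      · exact h
    obtain ⟨ψ, hψX, hψred, hψprod⟩ := exists_reduced_word_subset cs X y hcoset
    rcases ψ.eq_nil_or_concat with rfl | ⟨χ, j, rfl⟩
    · rw [wordProd_nil] at hψprod; exact h1 hψprod.symm
    have hχred : cs.IsReduced χ := by
      have := hψred.take χ.length
      rwa [List.concat_eq_append, List.take_left] at this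
    have hχX : ∀ b ∈ χ, b ∈ X := fun b hb => hψX b (by
      rw [List.concat_eq_append]; exact List.mem_append.mpr (Or.inl hb))
    have hjX : j ∈ X := hψX j (by rw [List.concat_eq_append]; simp)
    have hy'mem : π χ ∈ Subgroup.closure (cs.simple '' X) :=
      wordProd_mem_closure cs X χ hχX
    have hylen : ℓ y = χ.length + 1 := by
      rw [← hψprod, hψred]; simp [List.concat_eq_append]
    have hy'len : ℓ (π χ) = χ.length := hχred
    have hyy' : y = π χ * s j := by rw [← hψprod, wordProd_concat]
    have husj : u * s j = w * π χ := by
      rw [huy, hyy', mul_assoc, mul_assoc]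
      simp
    have hlen1 : ℓ (u * s j) = ℓ w + χ.length := by
      rw [husj, length_add_right cs X w hwmin _ hy'mem, hy'len]
    have hlen2 : ℓ u = ℓ w + χ.length + 1 := by
      rw [huy, length_add_right cs X w hwmin y hcoset, hylen]
      omega
    have := hund j hjX
    omega

theorem kilmoyer_subset (I J : Set B) (w : W)
    (hw : ∀ x ∈ Subgroup.closure (cs.simple '' I),
      ∀ y ∈ Subgroup.closure (cs.simple '' J), ℓ w ≤ ℓ (x * w * y)) :
    ∀ v ∈ Subgroup.closure (cs.simple '' I),
      w⁻¹ * v * w ∈ Subgroup.closure (cs.simple '' J) →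
      v ∈ Subgroup.closure {x | x ∈ cs.simple '' I ∧ w⁻¹ * x * w ∈ cs.simple '' J} := by
  have hwL : ∀ x ∈ Subgroup.closure (cs.simple '' I), ℓ w ≤ ℓ (x * w) := by
    intro x hx
    simpa using hw x hx 1 (one_mem _)
  have hwR : ∀ y ∈ Subgroup.closure (cs.simple '' J), ℓ w ≤ ℓ (w * y) := by
    intro y hy
    simpa using hw 1 (one_mem _) y hy
  have H : ∀ n, ∀ v ∈ Subgroup.closure (cs.simple '' I),
      w⁻¹ * v * w ∈ Subgroup.closure (cs.simple '' J) → ℓ v ≤ n →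
      v ∈ Subgroup.closure {x | x ∈ cs.simple '' I ∧ w⁻¹ * x * w ∈ cs.simple '' J} := by
    intro n
    induction n with
    | zero =>
      intro v _ _ hv0
      rw [cs.length_eq_zero_iff.mp (by omega : ℓ v = 0)]
      exact one_mem _
    | succ n ih =>
      intro v hvI hvJ hvlen
      rcases eq_or_ne v 1 with rfl | hv1
      · exact one_mem _
      obtain ⟨ψ, hψI, hψred, hψprod⟩ := exists_reduced_word_subset cs I v hvI
      rcases ψ with _ | ⟨i₀, χ⟩
      · rw [wordProd_nil] at hψprod; exact absurd hψprod.symm hv1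
      have hχred : cs.IsReduced χ := hψred.drop 1
      have hχI : ∀ b ∈ χ, b ∈ I := fun b hb => hψI b (by simp [hb])
      have hi₀I : i₀ ∈ I := hψI i₀ (by simp)
      set v₂ := π χ with hv₂def
      have hv₂I : v₂ ∈ Subgroup.closure (cs.simple '' I) :=
        wordProd_mem_closure cs I χ hχI
      have hvlen' : ℓ v = χ.length + 1 := by
        rw [← hψprod, hψred]; simp
      have hv₂len : ℓ v₂ = χ.length := hχred
      have hvv₂ : v = s i₀ * v₂ := by rw [← hψprod, wordProd_cons]
      have hsv : s i₀ * v = v₂ := by rw [hvv₂, ← mul_assoc]; simp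
      set y := w⁻¹ * v * w with hydef
      have hwy : w * y = v * w := by rw [hydef]; group
      have hvw : ℓ (v * w) = ℓ v + ℓ w := length_add_left cs I w hwL v hvI
      have hy2 : ℓ (w * y) = ℓ w + ℓ y := length_add_right cs J w hwR y hvJ
      have hylen : ℓ y = ℓ v := by rw [hwy] at hy2; omega
      obtain ⟨ωw, hωwred, hωw⟩ := cs.exists_reduced_word' w
      have hωwlen : ωw.length = ℓ w := by rw [hωw]; exact hωwred.symm
      obtain ⟨ψy, hψyJ, hψyred, hψyprod⟩ := exists_reduced_word_subset cs J y hvJ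
      have hψylen : ψy.length = ℓ y := by rw [← hψyprod]; exact hψyred.symm
      have hbigprod : π (ωw ++ ψy) = v * w := by
        rw [wordProd_append, ← hωw, hψyprod, hwy]
      have hbigred : cs.IsReduced (ωw ++ ψy) := by
        show ℓ (π (ωw ++ ψy)) = (ωw ++ ψy).length
        rw [hbigprod, hvw, List.length_append]
        omega
      have hlt : ℓ (s i₀ * π (ωw ++ ψy)) < ℓ (π (ωw ++ ψy)) := by
        rw [hbigprod, ← mul_assoc, hsv, length_add_left cs I w hwL v₂ hv₂I]
        omega
      obtain ⟨k, hk, hkeq⟩ := left_exchange cs hbigred hlt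
      rw [hbigprod, ← hwy] at hkeq
      rcases Nat.lt_or_ge k ωw.length with hcase | hcase
      · exfalso
        rw [List.eraseIdx_append_of_lt_length hcase, wordProd_append, hψyprod,
          ← mul_assoc] at hkeq
        have h1 : s i₀ * w = π (ωw.eraseIdx k) := by
          rcases eq_or_ne y 1 with hy1 | hy1
          · rw [hy1, cs.length_one] at hylen
            exact absurd (cs.length_eq_zero_iff.mp hylen.symm) hv1
          · exact mul_right_cancel hkeq
        have h2 : ℓ (s i₀ * w) ≤ (ωw.eraseIdx k).length := by
          rw [h1]; exact cs.length_wordProd_le _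
        have h3 : (ωw.eraseIdx k).length + 1 = ωw.length :=
          List.length_eraseIdx_add_one hcase
        have h4 := hwL (s i₀) (Subgroup.subset_closure ⟨i₀, hi₀I, rfl⟩)
        omega
      · rw [List.eraseIdx_append_of_length_le hcase, wordProd_append, ← hωw] at hkeq
        set t := w⁻¹ * s i₀ * w with htdef
        have hwt : w * t = s i₀ * w := by rw [htdef]; group
        have htJ : t ∈ Subgroup.closure (cs.simple '' J) := by
          have h1 : t = π (ψy.eraseIdx (k - ωw.length)) * y⁻¹ := by
            rw [htdef, eq_mul_inv_iff_mul_eq,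
              show w⁻¹ * cs.simple i₀ * w * y = w⁻¹ * (cs.simple i₀ * (w * y)) by group,
              hkeq]
            group
          rw [h1]
          refine mul_mem (wordProd_mem_closure cs J _ ?_) (inv_mem hvJ)
          intro b hb
          exact hψyJ b (List.eraseIdx_subset hb)
        have hswlen : ℓ (s i₀ * w) = ℓ w + 1 := by
          have hne := cs.length_simple_mul_ne w i₀
          have hle := hwL (s i₀) (Subgroup.subset_closure ⟨i₀, hi₀I, rfl⟩)
          rcases cs.length_simple_mul w i₀ with h | h
          · exact h
          · omega
        have htlen : ℓ t = 1 := by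
          have := length_add_right cs J w hwR t htJ
          rw [hwt, hswlen] at this
          omega
        obtain ⟨φt, hφtJ, hφtred, hφtprod⟩ := exists_reduced_word_subset cs J t htJ
        have hφtlen : φt.length = 1 := by
          rw [← htlen, ← hφtprod]
          exact hφtred.symm
        obtain ⟨b, rfl⟩ := List.length_eq_one_iff.mp hφtlen
        have htb : t = s b := by rw [← hφtprod, wordProd_singleton]
        have hbJ : b ∈ J := hφtJ b (by simp)
        have hs₀K : s i₀ ∈ Subgroup.closure
            {x | x ∈ cs.simple '' I ∧ w⁻¹ * x * w ∈ cs.simple '' J} := by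
          refine Subgroup.subset_closure ⟨⟨i₀, hi₀I, rfl⟩, ?_⟩
          rw [show w⁻¹ * s i₀ * w = t from htdef.symm, htb]
          exact ⟨b, hbJ, rfl⟩
        have hv₂J : w⁻¹ * v₂ * w ∈ Subgroup.closure (cs.simple '' J) := by
          have : w⁻¹ * v₂ * w = t * y := by
            rw [htdef, hydef, ← hsv]
            group
          rw [this]
          exact mul_mem htJ hvJ
        have hv₂K := ih v₂ hv₂I hv₂J (by omega)
        rw [hvv₂]
        exact mul_mem hs₀K hv₂K
  intro v hvI hvJ
  exact H (ℓ v) v hvI hvJ le_rfl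

theorem kilmoyer (I J : Set B) (w : W)
    (hw : ∀ x ∈ Subgroup.closure (cs.simple '' I),
      ∀ y ∈ Subgroup.closure (cs.simple '' J), ℓ w ≤ ℓ (x * w * y)) :
    (Subgroup.closure {x | x ∈ cs.simple '' I ∧ w⁻¹ * x * w ∈ cs.simple '' J} : Set W)
      = {v | v ∈ Subgroup.closure (cs.simple '' I)
          ∧ w⁻¹ * v * w ∈ Subgroup.closure (cs.simple '' J)} := by
  ext v
  constructor
  · intro hv
    induction hv using Subgroup.closure_induction with
    | mem x hx =>
      obtain ⟨hxI, hxJ⟩ := hx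
      exact ⟨Subgroup.subset_closure hxI, Subgroup.subset_closure hxJ⟩
    | one => exact ⟨one_mem _, by simpa using one_mem _⟩
    | mul x z _ _ ihx ihz =>
      refine ⟨mul_mem ihx.1 ihz.1, ?_⟩
      have : w⁻¹ * (x * z) * w = (w⁻¹ * x * w) * (w⁻¹ * z * w) := by group
      rw [this]
      exact mul_mem ihx.2 ihz.2
    | inv x _ ihx =>
      refine ⟨inv_mem ihx.1, ?_⟩
      have : w⁻¹ * x⁻¹ * w = (w⁻¹ * x * w)⁻¹ := by group
      rw [this]
      exact inv_mem ihx.2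
  · rintro ⟨h1, h2⟩
    exact kilmoyer_subset cs I J w hw v h1 h2

end Coset

section Counting

/-- Counting a disjoint union of finite sets indexed by a finset. -/
theorem card_biUnion_finset {α β : Type*} (F : Finset α) (P : α → Set β)
    (hP : ∀ e ∈ F, (P e).Finite)
    (hdisj : ∀ e₁ ∈ F, ∀ e₂ ∈ F, e₁ ≠ e₂ → Disjoint (P e₁) (P e₂)) :
    (⋃ e ∈ F, P e).Finite ∧ Nat.card (⋃ e ∈ F, P e) = ∑ e ∈ F, Nat.card (P e) := by
  classical
  induction F using Finset.induction_on with
  | empty => simp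
  | @insert a F ha ih =>
    have hPa : (P a).Finite := hP a (Finset.mem_insert_self a F)
    have hPF : ∀ e ∈ F, (P e).Finite := fun e he => hP e (Finset.mem_insert_of_mem he)
    have hdF : ∀ e₁ ∈ F, ∀ e₂ ∈ F, e₁ ≠ e₂ → Disjoint (P e₁) (P e₂) :=
      fun e₁ h1 e₂ h2 h12 => hdisj e₁ (Finset.mem_insert_of_mem h1) e₂
        (Finset.mem_insert_of_mem h2) h12
    obtain ⟨ihfin, ihcard⟩ := ih hPF hdF
    have hU : (⋃ e ∈ (insert a F : Finset α), P e) = P a ∪ ⋃ e ∈ F, P e := by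
      simp [Set.biUnion_insert]
    have hdisj2 : Disjoint (P a) (⋃ e ∈ F, P e) := by
      rw [Set.disjoint_iUnion_right]
      intro e
      rw [Set.disjoint_iUnion_right]
      intro he
      exact hdisj a (Finset.mem_insert_self a F) e (Finset.mem_insert_of_mem he)
        (fun hae => ha (hae ▸ he))
    have hfin : (⋃ e ∈ (insert a F : Finset α), P e).Finite := by
      rw [hU]; exact hPa.union ihfin
    refine ⟨hfin, ?_⟩
    rw [hU, Nat.card_coe_set_eq, Set.ncard_union_eq hdisj2 hPa ihfin,
      Finset.sum_insert ha, ← ihcard, ← Nat.card_coe_set_eq, ← Nat.card_coe_set_eq]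


end Counting

section Building

variable {C : Type*} (δ : C → C → W)

theorem delta_refl (hWD1 : ∀ c d : C, δ c d = 1 ↔ c = d) (c : C) : δ c c = 1 :=
  (hWD1 c c).mpr rfl

/-- Product formula along a geodesic: if lengths add, Weyl distances multiply. -/
theorem delta_mul
    (hWD1 : ∀ c d : C, δ c d = 1 ↔ c = d)
    (hinv : ∀ c d : C, δ d c = (δ c d)⁻¹)
    (hWD2' : ∀ (c d e : C) (i : B), δ d e = cs.simple i →
      cs.length (δ c d * cs.simple i) = cs.length (δ c d) + 1 →
      δ c e = δ c d * cs.simple i)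
    (hWD3 : ∀ (c d : C) (i : B), ∃ e : C, δ d e = cs.simple i ∧
      δ c e = δ c d * cs.simple i)
    (x y z : C) (h : ℓ (δ x y * δ y z) = ℓ (δ x y) + ℓ (δ y z)) :
    δ x z = δ x y * δ y z := by
  obtain ⟨ω, hωred, hω⟩ := cs.exists_reduced_word' (δ y z)
  have H : ∀ n (ω : List B), cs.IsReduced ω → ω.length = n → ∀ y z : C, δ y z = π ω →
      ℓ (δ x y * π ω) = ℓ (δ x y) + ω.length → δ x z = δ x y * π ω := by
    intro n
    induction n with
    | zero =>
      intro ω _ hlen y z hδ _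
      rw [List.length_eq_zero_iff.mp hlen] at hδ ⊢
      rw [wordProd_nil] at hδ ⊢
      rw [mul_one, (hWD1 y z).mp hδ]
    | succ n ih =>
      intro ω hred hlen y z hδ hadd
      rcases ω.eq_nil_or_concat with rfl | ⟨χ, j, rfl⟩
      · simp at hlen
      have hχred : cs.IsReduced χ := by
        have := hred.take χ.length
        rwa [List.concat_eq_append, List.take_left] at this
      have hχlen : χ.length = n := by
        rw [List.concat_eq_append, List.length_append] at hlen
        simpa using hlen
      obtain ⟨e, he1, he2⟩ := hWD3 y z j
      have hye : δ y e = π χ := by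
        rw [he2, hδ, wordProd_concat]; simp
      have hez : δ e z = s j := by
        rw [hinv z e, he1, inv_simple]
      have hu : ℓ (π χ) = n := by rw [hχred, hχlen]
      have hconcat : δ x y * π (χ.concat j) = (δ x y * π χ) * s j := by
        rw [wordProd_concat, mul_assoc]
      have hlen1 : ℓ (δ x y * π (χ.concat j)) = ℓ (δ x y) + (n + 1) := by
        rw [hadd, hlen]
      have hupper : ℓ (δ x y * π χ) ≤ ℓ (δ x y) + n := by
        have := cs.length_mul_le (δ x y) (π χ)
        omega
      have hadd' : ℓ (δ x y * π χ) = ℓ (δ x y) + n := by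
        rcases cs.length_mul_simple (δ x y * π χ) j with h3 | h3 <;>
          rw [hconcat] at hlen1 <;> omega
      have hxe : δ x e = δ x y * π χ := ih χ hχred hχlen y e hye (by rw [hadd']; omega)
      have h5 : ℓ (δ x e * s j) = ℓ (δ x e) + 1 := by
        rw [hxe, ← hconcat, hlen1, hadd']; omega
      rw [hWD2' x e z j hez h5, hxe, wordProd_concat, mul_assoc]
  have hℓ : ℓ (δ y z) = ω.length := by rw [hω]; exact hωred
  have := H ω.length ω hωred rfl y z hω (by rw [← hω, h, hℓ])
  rw [this, ← hω]

/-- Moving within a residue multiplies the Weyl distance by an element of the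
parabolic subgroup. -/
theorem delta_residue
    (hWD1 : ∀ c d : C, δ c d = 1 ↔ c = d)
    (hinv : ∀ c d : C, δ d c = (δ c d)⁻¹)
    (hWD2 : ∀ (c d e : C) (i : B), δ d e = cs.simple i →
      δ c e = δ c d * cs.simple i ∨ δ c e = δ c d)
    (hWD3 : ∀ (c d : C) (i : B), ∃ e : C, δ d e = cs.simple i ∧
      δ c e = δ c d * cs.simple i)
    (X : Set B) (x y z : C) (h : δ y z ∈ Subgroup.closure (cs.simple '' X)) :
    ∃ u ∈ Subgroup.closure (cs.simple '' X), δ x z = δ x y * u := by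
  obtain ⟨ψ, hψX, hψ⟩ := exists_word_subset cs X (δ y z) h
  have H : ∀ n (ψ : List B), ψ.length = n → (∀ b ∈ ψ, b ∈ X) → ∀ z : C, δ y z = π ψ →
      ∃ u ∈ Subgroup.closure (cs.simple '' X), δ x z = δ x y * u := by
    intro n
    induction n with
    | zero =>
      intro ψ hlen _ z hδ
      rw [List.length_eq_zero_iff.mp hlen, wordProd_nil] at hδ
      have hyz := (hWD1 y z).mp hδ
      exact ⟨1, one_mem _, by rw [mul_one, hyz]⟩
    | succ n ih =>
      intro ψ hlen hX z hδ
      rcases ψ.eq_nil_or_concat with rfl | ⟨χ, j, rfl⟩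
      · simp at hlen
      have hχlen : χ.length = n := by
        rw [List.concat_eq_append, List.length_append] at hlen
        simpa using hlen
      have hχX : ∀ b ∈ χ, b ∈ X := fun b hb => hX b (by
        rw [List.concat_eq_append]; exact List.mem_append.mpr (Or.inl hb))
      have hjX : j ∈ X := hX j (by rw [List.concat_eq_append]; simp)
      obtain ⟨e, he1, he2⟩ := hWD3 y z j
      have hye : δ y e = π χ := by
        rw [he2, hδ, wordProd_concat]; simp
      have hez : δ e z = s j := by rw [hinv z e, he1, inv_simple]
      obtain ⟨u₁, hu₁, hxe⟩ := ih χ hχlen hχX e hye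
      have hsj : (s j : W) ∈ Subgroup.closure (cs.simple '' X) :=
        Subgroup.subset_closure ⟨j, hjX, rfl⟩
      rcases hWD2 x e z j hez with h2 | h2
      · exact ⟨u₁ * s j, mul_mem hu₁ hsj, by rw [h2, hxe, mul_assoc]⟩
      · exact ⟨u₁, hu₁, by rw [h2, hxe]⟩
  exact H ψ.length ψ rfl hψX z hψ.symm

theorem residue_eq
    (hWD1 : ∀ c d : C, δ c d = 1 ↔ c = d)
    (hinv : ∀ c d : C, δ d c = (δ c d)⁻¹)
    (hWD2 : ∀ (c d e : C) (i : B), δ d e = cs.simple i →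
      δ c e = δ c d * cs.simple i ∨ δ c e = δ c d)
    (hWD3 : ∀ (c d : C) (i : B), ∃ e : C, δ d e = cs.simple i ∧
      δ c e = δ c d * cs.simple i)
    (X : Set B) (b b' : C) (h : δ b b' ∈ Subgroup.closure (cs.simple '' X)) :
    {d : C | δ b d ∈ Subgroup.closure (cs.simple '' X)}
      = {d : C | δ b' d ∈ Subgroup.closure (cs.simple '' X)} := by
  ext d
  simp only [Set.mem_setOf_eq]
  constructor
  · intro hd
    obtain ⟨u, hu, he⟩ := delta_residue cs δ hWD1 hinv hWD2 hWD3 X b' b d hd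
    rw [he]
    exact mul_mem ((hinv b b') ▸ inv_mem h) hu
  · intro hd
    obtain ⟨u, hu, he⟩ := delta_residue cs δ hWD1 hinv hWD2 hWD3 X b b' d hd
    rw [he]
    exact mul_mem h hu

/-- The cardinality of a sphere of radius `v`. -/
theorem sphere_card
    (hWD1 : ∀ c d : C, δ c d = 1 ↔ c = d)
    (hinv : ∀ c d : C, δ d c = (δ c d)⁻¹)
    (hWD2 : ∀ (c d e : C) (i : B), δ d e = cs.simple i →
      δ c e = δ c d * cs.simple i ∨ δ c e = δ c d)
    (hWD2' : ∀ (c d e : C) (i : B), δ d e = cs.simple i →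
      cs.length (δ c d * cs.simple i) = cs.length (δ c d) + 1 →
      δ c e = δ c d * cs.simple i)
    (hWD3 : ∀ (c d : C) (i : B), ∃ e : C, δ d e = cs.simple i ∧
      δ c e = δ c d * cs.simple i)
    (q : B → ℕ)
    (hfin : ∀ (c : C) (i : B), {d : C | δ c d = cs.simple i}.Finite)
    (hreg : ∀ (c : C) (i : B), Nat.card {d : C | δ c d = cs.simple i} = q i)
    (Q : W → ℕ) (hQ : ∀ ω : List B, cs.IsReduced ω → Q (cs.wordProd ω) = (ω.map q).prod)
    (v : W) (c : C) :
    {d : C | δ c d = v}.Finite ∧ Nat.card {d : C | δ c d = v} = Q v := by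
  classical
  obtain ⟨ω, hωred, hω⟩ := cs.exists_reduced_word' v
  rw [hω]
  clear hω v
  have H : ∀ n (ω : List B), cs.IsReduced ω → ω.length = n → ∀ c : C,
      {d : C | δ c d = π ω}.Finite ∧ Nat.card {d : C | δ c d = π ω} = Q (π ω) := by
    intro n
    induction n with
    | zero =>
      intro ω _ hlen c
      rw [List.length_eq_zero_iff.mp hlen]
      have hset : {d : C | δ c d = π []} = {c} := by
        ext d
        rw [wordProd_nil]
        simp only [Set.mem_setOf_eq, Set.mem_singleton_iff]
        rw [hWD1 c d]
        exact eq_comm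
      rw [hset]
      refine ⟨Set.finite_singleton c, ?_⟩
      rw [Nat.card_coe_set_eq, Set.ncard_singleton]
      rw [hQ [] (isReduced_nil cs)]
      simp
    | succ n ih =>
      intro ω hred hlen c
      rcases ω.eq_nil_or_concat with rfl | ⟨χ, j, rfl⟩
      · simp at hlen
      have hχred : cs.IsReduced χ := by
        have := hred.take χ.length
        rwa [List.concat_eq_append, List.take_left] at this
      have hχlen : χ.length = n := by
        rw [List.concat_eq_append, List.length_append] at hlen
        simpa using hlen
      obtain ⟨hEfin, hEcard⟩ := ih χ hχred hχlen c
      have hu : ℓ (π χ) = n := by rw [hχred, hχlen]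
      have husj : ℓ (π χ * s j) = n + 1 := by
        have h1 : π (χ.concat j) = π χ * s j := wordProd_concat cs j χ
        rw [← h1]
        rw [hred, hlen]
      have hSU : {d : C | δ c d = π (χ.concat j)}
          = ⋃ e ∈ hEfin.toFinset, {d : C | δ e d = s j} := by
        ext d
        simp only [Set.mem_setOf_eq, Set.mem_iUnion, Set.Finite.mem_toFinset,
          exists_prop]
        constructor
        · intro hd
          obtain ⟨e, he1, he2⟩ := hWD3 c d j
          refine ⟨e, ?_, by rw [hinv d e, he1, inv_simple]⟩
          rw [he2, hd, wordProd_concat]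
          simp
        · rintro ⟨e, he1, he2⟩
          have := hWD2' c e d j he2 (by rw [he1, husj, hu])
          rw [this, he1, wordProd_concat]
      have hdisj : ∀ e₁ ∈ hEfin.toFinset, ∀ e₂ ∈ hEfin.toFinset, e₁ ≠ e₂ →
          Disjoint {d : C | δ e₁ d = s j} {d : C | δ e₂ d = s j} := by
        intro e₁ he₁ e₂ he₂ hne
        rw [Set.Finite.mem_toFinset] at he₁ he₂
        rw [Set.disjoint_left]
        intro d hd₁ hd₂
        simp only [Set.mem_setOf_eq] at hd₁ hd₂
        have hde₂ : δ d e₂ = s j := by rw [hinv e₂ d, hd₂, inv_simple]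
        rcases hWD2 e₁ d e₂ j hde₂ with h2 | h2
        · rw [hd₁] at h2
          simp only [simple_mul_simple_self] at h2
          exact hne ((hWD1 e₁ e₂).mp h2)
        · rw [hd₁] at h2
          have := hWD2' c e₁ e₂ j h2 (by rw [he₁, husj, hu])
          rw [he₂, he₁] at this
          have h5 : (π χ) * 1 = (π χ) * s j := by rw [mul_one]; exact this
          have h3 : (1 : W) = s j := mul_left_cancel h5
          have h4 := cs.length_simple j
          rw [← h3] at h4
          simp at h4
      obtain ⟨hfinU, hcardU⟩ := card_biUnion_finset hEfin.toFinset
        (fun e => {d : C | δ e d = s j})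
        (fun e _ => hfin e j) hdisj
      rw [hSU]
      refine ⟨hfinU, ?_⟩
      rw [hcardU]
      have hsum : ∑ e ∈ hEfin.toFinset, Nat.card {d : C | δ e d = s j}
          = ∑ e ∈ hEfin.toFinset, q j :=
        Finset.sum_congr rfl (fun e _ => hreg e j)
      rw [hsum, Finset.sum_const, smul_eq_mul]
      have hEc : hEfin.toFinset.card = Q (π χ) := by
        rw [← hEcard, Nat.card_coe_set_eq, Set.ncard_eq_toFinset_card _ hEfin]
      rw [hEc, hQ (χ.concat j) hred, List.concat_eq_append, List.map_append,
        List.prod_append, hQ χ hχred]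
      simp
  exact H ω.length ω hωred rfl c

/-- Cardinality of a union of spheres over a finite set of radii. -/
theorem union_spheres_card
    (hWD1 : ∀ c d : C, δ c d = 1 ↔ c = d)
    (hinv : ∀ c d : C, δ d c = (δ c d)⁻¹)
    (hWD2 : ∀ (c d e : C) (i : B), δ d e = cs.simple i →
      δ c e = δ c d * cs.simple i ∨ δ c e = δ c d)
    (hWD2' : ∀ (c d e : C) (i : B), δ d e = cs.simple i →
      cs.length (δ c d * cs.simple i) = cs.length (δ c d) + 1 →
      δ c e = δ c d * cs.simple i)
    (hWD3 : ∀ (c d : C) (i : B), ∃ e : C, δ d e = cs.simple i ∧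
      δ c e = δ c d * cs.simple i)
    (q : B → ℕ)
    (hfin : ∀ (c : C) (i : B), {d : C | δ c d = cs.simple i}.Finite)
    (hreg : ∀ (c : C) (i : B), Nat.card {d : C | δ c d = cs.simple i} = q i)
    (Q : W → ℕ) (hQ : ∀ ω : List B, cs.IsReduced ω → Q (cs.wordProd ω) = (ω.map q).prod)
    (V : Set W) (hV : V.Finite) (c : C) :
    {d : C | δ c d ∈ V}.Finite ∧ Nat.card {d : C | δ c d ∈ V} = ∑ᶠ v ∈ V, Q v := by
  classical
  have hU : {d : C | δ c d ∈ V} = ⋃ v ∈ hV.toFinset, {d : C | δ c d = v} := by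
    ext d
    simp [Set.mem_iUnion, Set.Finite.mem_toFinset]
  have hdisj : ∀ v₁ ∈ hV.toFinset, ∀ v₂ ∈ hV.toFinset, v₁ ≠ v₂ →
      Disjoint {d : C | δ c d = v₁} {d : C | δ c d = v₂} := by
    intro v₁ _ v₂ _ hne
    rw [Set.disjoint_left]
    intro d h1 h2
    simp only [Set.mem_setOf_eq] at h1 h2
    exact hne (h1 ▸ h2 ▸ rfl)
  obtain ⟨hfinU, hcardU⟩ := card_biUnion_finset hV.toFinset
    (fun v => {d : C | δ c d = v})
    (fun v _ => (sphere_card cs δ hWD1 hinv hWD2 hWD2' hWD3 q hfin hreg Q hQ v c).1)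
    hdisj
  rw [hU]
  refine ⟨hfinU, ?_⟩
  rw [hcardU]
  rw [finsum_mem_eq_finite_toFinset_sum _ hV]
  exact Finset.sum_congr rfl
    (fun v _ => (sphere_card cs δ hWD1 hinv hWD2 hWD2' hWD3 q hfin hreg Q hQ v c).2)

/-- Existence of a chamber of a residue whose distance to `x` has no descents in `X`. -/
theorem gate_exists
    (hWD1 : ∀ c d : C, δ c d = 1 ↔ c = d)
    (hinv : ∀ c d : C, δ d c = (δ c d)⁻¹)
    (hWD2 : ∀ (c d e : C) (i : B), δ d e = cs.simple i →
      δ c e = δ c d * cs.simple i ∨ δ c e = δ c d)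
    (hWD3 : ∀ (c d : C) (i : B), ∃ e : C, δ d e = cs.simple i ∧
      δ c e = δ c d * cs.simple i)
    (X : Set B) (x b : C) :
    ∃ d : C, δ b d ∈ Subgroup.closure (cs.simple '' X) ∧
      ∀ j ∈ X, ℓ (δ x d) < ℓ (δ x d * s j) := by
  classical
  have hbb : δ b b ∈ Subgroup.closure (cs.simple '' X) := by
    rw [delta_refl δ hWD1 b]; exact one_mem _
  have hex : ∃ n, ∃ d : C, δ b d ∈ Subgroup.closure (cs.simple '' X) ∧ ℓ (δ x d) = n :=
    ⟨ℓ (δ x b), b, hbb, rfl⟩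
  obtain ⟨d, hdmem, hdlen⟩ := Nat.find_spec hex
  refine ⟨d, hdmem, ?_⟩
  intro j hj
  rcases cs.length_mul_simple (δ x d) j with h | h
  · omega
  · exfalso
    obtain ⟨e, he1, he2⟩ := hWD3 x d j
    have hbe : δ b e ∈ Subgroup.closure (cs.simple '' X) := by
      obtain ⟨u, hu, hval⟩ := delta_residue cs δ hWD1 hinv hWD2 hWD3 X b d e
        (by rw [he1]; exact Subgroup.subset_closure ⟨j, hj, rfl⟩)
      rw [hval]; exact mul_mem hdmem hu
    have hlt : ℓ (δ x e) < Nat.find hex := by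
      rw [he2]; omega
    exact Nat.find_min hex hlt ⟨e, hbe, rfl⟩

/-- Uniqueness of the chamber of a residue at minimal distance. -/
theorem gate_unique
    (hWD1 : ∀ c d : C, δ c d = 1 ↔ c = d)
    (hinv : ∀ c d : C, δ d c = (δ c d)⁻¹)
    (hWD2 : ∀ (c d e : C) (i : B), δ d e = cs.simple i →
      δ c e = δ c d * cs.simple i ∨ δ c e = δ c d)
    (hWD2' : ∀ (c d e : C) (i : B), δ d e = cs.simple i →
      cs.length (δ c d * cs.simple i) = cs.length (δ c d) + 1 →
      δ c e = δ c d * cs.simple i)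
    (hWD3 : ∀ (c d : C) (i : B), ∃ e : C, δ d e = cs.simple i ∧
      δ c e = δ c d * cs.simple i)
    (X : Set B) (w : W)
    (hwmin : ∀ y ∈ Subgroup.closure (cs.simple '' X), ℓ w ≤ ℓ (w * y))
    (x b d₁ d₂ : C)
    (h1m : δ b d₁ ∈ Subgroup.closure (cs.simple '' X))
    (h2m : δ b d₂ ∈ Subgroup.closure (cs.simple '' X))
    (h1 : δ x d₁ = w) (h2 : δ x d₂ = w) : d₁ = d₂ := by
  have h12 : δ d₁ d₂ ∈ Subgroup.closure (cs.simple '' X) := by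
    have hd1b : δ d₁ b ∈ Subgroup.closure (cs.simple '' X) := by
      rw [hinv b d₁]; exact inv_mem h1m
    obtain ⟨u, hu, hval⟩ := delta_residue cs δ hWD1 hinv hWD2 hWD3 X d₁ b d₂ h2m
    rw [hval]
    exact mul_mem hd1b hu
  have hadd : ℓ (δ x d₁ * δ d₁ d₂) = ℓ (δ x d₁) + ℓ (δ d₁ d₂) := by
    rw [h1, length_add_right cs X w hwmin _ h12]
  have := delta_mul cs δ hWD1 hinv hWD2' hWD3 x d₁ d₂ hadd
  rw [h1] at this
  rw [h2] at this
  have h5 : w * 1 = w * δ d₁ d₂ := by rw [mul_one]; exact this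
  have hone : δ d₁ d₂ = 1 := (mul_left_cancel h5).symm
  exact (hWD1 d₁ d₂).mp hone

end Building

end St13

open CoxeterSystem

/-- Theorem 2.1 of the paper. Let `X` be a regular locally finite
building of type `(W,S)`, `I` spherical, `J ⊆ S`, `A` a simplex of cotype `I` (realised as
the `I`-residue `{d : δ(a,d) ∈ W_I}` of a chamber `a`), and `w` an `(I,J)`-reduced element.
Then the number of cotype-`J` simplices `B` (i.e. `J`-residues) with `δ(A,B) = w` equals
`N(I) · q_w / N(I ∩ wJw⁻¹)` (stated multiplied out), where `N(K) = Σ_{v ∈ W_K} q_v`. -/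
theorem statement13 {B W : Type*} [Group W] {M : CoxeterMatrix B} (cs : CoxeterSystem M W)
    (C : Type*) (δ : C → C → W)
    -- building axioms (WD1)-(WD3)
    (hWD1 : ∀ c d : C, δ c d = 1 ↔ c = d)
    (hinv : ∀ c d : C, δ d c = (δ c d)⁻¹)
    (hWD2 : ∀ (c d e : C) (i : B), δ d e = cs.simple i →
      δ c e = δ c d * cs.simple i ∨ δ c e = δ c d)
    (hWD2' : ∀ (c d e : C) (i : B), δ d e = cs.simple i →
      cs.length (δ c d * cs.simple i) = cs.length (δ c d) + 1 →
      δ c e = δ c d * cs.simple i)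
    (hWD3 : ∀ (c d : C) (i : B), ∃ e : C, δ d e = cs.simple i ∧
      δ c e = δ c d * cs.simple i)
    -- regularity and local finiteness
    (q : B → ℕ)
    (hfin : ∀ (c : C) (i : B), {d : C | δ c d = cs.simple i}.Finite)
    (hreg : ∀ (c : C) (i : B), Nat.card {d : C | δ c d = cs.simple i} = q i)
    -- `q_w`, the product of parameters along a reduced word
    (Q : W → ℕ) (hQ : ∀ ω : List B, cs.IsReduced ω → Q (cs.wordProd ω) = (ω.map q).prod)
    (I J : Set B) (w : W)
    (WI WJ WK : Subgroup W)
    (hWI : WI = Subgroup.closure (cs.simple '' I))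
    (hWJ : WJ = Subgroup.closure (cs.simple '' J))
    -- `WK` is the standard parabolic on `I ∩ w J w⁻¹ = {s ∈ I : w⁻¹ s w ∈ J}`
    (hWK : WK = Subgroup.closure
      {s | s ∈ cs.simple '' I ∧ w⁻¹ * s * w ∈ cs.simple '' J})
    -- `I` is spherical
    (hIfin : (WI : Set W).Finite)
    -- `w` is `(I,J)`-reduced
    (hw : ∀ x ∈ WI, ∀ y ∈ WJ, cs.length w ≤ cs.length (x * w * y))
    -- a chamber `a`, and `A` the cotype-`I` simplex (the `I`-residue of `a`)
    (a : C) (A : Set C) (hA : A = {d : C | δ a d ∈ WI}) :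
    -- the generalised sphere `F(A, J, w)` of `J`-residues at Weyl distance `w` from `A`
    Nat.card {R : Set C | (∃ b : C, R = {d : C | δ b d ∈ WJ}) ∧
        ∃ x ∈ A, ∃ y ∈ R, δ x y = w} *
      (∑ᶠ v ∈ (WK : Set W), Q v) =
    (∑ᶠ v ∈ (WI : Set W), Q v) * Q w := by
  classical
  subst hWI hWJ hWK hA
  -- minimality properties of w
  have hwL : ∀ x ∈ Subgroup.closure (cs.simple '' I),
      cs.length w ≤ cs.length (x * w) := by
    intro x hx; simpa using hw x hx 1 (one_mem _)
  have hwR : ∀ y ∈ Subgroup.closure (cs.simple '' J),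
      cs.length w ≤ cs.length (w * y) := by
    intro y hy; simpa using hw 1 (one_mem _) y hy
  have hKil := St13.kilmoyer cs I J w hw
  have hKsub : (Subgroup.closure
        {x | x ∈ cs.simple '' I ∧ w⁻¹ * x * w ∈ cs.simple '' J} : Set W)
      ⊆ (Subgroup.closure (cs.simple '' I) : Set W) := by
    intro v hv
    rw [hKil] at hv
    exact hv.1
  have hKfin : (Subgroup.closure
      {x | x ∈ cs.simple '' I ∧ w⁻¹ * x * w ∈ cs.simple '' J} : Set W).Finite :=
    hIfin.subset hKsub
  -- sphere counting
  have hsph : ∀ (v : W) (c : C),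
      {d : C | δ c d = v}.Finite ∧ Nat.card {d : C | δ c d = v} = Q v :=
    fun v c => St13.sphere_card cs δ hWD1 hinv hWD2 hWD2' hWD3 q hfin hreg Q hQ v c
  have husc : ∀ (V : Set W), V.Finite → ∀ c : C,
      {d : C | δ c d ∈ V}.Finite ∧ Nat.card {d : C | δ c d ∈ V} = ∑ᶠ v ∈ V, Q v :=
    fun V hV c => St13.union_spheres_card cs δ hWD1 hinv hWD2 hWD2' hWD3 q hfin hreg Q hQ V hV c
  obtain ⟨hAfin, hAcard⟩ := husc _ hIfin a
  -- the set of pairs (x, d) with x ∈ A and δ x d = w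
  set P : Set (C × C) :=
    {p : C × C | δ a p.1 ∈ Subgroup.closure (cs.simple '' I) ∧ δ p.1 p.2 = w}
    with hPdef
  -- counting P by fibering over first coordinates
  have hPU : P = ⋃ x ∈ hAfin.toFinset, (fun d => (x, d)) '' {d : C | δ x d = w} := by
    ext ⟨x, d⟩
    simp only [hPdef, Set.mem_setOf_eq, Set.mem_iUnion, Set.Finite.mem_toFinset,
      Set.mem_image, exists_prop]
    constructor
    · rintro ⟨h1, h2⟩
      exact ⟨x, h1, d, h2, rfl⟩
    · rintro ⟨x', hx', d', hd', heq⟩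
      rw [Prod.mk.injEq] at heq
      obtain ⟨rfl, rfl⟩ := heq
      exact ⟨hx', hd'⟩
  have hPxfin : ∀ x : C, ((fun d => (x, d)) '' {d : C | δ x d = w}).Finite :=
    fun x => ((hsph w x).1).image _
  have hPxcard : ∀ x : C,
      Nat.card ((fun d => (x, d)) '' {d : C | δ x d = w} : Set (C × C)) = Q w := by
    intro x
    rw [Nat.card_coe_set_eq,
      Set.ncard_image_of_injective _ (fun d₁ d₂ h => congrArg Prod.snd h),
      ← Nat.card_coe_set_eq]
    exact (hsph w x).2
  have hPdisj : ∀ x₁ ∈ hAfin.toFinset, ∀ x₂ ∈ hAfin.toFinset, x₁ ≠ x₂ →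
      Disjoint ((fun d => (x₁, d)) '' {d : C | δ x₁ d = w})
        ((fun d => (x₂, d)) '' {d : C | δ x₂ d = w}) := by
    intro x₁ _ x₂ _ hne
    rw [Set.disjoint_left]
    rintro p ⟨d₁, _, rfl⟩ ⟨d₂, _, heq⟩
    rw [Prod.mk.injEq] at heq
    exact hne heq.1.symm
  obtain ⟨hPfin', hPcard'⟩ := St13.card_biUnion_finset hAfin.toFinset _
    (fun x _ => hPxfin x) hPdisj
  rw [← hPU] at hPfin' hPcard'
  have hPcard : Nat.card P = (∑ᶠ v ∈ (Subgroup.closure (cs.simple '' I) : Set W), Q v)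
      * Q w := by
    rw [hPcard']
    rw [Finset.sum_congr rfl (fun x _ => hPxcard x), Finset.sum_const, smul_eq_mul]
    congr 1
    rw [← hAcard, Nat.card_coe_set_eq, Set.ncard_eq_toFinset_card _ hAfin]
  -- the generalised sphere as an image of P
  have hresJ : ∀ b y : C, δ b y ∈ Subgroup.closure (cs.simple '' J) →
      {d : C | δ b d ∈ Subgroup.closure (cs.simple '' J)}
        = {d : C | δ y d ∈ Subgroup.closure (cs.simple '' J)} :=
    fun b y h => St13.residue_eq cs δ hWD1 hinv hWD2 hWD3 J b y h
  have hFim : {R : Set C | (∃ b : C, R = {d : C | δ b d ∈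
        Subgroup.closure (cs.simple '' J)}) ∧
        ∃ x ∈ {d : C | δ a d ∈ Subgroup.closure (cs.simple '' I)}, ∃ y ∈ R, δ x y = w}
      = (fun p : C × C => {e : C | δ p.2 e ∈ Subgroup.closure (cs.simple '' J)}) '' P := by
    ext R
    simp only [Set.mem_setOf_eq, Set.mem_image]
    constructor
    · rintro ⟨⟨b, rfl⟩, x, hx, y, hy, hxy⟩
      refine ⟨(x, y), ⟨hx, hxy⟩, ?_⟩
      exact (hresJ b y hy).symm
    · rintro ⟨⟨x, d⟩, ⟨hx, hxd⟩, rfl⟩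
      refine ⟨⟨d, rfl⟩, x, hx, d, ?_, hxd⟩
      simp only [Set.mem_setOf_eq]
      rw [St13.delta_refl δ hWD1 d]
      exact one_mem _
  have hFfin : {R : Set C | (∃ b : C, R = {d : C | δ b d ∈
        Subgroup.closure (cs.simple '' J)}) ∧
        ∃ x ∈ {d : C | δ a d ∈ Subgroup.closure (cs.simple '' I)},
          ∃ y ∈ R, δ x y = w}.Finite := by
    rw [hFim]
    exact hPfin'.image _
  -- partition of P by the J-residue of the second coordinate
  have hPU2 : P = ⋃ R ∈ hFfin.toFinset, {p : C × C | p ∈ P ∧ p.2 ∈ R} := by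
    ext p
    simp only [Set.mem_iUnion, Set.Finite.mem_toFinset, Set.mem_setOf_eq, exists_prop]
    constructor
    · intro hp
      have hp' : δ a p.1 ∈ Subgroup.closure (cs.simple '' I) ∧ δ p.1 p.2 = w := hp
      have hmemF : {e : C | δ p.2 e ∈ Subgroup.closure (cs.simple '' J)} ∈
          {R : Set C | (∃ b : C, R = {d : C | δ b d ∈ Subgroup.closure (cs.simple '' J)}) ∧
            ∃ x ∈ {d : C | δ a d ∈ Subgroup.closure (cs.simple '' I)},
              ∃ y ∈ R, δ x y = w} := by
        refine ⟨⟨p.2, rfl⟩, p.1, hp'.1, p.2, ?_, hp'.2⟩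
        simp only [Set.mem_setOf_eq]
        rw [St13.delta_refl δ hWD1 p.2]
        exact one_mem _
      refine ⟨{e : C | δ p.2 e ∈ Subgroup.closure (cs.simple '' J)}, hmemF, hp, ?_⟩
      simp only [Set.mem_setOf_eq]
      rw [St13.delta_refl δ hWD1 p.2]
      exact one_mem _
    · rintro ⟨R, _, hp, _⟩
      exact hp
  have hFdisj : ∀ R₁ ∈ hFfin.toFinset, ∀ R₂ ∈ hFfin.toFinset, R₁ ≠ R₂ →
      Disjoint {p : C × C | p ∈ P ∧ p.2 ∈ R₁} {p : C × C | p ∈ P ∧ p.2 ∈ R₂} := by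
    intro R₁ h₁ R₂ h₂ hne
    rw [Set.Finite.mem_toFinset] at h₁ h₂
    obtain ⟨⟨b₁, rfl⟩, _⟩ := h₁
    obtain ⟨⟨b₂, rfl⟩, _⟩ := h₂
    rw [Set.disjoint_left]
    rintro p ⟨_, hp1⟩ ⟨_, hp2⟩
    simp only [Set.mem_setOf_eq] at hp1 hp2
    exact hne ((hresJ b₁ p.2 hp1).trans (hresJ b₂ p.2 hp2).symm)
  obtain ⟨_, hPcard2⟩ := St13.card_biUnion_finset hFfin.toFinset
    (fun R => {p : C × C | p ∈ P ∧ p.2 ∈ R})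
    (fun R _ => hPfin'.subset (fun p hp => hp.1)) hFdisj
  rw [← hPU2] at hPcard2
  -- each fiber has cardinality N(K)
  have hFibcard : ∀ R ∈ hFfin.toFinset,
      Nat.card {p : C × C | p ∈ P ∧ p.2 ∈ R}
        = ∑ᶠ v ∈ (Subgroup.closure
            {x | x ∈ cs.simple '' I ∧ w⁻¹ * x * w ∈ cs.simple '' J} : Set W), Q v := by
    intro R hR
    rw [Set.Finite.mem_toFinset] at hR
    obtain ⟨⟨b, rfl⟩, x₀, hx₀, d₀, hd₀, hδ₀⟩ := hR
    simp only [Set.mem_setOf_eq] at hx₀ hd₀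
    -- re-center the residues
    have hRd₀ := hresJ b d₀ hd₀
    have hAx₀ : {d : C | δ a d ∈ Subgroup.closure (cs.simple '' I)}
        = {d : C | δ x₀ d ∈ Subgroup.closure (cs.simple '' I)} :=
      St13.residue_eq cs δ hWD1 hinv hWD2 hWD3 I a x₀ hx₀
    -- the projection to the first coordinate
    have hproj : (fun p : C × C => p.1) ''
        {p : C × C | p ∈ P ∧ p.2 ∈ {d : C | δ b d ∈ Subgroup.closure (cs.simple '' J)}}
        = {x : C | δ x₀ x ∈ (Subgroup.closure
            {x | x ∈ cs.simple '' I ∧ w⁻¹ * x * w ∈ cs.simple '' J} : Set W)} := by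
      ext x
      constructor
      · rintro ⟨⟨x', d⟩, ⟨hpP, hdR⟩, rfl⟩
        obtain ⟨hx'A, hx'd⟩ : δ a x' ∈ Subgroup.closure (cs.simple '' I) ∧ δ x' d = w := hpP
        have hvI : δ x₀ x' ∈ Subgroup.closure (cs.simple '' I) :=
          (Set.ext_iff.mp hAx₀ x').mp hx'A
        have hlen : cs.length (δ x₀ x' * w)
            = cs.length (δ x₀ x') + cs.length w :=
          St13.length_add_left cs I w hwL _ hvI
        have hδx₀d : δ x₀ d = δ x₀ x' * w := by
          have := St13.delta_mul cs δ hWD1 hinv hWD2' hWD3 x₀ x' d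
            (by rw [hx'd]; exact hlen)
          rw [this, hx'd]
        have hdd₀ : δ d₀ d ∈ Subgroup.closure (cs.simple '' J) :=
          (Set.ext_iff.mp hRd₀ d).mp hdR
        obtain ⟨u, hu, hval⟩ := St13.delta_residue cs δ hWD1 hinv hWD2 hWD3 J x₀ d₀ d hdd₀
        rw [hδ₀] at hval
        have heq2 : δ x₀ x' * w = w * u := by rw [← hδx₀d, hval]
        have hcomm : w⁻¹ * δ x₀ x' * w = u := by
          have h6 : w⁻¹ * (δ x₀ x' * w) = w⁻¹ * (w * u) := congrArg _ heq2
          simpa [← mul_assoc] using h6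
        simp only [Set.mem_setOf_eq]
        rw [hKil]
        exact ⟨hvI, by rw [hcomm]; exact hu⟩
      · intro hx
        have hvmem : δ x₀ x ∈ {v : W | v ∈ Subgroup.closure (cs.simple '' I)
            ∧ w⁻¹ * v * w ∈ Subgroup.closure (cs.simple '' J)} := by
          rw [← hKil]; exact hx
        obtain ⟨hvI, hvJ⟩ := hvmem
        have hxA : δ a x ∈ Subgroup.closure (cs.simple '' I) :=
          (Set.ext_iff.mp hAx₀ x).mpr hvI
        obtain ⟨dstar, hdstar, hnd⟩ :=
          St13.gate_exists cs δ hWD1 hinv hWD2 hWD3 J x d₀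
        have hvinv : δ x x₀ = (δ x₀ x)⁻¹ := hinv x₀ x
        have hlen : cs.length ((δ x₀ x)⁻¹ * w)
            = cs.length ((δ x₀ x)⁻¹) + cs.length w :=
          St13.length_add_left cs I w hwL _ (inv_mem hvI)
        have hxd₀ : δ x d₀ = (δ x₀ x)⁻¹ * w := by
          have := St13.delta_mul cs δ hWD1 hinv hWD2' hWD3 x x₀ d₀
            (by rw [hvinv, hδ₀]; exact hlen)
          rw [this, hvinv, hδ₀]
        obtain ⟨u, hu, hval⟩ := St13.delta_residue cs δ hWD1 hinv hWD2 hWD3 J x d₀ dstar hdstar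
        have hcoset : w⁻¹ * δ x dstar ∈ Subgroup.closure (cs.simple '' J) := by
          rw [hval, hxd₀]
          have h7 : w⁻¹ * ((δ x₀ x)⁻¹ * w * u) = (w⁻¹ * δ x₀ x * w)⁻¹ * u := by group
          rw [h7]
          exact mul_mem (inv_mem hvJ) hu
        have hxdstar : δ x dstar = w :=
          St13.nodescent_eq_min cs J w (δ x dstar) hwR hnd hcoset
        refine ⟨(x, dstar), ⟨?_, ?_⟩, rfl⟩
        · exact ⟨hxA, hxdstar⟩
        · simp only [Set.mem_setOf_eq]
          exact (Set.ext_iff.mp hRd₀ dstar).mpr hdstar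
    have hinj : Set.InjOn (fun p : C × C => p.1)
        {p : C × C | p ∈ P ∧ p.2 ∈ {d : C | δ b d ∈ Subgroup.closure (cs.simple '' J)}} := by
      rintro ⟨x₁, d₁⟩ ⟨h₁P, h₁R⟩ ⟨x₂, d₂⟩ ⟨h₂P, h₂R⟩ heq
      simp only at heq
      subst heq
      have := St13.gate_unique cs δ hWD1 hinv hWD2 hWD2' hWD3 J w hwR x₁ b d₁ d₂
        h₁R h₂R h₁P.2 h₂P.2
      rw [this]
    have hfibfin : ({p : C × C | p ∈ P ∧ p.2 ∈
        {d : C | δ b d ∈ Subgroup.closure (cs.simple '' J)}} : Set (C × C)).Finite :=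
      hPfin'.subset (fun p hp => hp.1)
    obtain ⟨hTfin, hTcard⟩ := husc _ hKfin x₀
    rw [Nat.card_coe_set_eq, ← Set.ncard_image_of_injOn hinj, hproj,
      ← Nat.card_coe_set_eq, hTcard]
  -- final computation
  rw [hPcard2, Finset.sum_congr rfl hFibcard, Finset.sum_const, smul_eq_mul] at hPcard
  rw [← hPcard]
  congr 1
  rw [Nat.card_coe_set_eq, Set.ncard_eq_toFinset_card _ hFfin]
end

section
/- Let X be a regular locally finite building of type (W,S), let 𝒜 be an apartment, a ∈ 𝒜 a chamber, and ρ = ρ_{𝒜,a} the retraction onto 𝒜 centred at a. If Γ = (c₀, …, c_n) is a gallery in X of type (s₁,…,s_n), then ρ(Γ) is an a-pointed pregallery in 𝒜 of the same type: whenever ρ(c_{j−1}) = ρ(c_j), one has ℓ(δ(a, ρ(c_{j−1})) s_j) < ℓ(δ(a, ρ(c_{j−1}))). -/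
open CoxeterSystem

/-- Lemma 3.3 of the paper. Let `X` be a regular locally finite building
of type `(W,S)`, `𝒜` an apartment (realised as an isometric embedding `ι : W → C` of the
Coxeter complex), `a = ι a₀` a chamber of `𝒜`, and `ρ = ρ_{𝒜,a}` the retraction onto `𝒜`
centred at `a`. If `Γ = (c₀, …, c_n)` is a gallery in `X` of type `(s₁, …, s_n)`, then
`ρ(Γ)` is an `a`-pointed pregallery of the same type: whenever `ρ(c_{j−1}) = ρ(c_j)` one has
`ℓ(δ(a, ρ(c_{j−1})) s_j) < ℓ(δ(a, ρ(c_{j−1})))`. -/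
theorem statement17 {B W : Type*} [Group W] {M : CoxeterMatrix B} (cs : CoxeterSystem M W)
    (C : Type*) (δ : C → C → W)
    -- building axioms (WD1)-(WD2)
    (hWD1 : ∀ c d : C, δ c d = 1 ↔ c = d)
    (hinv : ∀ c d : C, δ d c = (δ c d)⁻¹)
    (hWD2 : ∀ (c d e : C) (i : B), δ d e = cs.simple i →
      δ c e = δ c d * cs.simple i ∨ δ c e = δ c d)
    (hWD2' : ∀ (c d e : C) (i : B), δ d e = cs.simple i →
      cs.length (δ c d * cs.simple i) = cs.length (δ c d) + 1 →
      δ c e = δ c d * cs.simple i)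
    -- an apartment `𝒜`, realised by `ι`
    (ι : W → C) (hι : ∀ u v : W, δ (ι u) (ι v) = u⁻¹ * v)
    -- a chamber `a` of `𝒜`
    (a₀ : W) (a : C) (ha : a = ι a₀)
    -- the retraction `ρ = ρ_{𝒜,a}` of `X` onto `𝒜` centred at `a`
    (ρ : C → C)
    (hρA : ∀ c : C, ∃ u : W, ρ c = ι u)
    (hρfix : ∀ u : W, ρ (ι u) = ι u)
    (hρ1 : ∀ c : C, δ a (ρ c) = δ a c)
    (hρgal : ∀ (c d : C) (i : B), δ c d = cs.simple i →
      ρ c = ρ d ∨ δ (ρ c) (ρ d) = cs.simple i)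
    -- a gallery `Γ` of type `(s₁, …, s_n)` in `X`
    (n : ℕ) (ω : Fin n → B) (Γ : Fin (n + 1) → C)
    (hΓ : ∀ j : Fin n, δ (Γ j.castSucc) (Γ j.succ) = cs.simple (ω j)) :
    ∀ j : Fin n, ρ (Γ j.castSucc) = ρ (Γ j.succ) →
      cs.length (δ a (ρ (Γ j.castSucc)) * cs.simple (ω j)) <
        cs.length (δ a (ρ (Γ j.castSucc))) := by
  intro j h
  rcases cs.length_mul_simple (δ a (ρ (Γ j.castSucc))) (ω j) with hlen | hlen
  · exfalso
    have hlen' : cs.length (δ a (Γ j.castSucc) * cs.simple (ω j)) =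
        cs.length (δ a (Γ j.castSucc)) + 1 := by rw [← hρ1]; exact hlen
    have h2 := hWD2' a (Γ j.castSucc) (Γ j.succ) (ω j) (hΓ j) hlen'
    have : δ a (ρ (Γ j.castSucc)) * cs.simple (ω j) = δ a (ρ (Γ j.castSucc)) := by
      rw [hρ1, ← h2, ← hρ1, ← h, hρ1]
    have := congrArg cs.length this
    rw [hlen] at this
    omega
  · omega
end

section
/- Let X be a thick regular building of type (W,S) with parameters (q_s), a, b chambers in a common apartment 𝒜, and ρ = ρ_{𝒜,a}. For a type v = (s₁,…,s_n) and an a-pointed pregallery γ ∈ 𝒜 of type v starting at b, the number of galleries Γ in X of type v starting at b with ρ(Γ) = γ equals q(γ) = Π_s q_s^{α_s(γ)}(q_s−1)^{σ_s(γ)}; moreover every a-pointed pregallery of type v starting at b arises as ρ(Γ) for some such gallery Γ. -/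
open scoped Classical

open CoxeterSystem

/-- Proposition 3.5 of the paper. Let `X` be a thick regular building of
type `(W,S)` with parameters `(q_s)`, `a, b` chambers in a common apartment `𝒜` (realised by
an isometric embedding `ι : W → C`) and `ρ = ρ_{𝒜,a}` the retraction onto `𝒜` centred at
`a`. For a type `v = (s₁, …, s_n)` and an `a`-pointed pregallery `γ` in `𝒜` of type `v`
starting at `b`, the number of galleries `Γ` in `X` of type `v` starting at `b` with
`ρ(Γ) = γ` equals `q(γ) = Π_j (ascend: q_{s_j}; stutter: q_{s_j} − 1; descend: 1)`;
moreover every such `γ` arises as `ρ(Γ)` for some gallery `Γ`. -/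
theorem statement18 {B W : Type*} [Group W] {M : CoxeterMatrix B} (cs : CoxeterSystem M W)
    (C : Type*) (δ : C → C → W)
    -- building axioms (WD1)-(WD3)
    (hWD1 : ∀ c d : C, δ c d = 1 ↔ c = d)
    (hinv : ∀ c d : C, δ d c = (δ c d)⁻¹)
    (hWD2 : ∀ (c d e : C) (i : B), δ d e = cs.simple i →
      δ c e = δ c d * cs.simple i ∨ δ c e = δ c d)
    (hWD2' : ∀ (c d e : C) (i : B), δ d e = cs.simple i →
      cs.length (δ c d * cs.simple i) = cs.length (δ c d) + 1 →
      δ c e = δ c d * cs.simple i)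
    (hWD3 : ∀ (c d : C) (i : B), ∃ e : C, δ d e = cs.simple i ∧
      δ c e = δ c d * cs.simple i)
    -- thickness, regularity and local finiteness
    (q : B → ℕ) (hthick : ∀ i : B, 2 ≤ q i)
    (hfin : ∀ (c : C) (i : B), {d : C | δ c d = cs.simple i}.Finite)
    (hreg : ∀ (c : C) (i : B), Nat.card {d : C | δ c d = cs.simple i} = q i)
    -- an apartment `𝒜` realised by `ι`, containing the chambers `a` and `b`
    (ι : W → C) (hι : ∀ u v : W, δ (ι u) (ι v) = u⁻¹ * v)
    (a b : C) (ha : a = ι 1) (b₀ : W) (hb : b = ι b₀)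
    -- the retraction `ρ = ρ_{𝒜,a}`
    (ρ : C → C)
    (hρA : ∀ c : C, ∃ u : W, ρ c = ι u)
    (hρfix : ∀ u : W, ρ (ι u) = ι u)
    (hρ1 : ∀ c : C, δ a (ρ c) = δ a c)
    (hρgal : ∀ (c d : C) (i : B), δ c d = cs.simple i →
      ρ c = ρ d ∨ δ (ρ c) (ρ d) = cs.simple i)
    -- the type `v`
    (n : ℕ) (ω : Fin n → B) :
    -- for every `a`-pointed pregallery `γ` in `𝒜` of type `ω` starting at `b` …
    ∀ γ : Fin (n + 1) → C,
      γ 0 = b →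
      (∀ j : Fin (n + 1), γ j ∈ Set.range ι) →
      (∀ j : Fin n, γ j.succ = γ j.castSucc ∨
        δ (γ j.castSucc) (γ j.succ) = cs.simple (ω j)) →
      (∀ j : Fin n, γ j.succ = γ j.castSucc →
        cs.length (δ a (γ j.castSucc) * cs.simple (ω j)) <
          cs.length (δ a (γ j.castSucc))) →
      -- … the fibre of `ρ` over `γ` has cardinality `q(γ)` and is nonempty
      (Nat.card {Γ : Fin (n + 1) → C | Γ 0 = b ∧
          (∀ j : Fin n, δ (Γ j.castSucc) (Γ j.succ) = cs.simple (ω j)) ∧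
          ∀ j : Fin (n + 1), ρ (Γ j) = γ j} =
        ∏ j : Fin n,
          (if γ j.succ = γ j.castSucc then q (ω j) - 1
           else if cs.length (δ a (γ j.succ)) = cs.length (δ a (γ j.castSucc)) + 1
             then q (ω j) else 1)) ∧
      ∃ Γ : Fin (n + 1) → C, Γ 0 = b ∧
        (∀ j : Fin n, δ (Γ j.castSucc) (Γ j.succ) = cs.simple (ω j)) ∧
        ∀ j : Fin (n + 1), ρ (Γ j) = γ j := by
  -- basic derived facts
  have ιinj : Function.Injective ι := by
    intro u v h
    have h1 : δ (ι u) (ι v) = 1 := (hWD1 _ _).mpr h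
    rw [hι] at h1
    exact inv_mul_eq_one.mp h1
  have hδa : ∀ u : W, δ a (ι u) = u := by
    intro u; rw [ha, hι]; simp
  have hρeq : ∀ c : C, ρ c = ι (δ a c) := by
    intro c
    obtain ⟨u, hu⟩ := hρA c
    have h2 : δ a c = u := by rw [← hρ1 c, hu, hδa]
    rw [hu, h2]
  have hρiff : ∀ (c : C) (u : W), ρ c = ι u ↔ δ a c = u := by
    intro c u
    constructor
    · intro h
      have := (hρeq c).symm.trans h
      exact ιinj this
    · intro h; rw [hρeq c, h]
  have hsne : ∀ i : B, cs.simple i ≠ 1 := by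
    intro i h
    have h1 := cs.length_simple i
    rw [h, cs.length_one] at h1
    exact absurd h1 (by norm_num)
  -- local counting lemma
  have count : ∀ (c : C) (i : B) (u : W),
      ((u = δ a c ∧ cs.length (δ a c * cs.simple i) < cs.length (δ a c)) ∨
        u = δ a c * cs.simple i) →
      {d : C | δ c d = cs.simple i ∧ δ a d = u}.Finite ∧
      Nat.card {d : C | δ c d = cs.simple i ∧ δ a d = u} =
        (if u = δ a c then q i - 1
         else if cs.length u = cs.length (δ a c) + 1 then q i else 1) ∧
      {d : C | δ c d = cs.simple i ∧ δ a d = u}.Nonempty := by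
    intro c i u hu
    set w := δ a c with hw
    have hfinsub : {d : C | δ c d = cs.simple i ∧ δ a d = u}.Finite :=
      (hfin c i).subset (fun d hd => hd.1)
    have wsne : w * cs.simple i ≠ w := by
      intro h
      exact hsne i (mul_left_cancel (h.trans (mul_one w).symm))
    have dichotomy : ∀ d : C, δ c d = cs.simple i →
        δ a d = w * cs.simple i ∨ δ a d = w := fun d hd => hWD2 a c d i hd
    obtain ⟨e, he1, he2⟩ := hWD3 a c i
    have huniq : cs.length (w * cs.simple i) + 1 = cs.length w →
        ∀ d : C, δ c d = cs.simple i → δ a d = w * cs.simple i → d = e := by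
      intro hlt d hd1 hd2
      have hdc : δ d c = cs.simple i := by rw [hinv, hd1, cs.inv_simple]
      have hwss : w * cs.simple i * cs.simple i = w := by
        rw [mul_assoc, cs.simple_mul_simple_self, mul_one]
      rcases hWD2 d c e i he1 with h | h
      · -- δ d e = δ d c * s = s * s = 1, hence d = e
        rw [hdc, cs.simple_mul_simple_self] at h
        exact (hWD1 d e).mp h
      · -- δ d e = δ d c = s i : impossible
        exfalso
        rw [hdc] at h
        have hlen : cs.length (δ a d * cs.simple i) = cs.length (δ a d) + 1 := by
          rw [hd2, hwss, ← hlt]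
        have := hWD2' a d e i h hlen
        rw [hd2, hwss] at this
        rw [he2] at this
        exact wsne this
    rcases hu with ⟨hu1, hu2⟩ | hu1
    · -- stutter case : u = w, descent
      have hlt : cs.length (w * cs.simple i) + 1 = cs.length w := by
        rcases cs.length_mul_simple w i with h | h
        · omega
        · exact h
      have hset : {d : C | δ c d = cs.simple i ∧ δ a d = u} =
          {d : C | δ c d = cs.simple i} \ {e} := by
        ext d
        simp only [Set.mem_setOf_eq, Set.mem_diff, Set.mem_singleton_iff]
        constructor
        · rintro ⟨h1, h2⟩
          refine ⟨h1, ?_⟩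
          rintro rfl
          rw [he2, hu1] at h2
          exact wsne h2
        · rintro ⟨h1, h2⟩
          refine ⟨h1, ?_⟩
          rcases dichotomy d h1 with h | h
          · exact absurd (huniq hlt d h1 h) h2
          · rw [hu1]; exact h
      have hcard : Nat.card {d : C | δ c d = cs.simple i ∧ δ a d = u} = q i - 1 := by
        rw [hset, Nat.card_coe_set_eq,
          Set.ncard_diff_singleton_of_mem (show e ∈ {d : C | δ c d = cs.simple i} from he1)]
        rw [← Nat.card_coe_set_eq, hreg c i]
      refine ⟨hfinsub, ?_, ?_⟩
      · rw [hcard, if_pos hu1]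
      · apply Set.nonempty_of_ncard_ne_zero
        rw [← Nat.card_coe_set_eq, hcard]
        have := hthick i
        omega
    · -- non-stutter : u = w * s
      have hune : u ≠ w := by rw [hu1]; exact wsne
      by_cases hasc : cs.length (w * cs.simple i) = cs.length w + 1
      · -- ascent: full panel
        have hset : {d : C | δ c d = cs.simple i ∧ δ a d = u} =
            {d : C | δ c d = cs.simple i} := by
          ext d
          simp only [Set.mem_setOf_eq]
          refine ⟨fun h => h.1, fun h => ⟨h, ?_⟩⟩
          rw [hu1]
          exact hWD2' a c d i h hasc
        have hcard : Nat.card {d : C | δ c d = cs.simple i ∧ δ a d = u} = q i := by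
          rw [hset, hreg]
        refine ⟨hfinsub, ?_, ?_⟩
        · rw [hcard, if_neg hune, if_pos (by rw [hu1]; exact hasc)]
        · apply Set.nonempty_of_ncard_ne_zero
          rw [← Nat.card_coe_set_eq, hcard]
          have := hthick i
          omega
      · -- descent: singleton (the gate)
        have hlt : cs.length (w * cs.simple i) + 1 = cs.length w := by
          rcases cs.length_mul_simple w i with h | h
          · exact absurd h hasc
          · exact h
        have hset : {d : C | δ c d = cs.simple i ∧ δ a d = u} = {e} := by
          ext d
          simp only [Set.mem_setOf_eq, Set.mem_singleton_iff]
          constructor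
          · rintro ⟨h1, h2⟩
            exact huniq hlt d h1 (by rw [← hu1]; exact h2)
          · rintro rfl
            exact ⟨he1, by rw [hu1]; exact he2⟩
        have hcard : Nat.card {d : C | δ c d = cs.simple i ∧ δ a d = u} = 1 := by
          rw [hset]
          simp
        refine ⟨hfinsub, ?_, ⟨e, by rw [hset]; rfl⟩⟩
        rw [hcard, if_neg hune, if_neg (by rw [hu1]; omega)]
  -- main induction
  have key : ∀ (m : ℕ) (ω' : Fin m → B) (γ : Fin (m+1) → C),
      (∀ j : Fin (m+1), γ j ∈ Set.range ι) →
      (∀ j : Fin m, γ j.succ = γ j.castSucc ∨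
        δ (γ j.castSucc) (γ j.succ) = cs.simple (ω' j)) →
      (∀ j : Fin m, γ j.succ = γ j.castSucc →
        cs.length (δ a (γ j.castSucc) * cs.simple (ω' j)) <
          cs.length (δ a (γ j.castSucc))) →
      ∀ c : C, ρ c = γ 0 →
      {Γ : Fin (m+1) → C | Γ 0 = c ∧
        (∀ j : Fin m, δ (Γ j.castSucc) (Γ j.succ) = cs.simple (ω' j)) ∧
        ∀ j : Fin (m+1), ρ (Γ j) = γ j}.Finite ∧
      Nat.card {Γ : Fin (m+1) → C | Γ 0 = c ∧
        (∀ j : Fin m, δ (Γ j.castSucc) (Γ j.succ) = cs.simple (ω' j)) ∧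
        ∀ j : Fin (m+1), ρ (Γ j) = γ j} =
        (∏ j : Fin m, (if γ j.succ = γ j.castSucc then q (ω' j) - 1
          else if cs.length (δ a (γ j.succ)) = cs.length (δ a (γ j.castSucc)) + 1
            then q (ω' j) else 1)) ∧
      {Γ : Fin (m+1) → C | Γ 0 = c ∧
        (∀ j : Fin m, δ (Γ j.castSucc) (Γ j.succ) = cs.simple (ω' j)) ∧
        ∀ j : Fin (m+1), ρ (Γ j) = γ j}.Nonempty := by
    intro m
    induction m with
    | zero =>
      intro ω' γ hA hstep hstut c hc
      have hset : {Γ : Fin 1 → C | Γ 0 = c ∧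
          (∀ j : Fin 0, δ (Γ j.castSucc) (Γ j.succ) = cs.simple (ω' j)) ∧
          ∀ j : Fin 1, ρ (Γ j) = γ j} = {fun _ => c} := by
        ext Γ
        simp only [Set.mem_setOf_eq, Set.mem_singleton_iff]
        constructor
        · rintro ⟨h0, -, -⟩
          funext j
          rw [Subsingleton.elim j 0, h0]
        · rintro rfl
          refine ⟨rfl, fun j => j.elim0, fun j => ?_⟩
          rw [Subsingleton.elim j (0 : Fin 1)]
          exact hc
      rw [hset]
      refine ⟨Set.finite_singleton _, ?_, ⟨_, rfl⟩⟩
      rw [Nat.card_coe_set_eq, Set.ncard_singleton]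
      simp
    | succ m IH =>
      intro ω' γ hA hstep hstut c hc
      have hgι : ∀ j, γ j = ι (δ a (γ j)) := by
        intro j
        obtain ⟨u, hu⟩ := hA j
        rw [← hu, hδa]
      have hcac : δ a c = δ a (γ 0) := by rw [← hρ1 c, hc]
      have hρd : ∀ d : C, ρ d = γ 1 ↔ δ a d = δ a (γ 1) := by
        intro d
        have := hρiff d (δ a (γ 1))
        rw [← hgι 1] at this
        exact this
      have hcase : (δ a (γ 1) = δ a c ∧
          cs.length (δ a c * cs.simple (ω' 0)) < cs.length (δ a c)) ∨
          δ a (γ 1) = δ a c * cs.simple (ω' 0) := by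
        have hstep0 := hstep 0
        rw [Fin.succ_zero_eq_one, Fin.castSucc_zero] at hstep0
        rcases hstep0 with h | h
        · left
          constructor
          · rw [h, ← hcac]
          · have := hstut 0 (by rw [Fin.succ_zero_eq_one, Fin.castSucc_zero]; exact h)
            rw [Fin.castSucc_zero, ← hcac] at this
            exact this
        · right
          rw [hgι 0, hgι 1, hι] at h
          rw [← hcac] at h
          rw [← h]
          exact (mul_inv_cancel_left _ _).symm
      obtain ⟨hDfin, hDcard, hDne⟩ := count c (ω' 0) (δ a (γ 1)) hcase
      set D : Set C := {d : C | δ c d = cs.simple (ω' 0) ∧ δ a d = δ a (γ 1)} with hD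
      set γt : Fin (m+1) → C := fun j => γ j.succ with hγt
      set ωt : Fin m → B := fun j => ω' j.succ with hωt
      have hAt : ∀ j : Fin (m+1), γt j ∈ Set.range ι := fun j => hA j.succ
      have hstept : ∀ j : Fin m, γt j.succ = γt j.castSucc ∨
          δ (γt j.castSucc) (γt j.succ) = cs.simple (ωt j) := by
        intro j
        show γ (j.succ).succ = γ (j.castSucc).succ ∨
          δ (γ (j.castSucc).succ) (γ (j.succ).succ) = cs.simple (ω' j.succ)
        rw [Fin.succ_castSucc]
        exact hstep j.succ
      have hstutt : ∀ j : Fin m, γt j.succ = γt j.castSucc →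
          cs.length (δ a (γt j.castSucc) * cs.simple (ωt j)) <
            cs.length (δ a (γt j.castSucc)) := by
        intro j h
        show cs.length (δ a (γ (j.castSucc).succ) * cs.simple (ω' j.succ)) <
          cs.length (δ a (γ (j.castSucc).succ))
        rw [Fin.succ_castSucc]
        refine hstut j.succ ?_
        rw [← Fin.succ_castSucc]
        exact h
      have hγt0 : γt 0 = γ 1 := by
        show γ (0 : Fin (m+1)).succ = γ 1
        rw [Fin.succ_zero_eq_one]
      have hIH : ∀ d ∈ D, _ := fun d hd =>
        IH ωt γt hAt hstept hstutt d (by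
          rw [hγt0]
          exact (hρd d).mpr hd.2)
      set F : C → Set (Fin (m+1) → C) := fun d => {Γ' : Fin (m+1) → C | Γ' 0 = d ∧
        (∀ j : Fin m, δ (Γ' j.castSucc) (Γ' j.succ) = cs.simple (ωt j)) ∧
        ∀ j : Fin (m+1), ρ (Γ' j) = γt j} with hF
      set S : Set (Fin (m+2) → C) := {Γ : Fin (m+2) → C | Γ 0 = c ∧
        (∀ j : Fin (m+1), δ (Γ j.castSucc) (Γ j.succ) = cs.simple (ω' j)) ∧
        ∀ j : Fin (m+2), ρ (Γ j) = γ j} with hS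
      have memS_cons : ∀ d ∈ D, ∀ Γ' ∈ F d, Fin.cons c Γ' ∈ S := by
        intro d hd Γ' hΓ'
        obtain ⟨h0, hst, hρs⟩ := hΓ'
        refine ⟨by simp, ?_, ?_⟩
        · intro j
          induction j using Fin.cases with
          | zero =>
            simp only [Fin.castSucc_zero, Fin.cons_zero, Fin.cons_succ]
            rw [h0]
            exact hd.1
          | succ k =>
            rw [← Fin.succ_castSucc]
            simp only [Fin.cons_succ]
            exact hst k
        · intro j
          induction j using Fin.cases with
          | zero =>
            simp only [Fin.cons_zero]
            exact hc
          | succ k =>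
            simp only [Fin.cons_succ]
            exact hρs k
      have memD : ∀ Γ ∈ S, Γ 1 ∈ D := by
        intro Γ hΓ
        obtain ⟨h0, hst, hρs⟩ := hΓ
        constructor
        · have := hst 0
          rw [Fin.succ_zero_eq_one, Fin.castSucc_zero, h0] at this
          exact this
        · exact (hρd (Γ 1)).mp (hρs 1)
      have memF : ∀ Γ ∈ S, (fun j => Γ j.succ) ∈ F (Γ 1) := by
        intro Γ hΓ
        obtain ⟨h0, hst, hρs⟩ := hΓ
        refine ⟨?_, ?_, ?_⟩
        · show Γ (0 : Fin (m+1)).succ = Γ 1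
          rw [Fin.succ_zero_eq_one]
        · intro j
          show δ (Γ (j.castSucc).succ) (Γ (j.succ).succ) = cs.simple (ω' j.succ)
          rw [Fin.succ_castSucc]
          exact hst j.succ
        · intro j
          exact hρs j.succ
      let E : ↥S ≃ (d : ↥D) × ↥(F ↑d) :=
        { toFun := fun Γ => ⟨⟨Γ.1 1, memD Γ.1 Γ.2⟩, ⟨fun j => Γ.1 j.succ, memF Γ.1 Γ.2⟩⟩
          invFun := fun p => ⟨Fin.cons c p.2.1, memS_cons p.1.1 p.1.2 p.2.1 p.2.2⟩
          left_inv := by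
            rintro ⟨Γ, hΓ⟩
            apply Subtype.ext
            show Fin.cons c (fun j => Γ j.succ) = Γ
            funext j
            induction j using Fin.cases with
            | zero =>
              rw [Fin.cons_zero, hΓ.1]
            | succ k =>
              rw [Fin.cons_succ]
          right_inv := by
            rintro ⟨⟨d, hd⟩, ⟨Γ', hΓ'⟩⟩
            have h1 : (Fin.cons c Γ' : Fin (m+2) → C) 1 = d := by
              rw [← Fin.succ_zero_eq_one, Fin.cons_succ]
              exact hΓ'.1
            subst h1
            have h2 : (fun j : Fin (m+1) => (Fin.cons c Γ' : Fin (m+2) → C) j.succ) = Γ' := by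
              funext j
              rw [Fin.cons_succ]
            exact Sigma.ext rfl (heq_of_eq (Subtype.ext h2)) }
      haveI hDfin' : Finite ↥D := hDfin
      haveI hFfin' : ∀ d : ↥D, Finite ↥(F ↑d) := fun d => (hIH ↑d d.2).1
      haveI : Finite ↥S := Finite.of_equiv _ E.symm
      have hSfin : S.Finite := Set.toFinite S
      haveI fD : Fintype ↥D := Set.Finite.fintype hDfin
      haveI fF : ∀ d : ↥D, Fintype ↥(F ↑d) := fun d => Set.Finite.fintype (hIH ↑d d.2).1
      have hcards : Nat.card ↥S = (Nat.card ↥D) *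
          ∏ j : Fin m, (if γt j.succ = γt j.castSucc then q (ωt j) - 1
            else if cs.length (δ a (γt j.succ)) = cs.length (δ a (γt j.castSucc)) + 1
              then q (ωt j) else 1) := by
        rw [Nat.card_congr E, Nat.card_eq_fintype_card, Fintype.card_sigma]
        have hK : ∀ d : ↥D, Fintype.card ↥(F ↑d) =
            ∏ j : Fin m, (if γt j.succ = γt j.castSucc then q (ωt j) - 1
              else if cs.length (δ a (γt j.succ)) = cs.length (δ a (γt j.castSucc)) + 1
                then q (ωt j) else 1) := fun d => by
          rw [← Nat.card_eq_fintype_card]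
          exact (hIH ↑d d.2).2.1
        rw [Finset.sum_congr rfl (fun d _ => hK d), Finset.sum_const, Finset.card_univ,
          smul_eq_mul, ← Nat.card_eq_fintype_card]
      have hfac : Nat.card ↥D = (if γ 1 = γ 0 then q (ω' 0) - 1
          else if cs.length (δ a (γ 1)) = cs.length (δ a (γ 0)) + 1
            then q (ω' 0) else 1) := by
        rw [hDcard]
        have hiff : (δ a (γ 1) = δ a (γ 0)) = (γ 1 = γ 0) := by
          apply propext
          constructor
          · intro h
            rw [hgι 1, hgι 0, h]
          · intro h
            rw [h]
        simp only [hcac, hiff]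
      have hprod : (∏ j : Fin (m+1), (if γ j.succ = γ j.castSucc then q (ω' j) - 1
          else if cs.length (δ a (γ j.succ)) = cs.length (δ a (γ j.castSucc)) + 1
            then q (ω' j) else 1)) =
          (if γ 1 = γ 0 then q (ω' 0) - 1
            else if cs.length (δ a (γ 1)) = cs.length (δ a (γ 0)) + 1
              then q (ω' 0) else 1) *
          ∏ j : Fin m, (if γt j.succ = γt j.castSucc then q (ωt j) - 1
            else if cs.length (δ a (γt j.succ)) = cs.length (δ a (γt j.castSucc)) + 1
              then q (ωt j) else 1) := by
        rw [Fin.prod_univ_succ]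
        congr 1
      refine ⟨hSfin, ?_, ?_⟩
      · rw [hcards, hfac, hprod]
      · obtain ⟨d, hd⟩ := hDne
        obtain ⟨Γ', hΓ'⟩ := (hIH d hd).2.2
        exact ⟨Fin.cons c Γ', memS_cons d hd Γ' hΓ'⟩
  intro γ hγ0 hA hstep hstut
  have hρb : ρ b = γ 0 := by rw [hγ0, hb, hρfix]
  obtain ⟨hfin', hcard, hne⟩ := key n ω γ hA hstep hstut b hρb
  exact ⟨hcard, hne⟩
end
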